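/- arXiv:1805.08204 — 11 statements merged into one kernel-verified Lean document; each statement's English description precedes it below -/
import Mathlib

section
/- There exist global functions f, g : ℝ → ℝ such that f ∘ g is not a global function. Concretely, f(x) = |x| and g(x) = max(−1, |x| − 2) are global functions on ℝ, but f ∘ g is not a global function on ℝ. -/
/-- `f` is a global function on `ℝ`: continuous, and every local minimum is global. -/
def GlobalFunctionR (f : ℝ → ℝ) : Prop :=
  Continuous f ∧ ∀ x : ℝ, (∃ ε > 0, ∀ y : ℝ, |x - y| ≤ ε → f x ≤ f y) → ∀ y : ℝ, f x ≤ f y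

/-- `f(x) = |x|` and `g(x) = max (−1) (|x| − 2)` are global functions on `ℝ`,
but `f ∘ g` is not a global function on `ℝ`. -/
theorem stmt_2 :
    GlobalFunctionR (fun x : ℝ => |x|) ∧
    GlobalFunctionR (fun x : ℝ => max (-1) (|x| - 2)) ∧
    ¬ GlobalFunctionR ((fun x : ℝ => |x|) ∘ (fun x : ℝ => max (-1) (|x| - 2))) := by
  refine ⟨⟨continuous_abs, ?_⟩, ⟨continuous_const.max (continuous_abs.sub continuous_const), ?_⟩, ?_⟩
  · rintro x ⟨ε, hε, h⟩ y
    -- show x = 0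
    have hx : x = 0 := by
      by_contra hx
      rcases lt_or_ge ε |x| with hlt | hle
      · rcases lt_or_ge x 0 with hneg | hpos
        · have := h (x + ε) (by rw [abs_of_nonpos (by linarith)]; linarith)
          simp only at this
          rw [abs_of_neg hneg, abs_of_neg (by rw [abs_of_neg hneg] at hlt; linarith)] at this
          linarith
        · have hx0 : 0 < x := lt_of_le_of_ne hpos (Ne.symm hx)
          have := h (x - ε) (by rw [abs_of_nonneg (by linarith)]; linarith)
          simp only at this
          rw [abs_of_pos hx0, abs_of_nonneg (by rw [abs_of_pos hx0] at hlt; linarith)] at this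
          linarith
      · have := h 0 (by simpa using hle)
        simp at this
        exact hx this
    simp [hx]
  · rintro x ⟨ε, hε, h⟩ y
    have hx : |x| ≤ 1 := by
      by_contra hx
      push_neg at hx
      set δ := min ε (|x| - 1) with hδ
      have hδ0 : 0 < δ := lt_min hε (by linarith)
      have hδ1 : δ ≤ |x| - 1 := min_le_right _ _
      have hδε : δ ≤ ε := min_le_left _ _
      rcases lt_or_ge x 0 with hneg | hpos
      · have hxv : |x| = -x := abs_of_neg hneg
        have := h (x + δ) (by
          rw [abs_of_nonpos (by linarith)]
          linarith)
        simp only at this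
        have hy : |x + δ| = -(x + δ) := abs_of_nonpos (by rw [hxv] at hδ1; linarith)
        rw [hxv, hy] at this
        have h1 : max (-1 : ℝ) (-x - 2) = -x - 2 := max_eq_right (by rw [hxv] at hx; linarith)
        have h2 : max (-1 : ℝ) (-(x + δ) - 2) = -(x+δ) - 2 := max_eq_right (by rw [hxv] at hδ1; linarith)
        rw [h1, h2] at this; linarith
      · have hx0 : 0 < x := by have := abs_of_nonneg hpos; linarith
        have hxv : |x| = x := abs_of_nonneg hpos
        have := h (x - δ) (by
          rw [abs_of_nonneg (by linarith)]
          linarith)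
        simp only at this
        have hy : |x - δ| = x - δ := abs_of_nonneg (by rw [hxv] at hδ1; linarith)
        rw [hxv, hy] at this
        have h1 : max (-1 : ℝ) (x - 2) = x - 2 := max_eq_right (by rw [hxv] at hx; linarith)
        have h2 : max (-1 : ℝ) (x - δ - 2) = x - δ - 2 := max_eq_right (by rw [hxv] at hδ1; linarith)
        rw [h1, h2] at this; linarith
    have hxv : max (-1 : ℝ) (|x| - 2) = -1 := max_eq_left (by linarith)
    simp only [hxv]
    exact le_max_left _ _
  · rintro ⟨-, h⟩
    have h0 := h 0 ⟨1, one_pos, by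
      intro y hy
      simp only [Function.comp, zero_sub, abs_neg] at hy ⊢
      have : max (-1 : ℝ) (|y| - 2) = -1 := max_eq_left (by linarith)
      simp [this]⟩ 2
    simp [Function.comp] at h0
    norm_num at h0
end

section
/- Let f : S → ℝ with S ⊆ ℝⁿ. Suppose: (1) X ⊆ S is a global minimum set of f, i.e., inf_X f ≤ inf_{S∖X} f; (2) the restriction of f to X is a global function on X; (3) f has no local minima on S ∖ X. Then f is a global function on S. -/
/-- A point `x ∈ T` is a local minimum of `f` on `T`. -/
def IsLocMinPtOn {n : ℕ} (f : EuclideanSpace ℝ (Fin n) → ℝ) (T : Set (EuclideanSpace ℝ (Fin n)))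
    (x : EuclideanSpace ℝ (Fin n)) : Prop :=
  ∃ ε > 0, ∀ y ∈ T, ‖x - y‖ ≤ ε → f x ≤ f y

/-- `f` is a global function on `T`: continuous, and every local minimum is global. -/
def GlobalFunctionOn {n : ℕ} (f : EuclideanSpace ℝ (Fin n) → ℝ)
    (T : Set (EuclideanSpace ℝ (Fin n))) : Prop :=
  ContinuousOn f T ∧ ∀ x ∈ T, IsLocMinPtOn f T x → ∀ y ∈ T, f x ≤ f y

/-- `X` is a global minimum set of `f` on `S`: `inf_X f ≤ inf_{S \ X} f`. -/
def IsGlobMinSet {n : ℕ} (f : EuclideanSpace ℝ (Fin n) → ℝ)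
    (S X : Set (EuclideanSpace ℝ (Fin n))) : Prop :=
  ∀ y ∈ S \ X, ∀ ε > 0, ∃ x ∈ X, f x ≤ f y + ε

/-- if `X ⊆ S` is a global minimum set of `f`, the restriction of `f` to `X` is a
global function, and `f` has no local minima on `S \ X`, then `f` is a global function on `S`. -/
theorem stmt_3 {n : ℕ} (S X : Set (EuclideanSpace ℝ (Fin n)))
    (f : EuclideanSpace ℝ (Fin n) → ℝ) (hXS : X ⊆ S) (hf : ContinuousOn f S)
    (h1 : IsGlobMinSet f S X)
    (h2 : GlobalFunctionOn f X)
    (h3 : ∀ x ∈ S \ X, ¬ IsLocMinPtOn f S x) :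
    GlobalFunctionOn f S := by
  refine ⟨hf, ?_⟩
  intro x hxS hloc y hyS
  have hxX : x ∈ X := by
    by_contra hxX
    exact h3 x ⟨hxS, hxX⟩ hloc
  -- x is a local min on X, hence global on X
  have hlocX : IsLocMinPtOn f X x := by
    obtain ⟨ε, hε, hmin⟩ := hloc
    exact ⟨ε, hε, fun z hz hd => hmin z (hXS hz) hd⟩
  have hglob : ∀ z ∈ X, f x ≤ f z := h2.2 x hxX hlocX
  by_cases hyX : y ∈ X
  · exact hglob y hyX
  · have : ∀ ε > (0:ℝ), f x ≤ f y + ε := by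
      intro ε hε
      obtain ⟨x', hx'X, hx'⟩ := h1 y ⟨hyS, hyX⟩ ε hε
      exact (hglob x' hx'X).trans hx'
    linarith [le_of_forall_pos_le_add this]
end

section
/- Let f : S → ℝ and suppose (X_α)_{α∈A} is a family of subsets of S, each of which is a global minimum set of f, and f restricted to each X_α is a global function. Then f restricted to the union ⋃_α X_α is a global function. -/
/-- if `f` is a global function on each member of a family `(X_α)` of global
minimum sets of `f` on `S`, then `f` is a global function on `⋃ α, X α`. -/
theorem stmt_4 {n : ℕ} {A : Type*} (S : Set (EuclideanSpace ℝ (Fin n)))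
    (f : EuclideanSpace ℝ (Fin n) → ℝ) (X : A → Set (EuclideanSpace ℝ (Fin n)))
    (hXS : ∀ a, X a ⊆ S) (hf : ContinuousOn f S)
    (hmin : ∀ a, IsGlobMinSet f S (X a))
    (hglob : ∀ a, GlobalFunctionOn f (X a)) :
    GlobalFunctionOn f (⋃ a, X a) := by
  constructor
  · exact hf.mono (Set.iUnion_subset hXS)
  · rintro x hx hloc y hy
    obtain ⟨a, hxa⟩ := Set.mem_iUnion.mp hx
    obtain ⟨b, hyb⟩ := Set.mem_iUnion.mp hy
    -- x is a local min on X a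
    have hloca : IsLocMinPtOn f (X a) x := by
      obtain ⟨ε, hε, hle⟩ := hloc
      exact ⟨ε, hε, fun z hz hzε => hle z (Set.mem_iUnion.mpr ⟨a, hz⟩) hzε⟩
    have hga : ∀ z ∈ X a, f x ≤ f z := (hglob a).2 x hxa hloca
    by_cases hya : y ∈ X a
    · exact hga y hya
    · have hyS : y ∈ S \ X a := ⟨hXS b hyb, hya⟩
      refine le_of_forall_pos_le_add fun ε hε => ?_
      obtain ⟨z, hz, hzle⟩ := hmin a y hyS ε hε
      exact (hga z hz).trans hzle
end

section
/- Let f : S → ℝ be continuous with S ⊆ ℝⁿ. Then every local minimum point of f is a global minimum point if and only if every compact local minimum set of f is a global minimum set. -/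
/-- A nonempty compact `X ⊆ S` is a local minimum set of `f` on `S`. -/
def IsLocMinSet {n : ℕ} (f : EuclideanSpace ℝ (Fin n) → ℝ)
    (S X : Set (EuclideanSpace ℝ (Fin n))) : Prop :=
  X ⊆ S ∧ X.Nonempty ∧ IsCompact X ∧
    ∃ ε > 0, ∀ x ∈ X, ∀ y ∈ S \ X, ‖x - y‖ ≤ ε → f x ≤ f y

/-- for continuous `f` on `S`, every local minimum point is a global minimum
point iff every compact local minimum set is a global minimum set. -/
theorem stmt_5 {n : ℕ} (S : Set (EuclideanSpace ℝ (Fin n)))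
    (f : EuclideanSpace ℝ (Fin n) → ℝ) (hf : ContinuousOn f S) :
    (∀ x ∈ S, (∃ ε > 0, ∀ y ∈ S, ‖x - y‖ ≤ ε → f x ≤ f y) → ∀ y ∈ S, f x ≤ f y) ↔
      (∀ X, IsLocMinSet f S X → IsGlobMinSet f S X) := by
  constructor
  · rintro h X ⟨hXS, hXne, hXc, ε, hε, hloc⟩
    obtain ⟨x₀, hx₀X, hmin⟩ := hXc.exists_isMinOn hXne (hf.mono hXS)
    have hglob : ∀ y ∈ S, f x₀ ≤ f y := by
      refine h x₀ (hXS hx₀X) ⟨ε, hε, fun y hyS hd => ?_⟩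
      by_cases hyX : y ∈ X
      · exact hmin hyX
      · exact hloc x₀ hx₀X y ⟨hyS, hyX⟩ hd
    intro y hy δ hδ
    exact ⟨x₀, hx₀X, (hglob y hy.1).trans (le_add_of_nonneg_right hδ.le)⟩
  · intro h x hxS hlm y hyS
    obtain ⟨ε, hε, hloc⟩ := hlm
    have hX : IsLocMinSet f S {x} := by
      refine ⟨Set.singleton_subset_iff.mpr hxS, ⟨x, rfl⟩, isCompact_singleton,
        ε, hε, fun x' hx' y' hy' hd => ?_⟩
      rw [Set.mem_singleton_iff] at hx'
      subst hx'
      exact hloc y' hy'.1 hd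
    by_cases hyx : y ∈ ({x} : Set (EuclideanSpace ℝ (Fin n)))
    · rw [Set.mem_singleton_iff] at hyx; subst hyx; exact le_refl _
    · refine le_of_forall_pos_le_add fun δ hδ => ?_
      obtain ⟨x', hx', hle⟩ := h _ hX y ⟨hyS, hyx⟩ δ hδ
      rw [Set.mem_singleton_iff] at hx'
      subst hx'
      exact hle
end

section
/- Pointwise convergence does not preserve the global-function property: there exists a sequence of global functions f_k : ℝ → ℝ converging pointwise to a continuous function f that has a local minimum which is not a global minimum. -/
private noncomputable def gfun : ℝ → ℝ := fun x => max (-1) (min 0 (1 - x))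

private lemma gfun_cont : Continuous gfun := by
  unfold gfun; fun_prop

private lemma gfun_anti : ∀ x y : ℝ, x ≤ y → gfun y ≤ gfun x := by
  intro x y h
  unfold gfun
  gcongr

/-- there is a sequence of global functions on `ℝ` converging pointwise to a
continuous function that has a local minimum which is not a global minimum. -/
theorem stmt_8 :
    ∃ (fk : ℕ → ℝ → ℝ) (f : ℝ → ℝ),
      (∀ k, GlobalFunctionR (fk k)) ∧
      (∀ x : ℝ, Filter.Tendsto (fun k => fk k x) Filter.atTop (nhds (f x))) ∧
      Continuous f ∧
      ∃ x : ℝ, (∃ ε > 0, ∀ y : ℝ, |x - y| ≤ ε → f x ≤ f y) ∧ ¬ (∀ y : ℝ, f x ≤ f y) := by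
  refine ⟨fun k x => gfun x - x / (k + 1), gfun, ?_, ?_, gfun_cont, 0, ⟨1/2, by norm_num, ?_⟩, ?_⟩
  · intro k
    constructor
    · have : Continuous fun x : ℝ => gfun x - x / (k + 1) :=
        gfun_cont.sub (continuous_id.div_const _)
      exact this
    · intro x hx y
      exfalso
      obtain ⟨ε, hε, h⟩ := hx
      have h1 := h (x + ε) (by rw [abs_le]; constructor <;> linarith)
      have h2 := gfun_anti x (x + ε) (by linarith)
      have hk : (0:ℝ) < k + 1 := by positivity
      have : x / (k + 1) < (x + ε) / (k + 1) :=
        div_lt_div_of_pos_right (by linarith) hk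
      simp only at h1
      linarith
  · intro x
    have h0 : Filter.Tendsto (fun k : ℕ => x / (k + 1 : ℝ)) Filter.atTop (nhds 0) := by
      have : Filter.Tendsto (fun n : ℕ => 1 / ((n : ℝ) + 1)) Filter.atTop (nhds 0) :=
        tendsto_one_div_add_atTop_nhds_zero_nat
      have := this.const_mul x
      simpa [div_eq_mul_inv, mul_comm] using this
    have := (tendsto_const_nhds (x := gfun x) (f := Filter.atTop (α := ℕ))).sub h0
    simpa using this
  · intro y hy
    rw [abs_le] at hy
    have : gfun y = 0 := by
      unfold gfun
      rw [min_eq_left (by linarith), max_eq_right (by linarith)]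
    rw [this]
    unfold gfun
    norm_num
  · intro h
    have := h 2
    unfold gfun at this
    norm_num at this
end

section
/- Let a < b be reals and f : [a,b] → ℝ be continuous. Then f is strictly quasiconvex (f(λx + (1−λ)y) < max(f(x), f(y)) for all x ≠ y in [a,b] and 0 < λ < 1) if and only if f is a global function on [a,b] and f attains its global minimum at a unique point. -/
/-- for continuous `f` on `[a,b]`, `f` is strictly quasiconvex iff `f` is a
global function on `[a,b]` with a unique global minimizer. -/
theorem stmt_9 (a b : ℝ) (hab : a < b) (f : ℝ → ℝ) (hf : ContinuousOn f (Set.Icc a b)) :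
    (∀ x ∈ Set.Icc a b, ∀ y ∈ Set.Icc a b, x ≠ y → ∀ l : ℝ, 0 < l → l < 1 →
        f (l * x + (1 - l) * y) < max (f x) (f y)) ↔
      ((∀ x ∈ Set.Icc a b,
          (∃ ε > 0, ∀ y ∈ Set.Icc a b, |x - y| ≤ ε → f x ≤ f y) →
          ∀ y ∈ Set.Icc a b, f x ≤ f y) ∧
        (∃! x : ℝ, x ∈ Set.Icc a b ∧ ∀ y ∈ Set.Icc a b, f x ≤ f y)) := by
  constructor
  · intro hsq
    constructor
    · -- every local minimum is global
      rintro x hx ⟨ε, hε, hloc⟩ y hy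
      by_contra hlt
      push_neg at hlt
      have hxy : x ≠ y := by rintro rfl; exact absurd hlt (lt_irrefl _)
      have hd0 : 0 < |x - y| := abs_pos.2 (sub_ne_zero.2 hxy)
      set s : ℝ := min (ε / |x - y|) (1/2) with hs
      have hs0 : 0 < s := lt_min (div_pos hε hd0) (by norm_num)
      have hs1 : s < 1 := lt_of_le_of_lt (min_le_right _ _) (by norm_num)
      have hl0 : (0:ℝ) < 1 - s := by linarith
      have hz : (1 - s) * x + (1 - (1 - s)) * y ∈ Set.Icc a b := by
        have := (convex_Icc a b) hx hy hl0.le (by linarith : (0:ℝ) ≤ 1 - (1-s)) (by ring)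
        simpa [smul_eq_mul] using this
      have h1 := hsq x hx y hy hxy (1 - s) hl0 (by linarith)
      have hdist : |x - ((1 - s) * x + (1 - (1 - s)) * y)| ≤ ε := by
        have heq : x - ((1 - s) * x + (1 - (1 - s)) * y) = s * (x - y) := by ring
        rw [heq, abs_mul, abs_of_pos hs0]
        calc s * |x - y| ≤ (ε / |x - y|) * |x - y| := by
              apply mul_le_mul_of_nonneg_right (min_le_left _ _) (abs_nonneg _)
          _ = ε := div_mul_cancel₀ ε hd0.ne'
      have h2 := hloc _ hz hdist
      rw [max_eq_left hlt.le] at h1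
      linarith
    · -- unique global minimizer
      obtain ⟨x₀, hx₀, hmin⟩ :=
        isCompact_Icc.exists_isMinOn (Set.nonempty_Icc.2 hab.le) hf
      refine ⟨x₀, ⟨hx₀, fun y hy => isMinOn_iff.1 hmin y hy⟩, ?_⟩
      rintro w ⟨hw, hwmin⟩
      by_contra hne
      have h1 := hsq w hw x₀ hx₀ hne (1/2) (by norm_num) (by norm_num)
      have hz : (1/2 : ℝ) * w + (1 - 1/2) * x₀ ∈ Set.Icc a b := by
        have := (convex_Icc a b) hw hx₀ (by norm_num : (0:ℝ) ≤ 1/2)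
          (by norm_num : (0:ℝ) ≤ 1 - 1/2) (by norm_num)
        simpa [smul_eq_mul] using this
      have hle : max (f w) (f x₀) ≤ f ((1/2 : ℝ) * w + (1 - 1/2) * x₀) :=
        max_le (hwmin _ hz) (isMinOn_iff.1 hmin _ hz)
      linarith
  · rintro ⟨hG, x₀, ⟨hx₀, hmin⟩, huniq⟩
    -- f is strictly increasing to the right of x₀
    have hR : ∀ u v : ℝ, x₀ ≤ u → u < v → v ≤ b → f u < f v := by
      intro u v hu huv hv
      have hau : a ≤ u := hx₀.1.trans hu
      have hub : u ≤ b := huv.le.trans hv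
      have hsub : Set.Icc u b ⊆ Set.Icc a b := Set.Icc_subset_Icc hau le_rfl
      obtain ⟨q, hq, hqmin⟩ :=
        isCompact_Icc.exists_isMinOn (Set.nonempty_Icc.2 hub) (hf.mono hsub)
      -- any strict-interior minimizer on [u, b] is a local min of f on [a, b]
      have key : ∀ w : ℝ, u < w → w ∈ Set.Icc u b →
          (∀ t ∈ Set.Icc u b, f w ≤ f t) → False := by
        intro w huw hwub hwmin
        have hloc : ∃ ε > 0, ∀ y ∈ Set.Icc a b, |w - y| ≤ ε → f w ≤ f y := by
          refine ⟨w - u, by linarith, fun y hy hdy => ?_⟩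
          have h' := abs_le.1 hdy
          exact hwmin y ⟨by linarith [h'.1], hy.2⟩
        have hglob := hG w (hsub hwub) hloc
        have hwx₀ : w = x₀ := huniq w ⟨hsub hwub, hglob⟩
        linarith [hwx₀ ▸ huw]
      have hqu : q = u := by
        by_contra hne
        exact key q (lt_of_le_of_ne hq.1 (Ne.symm hne)) hq
          (fun t ht => isMinOn_iff.1 hqmin t ht)
      have hmu : ∀ t ∈ Set.Icc u b, f u ≤ f t := fun t ht =>
        hqu ▸ isMinOn_iff.1 hqmin t ht
      by_contra hle
      push_neg at hle
      exact key v huv ⟨huv.le, hv⟩ (fun t ht => hle.trans (hmu t ht))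
    -- f is strictly decreasing to the left of x₀
    have hL : ∀ u v : ℝ, a ≤ u → u < v → v ≤ x₀ → f v < f u := by
      intro u v hu huv hv
      have hvb : v ≤ b := hv.trans hx₀.2
      have hav : a ≤ v := hu.trans huv.le
      have hsub : Set.Icc a v ⊆ Set.Icc a b := Set.Icc_subset_Icc le_rfl hvb
      obtain ⟨q, hq, hqmin⟩ :=
        isCompact_Icc.exists_isMinOn (Set.nonempty_Icc.2 hav) (hf.mono hsub)
      have key : ∀ w : ℝ, w < v → w ∈ Set.Icc a v →
          (∀ t ∈ Set.Icc a v, f w ≤ f t) → False := by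
        intro w hwv hwav hwmin
        have hloc : ∃ ε > 0, ∀ y ∈ Set.Icc a b, |w - y| ≤ ε → f w ≤ f y := by
          refine ⟨v - w, by linarith, fun y hy hdy => ?_⟩
          have h' := abs_le.1 hdy
          exact hwmin y ⟨hy.1, by linarith [h'.2]⟩
        have hglob := hG w (hsub hwav) hloc
        have hwx₀ : w = x₀ := huniq w ⟨hsub hwav, hglob⟩
        subst hwx₀
        linarith
      have hqv : q = v := by
        by_contra hne
        exact key q (lt_of_le_of_ne hq.2 hne) hq (fun t ht => isMinOn_iff.1 hqmin t ht)
      have hmv : ∀ t ∈ Set.Icc a v, f v ≤ f t := fun t ht =>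
        hqv ▸ isMinOn_iff.1 hqmin t ht
      by_contra hle
      push_neg at hle
      exact key u huv ⟨hu, huv.le⟩ (fun t ht => hle.trans (hmv t ht))
    -- conclude strict quasiconvexity
    intro x hx y hy hxy l hl0 hl1
    have hz : l * x + (1 - l) * y ∈ Set.Icc a b := by
      have := (convex_Icc a b) hx hy hl0.le (by linarith : (0:ℝ) ≤ 1 - l) (by ring)
      simpa [smul_eq_mul] using this
    set z : ℝ := l * x + (1 - l) * y with hzdef
    rcases hxy.lt_or_gt with h | h
    · -- x < z < y
      have hxz : x < z := by nlinarith
      have hzy : z < y := by nlinarith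
      rcases le_total z x₀ with h0 | h0
      · exact lt_of_lt_of_le (hL x z hx.1 hxz h0) (le_max_left _ _)
      · exact lt_of_lt_of_le (hR z y h0 hzy hy.2) (le_max_right _ _)
    · -- y < z < x
      have hyz : y < z := by nlinarith
      have hzx : z < x := by nlinarith
      rcases le_total z x₀ with h0 | h0
      · exact lt_of_lt_of_le (hL y z hy.1 hyz h0) (le_max_right _ _)
      · exact lt_of_lt_of_le (hR z x h0 hzx hx.2) (le_max_left _ _)
end

section
/- The function f(x) = (x² + x⁴)/(1 + x⁴) defined on ℝ is a global function (every local minimum is a global minimum), but there is no continuous path g : [0,1] → ℝ with g(0) = −3, g(1) = 0 (the unique global minimizer) along which t ↦ f(g(t)) is strictly decreasing. -/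
private lemma key_lt {a b : ℝ} (h : (a ^ 2 - b ^ 2) * (1 + a ^ 2 + b ^ 2 - a ^ 2 * b ^ 2) < 0) :
    (a ^ 2 + a ^ 4) / (1 + a ^ 4) < (b ^ 2 + b ^ 4) / (1 + b ^ 4) := by
  rw [div_lt_div_iff₀ (by positivity) (by positivity)]
  nlinarith [sq_nonneg a, sq_nonneg b, sq_nonneg (a*b)]

/-- `f(x) = (x² + x⁴)/(1 + x⁴)` is a global function on `ℝ`, yet there is no
continuous path `g : [0,1] → ℝ` with `g 0 = -3` and `g 1 = 0` (the unique global minimizer)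
along which `f ∘ g` is strictly decreasing. -/
theorem stmt_11 :
    (∀ x : ℝ,
        (∃ ε > 0, ∀ y : ℝ, |x - y| ≤ ε → (x ^ 2 + x ^ 4) / (1 + x ^ 4) ≤ (y ^ 2 + y ^ 4) / (1 + y ^ 4)) →
        ∀ y : ℝ, (x ^ 2 + x ^ 4) / (1 + x ^ 4) ≤ (y ^ 2 + y ^ 4) / (1 + y ^ 4)) ∧
    ¬ ∃ g : ℝ → ℝ, ContinuousOn g (Set.Icc 0 1) ∧ g 0 = -3 ∧ g 1 = 0 ∧
        ∀ t₁ ∈ Set.Icc (0 : ℝ) 1, ∀ t₂ ∈ Set.Icc (0 : ℝ) 1, t₁ < t₂ →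
          ((g t₂) ^ 2 + (g t₂) ^ 4) / (1 + (g t₂) ^ 4) <
            ((g t₁) ^ 2 + (g t₁) ^ 4) / (1 + (g t₁) ^ 4) := by
  constructor
  · rintro x ⟨ε, hε, hloc⟩ y
    have hx0 : x = 0 := by
      by_contra hx
      have hxa : 0 < |x| := abs_pos.mpr hx
      have hx2 : 0 < x ^ 2 := by positivity
      rcases lt_or_ge 0 (1 + 2 * x ^ 2 - x ^ 4) with hA | hB
      · -- move inward
        set δ : ℝ := min (ε / |x|) (1/2) with hδdef
        have hδ0 : 0 < δ := lt_min (by positivity) (by norm_num)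
        have hδ1 : δ ≤ 1/2 := min_le_right _ _
        have hδε : δ ≤ ε / |x| := min_le_left _ _
        set y' : ℝ := x * (1 - δ) with hy'
        have hdist : |x - y'| ≤ ε := by
          have : |x - y'| = |x| * δ := by
            rw [hy']
            rw [show x - x * (1 - δ) = x * δ by ring, abs_mul, abs_of_pos hδ0]
          rw [this]
          calc |x| * δ ≤ |x| * (ε / |x|) := by
                exact mul_le_mul_of_nonneg_left hδε (le_of_lt hxa)
            _ = ε := by field_simp
        have hlt : (y' ^ 2 + y' ^ 4) / (1 + y' ^ 4) < (x ^ 2 + x ^ 4) / (1 + x ^ 4) := by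
          apply key_lt
          have h1 : y' ^ 2 - x ^ 2 < 0 := by
            rw [hy']
            nlinarith [mul_pos hx2 (mul_pos hδ0 (show (0:ℝ) < 2 - δ by linarith))]
          have h2 : 0 < 1 + y' ^ 2 + x ^ 2 - y' ^ 2 * x ^ 2 := by
            rw [hy']
            nlinarith [mul_pos hA (show (0:ℝ) < (1 - δ) ^ 2 by nlinarith),
              mul_nonneg (show (0:ℝ) ≤ 1 + x ^ 2 by positivity)
                (show (0:ℝ) ≤ 1 - (1 - δ) ^ 2 by nlinarith)]
          nlinarith [h1, h2]
        exact absurd (hloc y' hdist) (not_le.mpr hlt)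
      · -- move outward
        set δ : ℝ := ε / |x| with hδdef
        have hδ0 : 0 < δ := by positivity
        set y' : ℝ := x * (1 + δ) with hy'
        have hdist : |x - y'| ≤ ε := by
          have : |x - y'| = |x| * δ := by
            rw [hy', show x - x * (1 + δ) = -(x * δ) by ring, abs_neg, abs_mul, abs_of_pos hδ0]
          rw [this, hδdef]; field_simp; exact le_rfl
        have hlt : (y' ^ 2 + y' ^ 4) / (1 + y' ^ 4) < (x ^ 2 + x ^ 4) / (1 + x ^ 4) := by
          apply key_lt
          have hs1 : 1 < x ^ 2 := by nlinarith [sq_nonneg (x^2), hx2]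
          have h1 : 0 < y' ^ 2 - x ^ 2 := by
            rw [hy']
            nlinarith [mul_pos hx2 (show (0:ℝ) < 2 * δ + δ ^ 2 by positivity)]
          have h2 : 1 + y' ^ 2 + x ^ 2 - y' ^ 2 * x ^ 2 < 0 := by
            rw [hy']
            nlinarith [mul_pos (show (0:ℝ) < x ^ 4 - x ^ 2 by nlinarith)
              (show (0:ℝ) < (1 + δ) ^ 2 - 1 by nlinarith), hB]
          nlinarith [h1, h2]
        exact absurd (hloc y' hdist) (not_le.mpr hlt)
    subst hx0
    have : (0:ℝ) ≤ (y ^ 2 + y ^ 4) / (1 + y ^ 4) := by positivity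
    norm_num
    linarith
  · rintro ⟨g, hg, h0, h1, hdec⟩
    have hmem : (-3/2 : ℝ) ∈ Set.Icc (g 0) (g 1) := by
      rw [h0, h1]; constructor <;> norm_num
    have := intermediate_value_Icc (by norm_num : (0:ℝ) ≤ 1) hg hmem
    obtain ⟨t, ht, hgt⟩ := this
    have ht0 : 0 < t := by
      rcases lt_or_eq_of_le ht.1 with h | h
      · exact h
      · exfalso; rw [← h] at hgt; rw [h0] at hgt; norm_num at hgt
    have := hdec 0 (by constructor <;> norm_num) t ht ht0
    rw [hgt, h0] at this
    norm_num at this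
end

section
/- Fix y ∈ ℝⁿ, an integer d ≥ 1, and p > 1. The function f_p(x) = Σ_{i₁,…,i_d=1}^n |x_{i₁}⋯x_{i_d} − y_{i₁}⋯y_{i_d}|^p has no spurious local minima on ℝⁿ: every local minimum x of f_p satisfies x = y if d is odd, and x = y or x = −y if d is even (assuming y ≠ 0; if y = 0 the only local minimum is x = 0). -/
open Finset Set

noncomputable def s12dpsi (p s : ℝ) : ℝ := p * |s| ^ (p - 1) * Real.sign s

lemma s12_hasDerivAt (p : ℝ) (hp : 1 < p) (s : ℝ) :
    HasDerivAt (fun t : ℝ => |t| ^ p) (s12dpsi p s) s := by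
  rcases lt_trichotomy s 0 with hs | rfl | hs
  · have h1 : HasDerivAt (fun t : ℝ => (-t) ^ p) (p * (-s) ^ (p - 1) * (-1)) s := by
      have := (Real.hasDerivAt_rpow_const (x := -s) (p := p)
        (Or.inl (by linarith : -s ≠ 0))).comp s (hasDerivAt_neg s)
      simpa [mul_comm, Function.comp_def] using this
    have h2 : (fun t : ℝ => |t| ^ p) =ᶠ[nhds s] (fun t : ℝ => (-t) ^ p) := by
      filter_upwards [Iio_mem_nhds hs] with t ht
      rw [abs_of_neg ht]
    rw [show s12dpsi p s = p * (-s) ^ (p - 1) * (-1) by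
      simp [s12dpsi, abs_of_neg hs, Real.sign_of_neg hs]]
    exact h1.congr_of_eventuallyEq h2
  · rw [show s12dpsi p 0 = 0 by simp [s12dpsi]]
    rw [hasDerivAt_iff_tendsto_slope]
    have hb : ∀ t : ℝ, t ≠ 0 → ‖slope (fun t : ℝ => |t| ^ p) 0 t‖ ≤ |t| ^ (p - 1) := by
      intro t ht
      have habs : (0:ℝ) < |t| := abs_pos.2 ht
      have h1 : slope (fun t : ℝ => |t| ^ p) 0 t = |t| ^ p / t := by
        rw [slope_def_field]
        rw [abs_zero, Real.zero_rpow (by positivity : p ≠ 0)]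
        ring_nf
      have h2 : |t| ^ p = |t| ^ (p - 1) * |t| := by
        rw [← Real.rpow_add_one (ne_of_gt habs)]; ring_nf
      rw [h1, Real.norm_eq_abs, abs_div, abs_of_nonneg (Real.rpow_nonneg (abs_nonneg t) p),
        h2, mul_div_assoc, div_self (ne_of_gt habs), mul_one]
    have hlim : Filter.Tendsto (fun t : ℝ => |t| ^ (p - 1)) (nhds 0) (nhds 0) := by
      have hc : Filter.Tendsto (fun t : ℝ => |t|) (nhds (0:ℝ)) (nhds (0:ℝ)) := by
        simpa using continuous_abs.tendsto (0:ℝ)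
      have := hc.rpow_const (p := p - 1) (Or.inr (by linarith))
      simpa [Real.zero_rpow (by linarith : p - 1 ≠ 0)] using this
    apply squeeze_zero_norm' _ (hlim.mono_left nhdsWithin_le_nhds)
    filter_upwards [self_mem_nhdsWithin] with t ht
    exact hb t ht
  · have h1 : HasDerivAt (fun t : ℝ => t ^ p) (p * s ^ (p - 1)) s :=
      Real.hasDerivAt_rpow_const (Or.inl (ne_of_gt hs))
    have h2 : (fun t : ℝ => |t| ^ p) =ᶠ[nhds s] (fun t : ℝ => t ^ p) := by
      filter_upwards [Ioi_mem_nhds hs] with t ht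
      rw [abs_of_pos ht]
    rw [show s12dpsi p s = p * s ^ (p - 1) by
      simp [s12dpsi, abs_of_pos hs, Real.sign_of_pos hs]]
    exact h1.congr_of_eventuallyEq h2

lemma s12_dpsi_strictMono (p : ℝ) (hp : 1 < p) : StrictMono (s12dpsi p) := by
  have hq : 0 < p - 1 := by linarith
  have hg : StrictMono (fun s : ℝ => |s| ^ (p - 1) * Real.sign s) := by
    intro s t hst
    have key : ∀ r : ℝ, 0 < r → 0 < |r| ^ (p - 1) * Real.sign r := by
      intro r hr
      rw [Real.sign_of_pos hr, mul_one]
      exact Real.rpow_pos_of_pos (abs_pos.2 (ne_of_gt hr)) _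
    have keyn : ∀ r : ℝ, r < 0 → |r| ^ (p - 1) * Real.sign r < 0 := by
      intro r hr
      rw [Real.sign_of_neg hr]
      have := Real.rpow_pos_of_pos (abs_pos.2 (ne_of_lt hr)) (p - 1)
      nlinarith
    rcases lt_trichotomy s 0 with hs | rfl | hs
    · rcases lt_trichotomy t 0 with htt | rfl | htt
      · have habs : |t| < |s| := by rw [abs_of_neg hs, abs_of_neg htt]; linarith
        have h2 : |t| ^ (p - 1) < |s| ^ (p - 1) :=
          Real.rpow_lt_rpow (abs_nonneg t) habs hq
        show |s| ^ (p - 1) * Real.sign s < |t| ^ (p - 1) * Real.sign t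
        rw [Real.sign_of_neg hs, Real.sign_of_neg htt]
        nlinarith
      · simpa using keyn s hs
      · exact lt_trans (keyn s hs) (key t htt)
    · simpa using key t hst
    · have htt : 0 < t := lt_trans hs hst
      have habs : |s| < |t| := by rw [abs_of_pos hs, abs_of_pos htt]; linarith
      have h2 : |s| ^ (p - 1) < |t| ^ (p - 1) :=
        Real.rpow_lt_rpow (abs_nonneg s) habs hq
      show |s| ^ (p - 1) * Real.sign s < |t| ^ (p - 1) * Real.sign t
      rw [Real.sign_of_pos hs, Real.sign_of_pos htt]
      simpa using h2
  have : StrictMono (fun s : ℝ => p * (|s| ^ (p - 1) * Real.sign s)) :=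
    fun s t hst => by
      have := hg hst
      have hppos : 0 < p := by linarith
      exact mul_lt_mul_of_pos_left this hppos
  intro s t hst
  have := this hst
  simpa [s12dpsi, mul_assoc] using this

lemma s12_strictConvexOn (p : ℝ) (hp : 1 < p) :
    StrictConvexOn ℝ Set.univ (fun s : ℝ => |s| ^ p) := by
  apply StrictMono.strictConvexOn_univ_of_deriv
  · exact continuous_abs.rpow_const (fun x => Or.inr (by linarith))
  · have : deriv (fun s : ℝ => |s| ^ p) = s12dpsi p := by
      funext s; exact (s12_hasDerivAt p hp s).deriv
    rw [this]
    exact s12_dpsi_strictMono p hp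

/-- convex + derivative zero at a point implies global min (1D). -/
lemma s12_min_of_deriv_zero {h : ℝ → ℝ}
    (hconv : ∀ u₁ u₂ t : ℝ, 0 ≤ t → t ≤ 1 →
      h ((1 - t) * u₁ + t * u₂) ≤ (1 - t) * h u₁ + t * h u₂)
    {a : ℝ} (hder : HasDerivAt h 0 a) (u : ℝ) : h a ≤ h u := by
  rcases eq_or_ne u a with rfl | hu
  · exact le_refl _
  have hslope := hasDerivAt_iff_tendsto_slope.1 hder
  have hpath : Filter.Tendsto (fun t : ℝ => a + t * (u - a)) (nhdsWithin 0 (Set.Ioi 0))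
      (nhdsWithin a {a}ᶜ) := by
    rw [tendsto_nhdsWithin_iff]
    constructor
    · have hc : Continuous (fun t : ℝ => a + t * (u - a)) := by continuity
      exact (hc.tendsto' 0 a (by ring)).mono_left nhdsWithin_le_nhds
    · filter_upwards [self_mem_nhdsWithin] with t ht
      have ht' : (0:ℝ) < t := ht
      simp only [Set.mem_compl_iff, Set.mem_singleton_iff]
      intro hcontra
      have h0 : t * (u - a) = 0 := by linarith
      rcases mul_eq_zero.1 h0 with h1 | h2
      · exact absurd h1 (ne_of_gt ht')
      · exact hu (by linarith)
  have hcomp : Filter.Tendsto (fun t : ℝ => slope h a (a + t * (u - a)) * (u - a))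
      (nhdsWithin 0 (Set.Ioi 0)) (nhds 0) := by
    have := (hslope.comp hpath).mul_const (u - a)
    simpa using this
  have hbound : ∀ᶠ t in nhdsWithin (0:ℝ) (Set.Ioi 0),
      slope h a (a + t * (u - a)) * (u - a) ≤ h u - h a := by
    filter_upwards [Ioo_mem_nhdsGT_of_mem (by constructor <;> norm_num :
      (0:ℝ) ∈ Set.Ico 0 1)] with t ht
    obtain ⟨ht0, ht1⟩ := ht
    have hconv' := hconv a u t (le_of_lt ht0) (le_of_lt ht1)
    have heq : (1 - t) * a + t * u = a + t * (u - a) := by ring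
    rw [heq] at hconv'
    set w := a + t * (u - a) with hw
    have e1 : slope h a w = (h w - h a) / (t * (u - a)) := by
      rw [slope_def_field, hw, add_sub_cancel_left]
    rw [e1, div_mul_eq_mul_div, mul_comm (h w - h a) (u - a),
      mul_comm t (u - a), mul_div_mul_left _ _ (sub_ne_zero.2 hu),
      div_le_iff₀ ht0]
    nlinarith [hconv']
  have := le_of_tendsto hcomp hbound
  linarith

lemma s12_sum_prod {n d : ℕ} (a : Fin n → ℝ) :
    ∑ i : Fin d → Fin n, ∏ k : Fin d, a (i k) = (∑ j : Fin n, a j) ^ d := by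
  rw [show ((∑ j : Fin n, a j) ^ d) = ∏ _k : Fin d, (∑ j : Fin n, a j) by
    rw [Finset.prod_const]; simp]
  rw [Finset.prod_univ_sum]
  rw [Fintype.piFinset_univ]

lemma s12_fcalc {n d : ℕ} (hd : 1 ≤ d) (p : ℝ) (hp : 1 < p) (w : Fin n → ℝ) (s b : ℝ) :
    ∑ i : Fin d → Fin n, |(∏ k : Fin d, s * w (i k)) - b * ∏ k : Fin d, w (i k)| ^ p
      = |s ^ d - b| ^ p * (∑ j : Fin n, |w j| ^ p) ^ d := by
  have key : ∀ i : Fin d → Fin n,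
      |(∏ k : Fin d, s * w (i k)) - b * ∏ k : Fin d, w (i k)| ^ p
        = |s ^ d - b| ^ p * ∏ k : Fin d, |w (i k)| ^ p := by
    intro i
    have h1 : (∏ k : Fin d, s * w (i k)) = s ^ d * ∏ k : Fin d, w (i k) := by
      rw [Finset.prod_mul_distrib, Finset.prod_const]
      simp
    rw [h1, show s ^ d * (∏ k : Fin d, w (i k)) - b * ∏ k : Fin d, w (i k)
        = (s ^ d - b) * ∏ k : Fin d, w (i k) by ring]
    rw [abs_mul, Real.mul_rpow (abs_nonneg _) (abs_nonneg _), abs_prod,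
      ← Real.finset_prod_rpow _ _ (fun k _ => abs_nonneg _) p]
  calc ∑ i : Fin d → Fin n, |(∏ k : Fin d, s * w (i k)) - b * ∏ k : Fin d, w (i k)| ^ p
      = ∑ i : Fin d → Fin n, |s ^ d - b| ^ p * ∏ k : Fin d, |w (i k)| ^ p := by
        exact Finset.sum_congr rfl (fun i _ => key i)
    _ = |s ^ d - b| ^ p * ∑ i : Fin d → Fin n, ∏ k : Fin d, |w (i k)| ^ p := by
        rw [Finset.mul_sum]
    _ = |s ^ d - b| ^ p * (∑ j : Fin n, |w j| ^ p) ^ d := by rw [s12_sum_prod (fun j => |w j| ^ p)]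

lemma s12_scaling {d : ℕ} (hd : 1 ≤ d) (p : ℝ) (hp : 1 < p) (P : ℝ) (hP : 0 < P)
    (c : ℝ) (hc : c ≠ 0) (ε : ℝ) (hε : 0 < ε)
    (Hline : ∀ s : ℝ, |c - s| ≤ ε → |c ^ d - 1| ^ p * P ≤ |s ^ d - 1| ^ p * P) :
    c ^ d = 1 := by
  by_contra ha1
  set a := c ^ d with haa
  have ha0 : a ≠ 0 := pow_ne_zero d hc
  set σ : ℝ := if 0 < c then 1 else -1 with hσ
  have hσc : σ * |c| = c := by
    rcases lt_trichotomy c 0 with h | h | h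
    · rw [hσ, if_neg (by linarith), abs_of_neg h]; ring
    · exact absurd h hc
    · rw [hσ, if_pos h, abs_of_pos h]; ring
  set S : ℝ → ℝ := fun t => σ * |a + t * (1 - a)| ^ ((d : ℝ)⁻¹) with hS
  have hdR : ((d : ℝ)) ≠ 0 := Nat.cast_ne_zero.2 (by omega)
  have hrpow_pow : ∀ e : ℝ, (|e| ^ ((d : ℝ)⁻¹)) ^ d = |e| := by
    intro e
    rw [← Real.rpow_natCast (|e| ^ ((d : ℝ)⁻¹)) d, ← Real.rpow_mul (abs_nonneg e),
      inv_mul_cancel₀ hdR, Real.rpow_one]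
  have hS0 : S 0 = c := by
    rw [hS]
    simp only [zero_mul, add_zero]
    rw [haa, abs_pow, ← Real.rpow_natCast (|c|) d, ← Real.rpow_mul (abs_nonneg c),
      mul_inv_cancel₀ hdR, Real.rpow_one, hσc]
  -- continuity of S at 0
  have hScont : ContinuousAt S 0 := by
    apply ContinuousAt.mul continuousAt_const
    apply ContinuousAt.rpow_const
    · exact (continuousAt_const.add (continuousAt_id.mul continuousAt_const)).abs
    · right; positivity
  -- pick t
  have hev : ∀ᶠ t in nhdsWithin (0:ℝ) (Set.Ioi 0),
      |S t - c| ≤ ε ∧ |a + t * (1 - a) - a| < |a| ∧ t < 1 ∧ 0 < t := by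
    have h1 : ∀ᶠ t in nhds (0:ℝ), |S t - c| ≤ ε := by
      have := Metric.tendsto_nhds.1 (hS0 ▸ hScont.tendsto) ε hε
      filter_upwards [this] with t ht
      rw [Real.dist_eq] at ht; exact le_of_lt ht
    have h2 : ∀ᶠ t in nhds (0:ℝ), |a + t * (1 - a) - a| < |a| := by
      have hc2 : ContinuousAt (fun t : ℝ => a + t * (1 - a)) 0 :=
        continuousAt_const.add (continuousAt_id.mul continuousAt_const)
      have := Metric.tendsto_nhds.1 hc2.tendsto (|a|) (abs_pos.2 ha0)
      filter_upwards [this] with t ht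
      rw [Real.dist_eq] at ht
      simpa using ht
    have h3 : ∀ᶠ t in nhds (0:ℝ), t < 1 := by
      filter_upwards [Iio_mem_nhds (by norm_num : (0:ℝ) < 1)] with t ht; exact ht
    have hall : ∀ᶠ t in nhdsWithin (0:ℝ) (Set.Ioi 0), |S t - c| ≤ ε ∧ |a + t * (1 - a) - a| < |a| ∧ t < 1 := (h1.and (h2.and h3)).filter_mono nhdsWithin_le_nhds
    filter_upwards [hall, self_mem_nhdsWithin] with t ht ht'
    exact ⟨ht.1, ht.2.1, ht.2.2, ht'⟩
  obtain ⟨t, h1, h2, h3, h4⟩ := hev.exists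
  set e := a + t * (1 - a) with he
  -- S t ^ d = e
  have hsd : S t ^ d = e := by
    rw [hS]
    simp only
    rw [mul_pow, hrpow_pow]
    rcases lt_trichotomy c 0 with hcneg | h | hcpos
    · rcases Nat.even_or_odd d with hev' | hod
      · have haPos : 0 < a := by
          rw [haa]; exact hev'.pow_pos hc
        have hePos : 0 < e := by
          rw [abs_lt] at h2
          have := abs_of_pos haPos
          rw [he]; nlinarith [h2.1, h2.2]
        rw [hσ, if_neg (by linarith), hev'.neg_one_pow, abs_of_pos hePos, one_mul]
      · have haNeg : a < 0 := by
          rw [haa]; exact hod.pow_neg hcneg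
        have heNeg : e < 0 := by
          rw [abs_lt] at h2
          have := abs_of_neg haNeg
          rw [he]; nlinarith [h2.1, h2.2]
        rw [hσ, if_neg (by linarith), hod.neg_one_pow, abs_of_neg heNeg]; ring
    · exact absurd h hc
    · have haPos : 0 < a := by rw [haa]; positivity
      have hePos : 0 < e := by
        rw [abs_lt] at h2
        have := abs_of_pos haPos
        rw [he]; nlinarith [h2.1, h2.2]
      rw [hσ, if_pos hcpos, one_pow, abs_of_pos hePos, one_mul]
  have hkey := Hline (S t) (by rwa [abs_sub_comm])
  rw [hsd] at hkey
  have heq1 : e - 1 = (1 - t) * (a - 1) := by rw [he]; ring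
  have h1t : (0:ℝ) < 1 - t := by linarith
  have hlt : |e - 1| ^ p < |a - 1| ^ p := by
    rw [heq1, abs_mul, abs_of_pos h1t,
      Real.mul_rpow (le_of_lt h1t) (abs_nonneg _)]
    have hfac : (1 - t) ^ p < 1 := by
      apply Real.rpow_lt_one (le_of_lt h1t) (by linarith) (by linarith)
    have hpos : 0 < |a - 1| ^ p :=
      Real.rpow_pos_of_pos (abs_pos.2 (sub_ne_zero.2 ha1)) p
    nlinarith
  nlinarith [hkey, hlt, hP]

lemma s12_phimin {ι : Type*} [Fintype ι] (p : ℝ) (hp : 1 < p) (A B : ι → ℝ) (v u₀ : ℝ)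
    (hcrit : ∑ i, s12dpsi p (u₀ * A i - v * B i) * A i = 0) :
    ∀ u, ∑ i, |u₀ * A i - v * B i| ^ p ≤ ∑ i, |u * A i - v * B i| ^ p := by
  intro u
  apply s12_min_of_deriv_zero (h := fun u => ∑ i, |u * A i - v * B i| ^ p)
  · intro u₁ u₂ t ht0 ht1
    rw [Finset.mul_sum, Finset.mul_sum, ← Finset.sum_add_distrib]
    apply Finset.sum_le_sum
    intro i _
    have hc := (s12_strictConvexOn p hp).convexOn.2 (Set.mem_univ (u₁ * A i - v * B i))
      (Set.mem_univ (u₂ * A i - v * B i)) (by linarith : (0:ℝ) ≤ 1 - t) ht0 (by ring)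
    have harg : ((1 - t) * u₁ + t * u₂) * A i - v * B i
        = (1 - t) • (u₁ * A i - v * B i) + t • (u₂ * A i - v * B i) := by
      simp only [smul_eq_mul]; ring
    rw [harg]
    simpa using hc
  · have hterm : ∀ i : ι, HasDerivAt (fun u : ℝ => |u * A i - v * B i| ^ p)
        (s12dpsi p (u₀ * A i - v * B i) * A i) u₀ := by
      intro i
      have hin : HasDerivAt (fun u : ℝ => u * A i - v * B i) (A i) u₀ := by
        simpa using ((hasDerivAt_id u₀).mul_const (A i)).sub_const (v * B i)
      exact (s12_hasDerivAt p hp (u₀ * A i - v * B i)).comp u₀ hin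
    have hsum := HasDerivAt.sum (u := Finset.univ)
      (A := fun i (u : ℝ) => |u * A i - v * B i| ^ p)
      (A' := fun i => s12dpsi p (u₀ * A i - v * B i) * A i)
      (fun i _ => hterm i)
    rw [hcrit, Finset.sum_fn] at hsum
    exact hsum

lemma s12_unique {ι : Type*} [Fintype ι] (p : ℝ) (hp : 1 < p) (A B : ι → ℝ)
    (i₀ : ι) (hA : A i₀ ≠ 0) (v u₁ u₂ : ℝ)
    (h₁ : ∀ u, ∑ i, |u₁ * A i - v * B i| ^ p ≤ ∑ i, |u * A i - v * B i| ^ p)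
    (h₂ : ∀ u, ∑ i, |u₂ * A i - v * B i| ^ p ≤ ∑ i, |u * A i - v * B i| ^ p) :
    u₁ = u₂ := by
  by_contra hne
  set m := (1/2 : ℝ) * u₁ + (1/2 : ℝ) * u₂ with hm
  have hlt : ∑ i, |m * A i - v * B i| ^ p
      < ∑ i, ((1/2 : ℝ) * |u₁ * A i - v * B i| ^ p + (1/2 : ℝ) * |u₂ * A i - v * B i| ^ p) := by
    apply Finset.sum_lt_sum
    · intro i _
      have hc := (s12_strictConvexOn p hp).convexOn.2 (Set.mem_univ (u₁ * A i - v * B i))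
        (Set.mem_univ (u₂ * A i - v * B i)) (by norm_num : (0:ℝ) ≤ 1/2)
        (by norm_num : (0:ℝ) ≤ 1/2) (by norm_num)
      have harg : m * A i - v * B i
          = (1/2 : ℝ) • (u₁ * A i - v * B i) + (1/2 : ℝ) • (u₂ * A i - v * B i) := by
        simp only [smul_eq_mul, hm]; ring
      rw [harg]
      simpa using hc
    · refine ⟨i₀, Finset.mem_univ i₀, ?_⟩
      have hneq : u₁ * A i₀ - v * B i₀ ≠ u₂ * A i₀ - v * B i₀ := by
        intro hcon
        apply hne
        have := mul_right_cancel₀ hA (by linarith : u₁ * A i₀ = u₂ * A i₀)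
        exact this
      have hc := (s12_strictConvexOn p hp).2 (Set.mem_univ (u₁ * A i₀ - v * B i₀))
        (Set.mem_univ (u₂ * A i₀ - v * B i₀)) hneq
        (by norm_num : (0:ℝ) < 1/2) (by norm_num : (0:ℝ) < 1/2) (by norm_num)
      have harg : m * A i₀ - v * B i₀
          = (1/2 : ℝ) • (u₁ * A i₀ - v * B i₀) + (1/2 : ℝ) • (u₂ * A i₀ - v * B i₀) := by
        simp only [smul_eq_mul, hm]; ring
      rw [harg]
      simpa using hc
  rw [Finset.sum_add_distrib, ← Finset.mul_sum, ← Finset.mul_sum] at hlt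
  have e1 := h₁ m
  have e2 := h₂ m
  have e3 := h₁ u₂
  have e4 := h₂ u₁
  linarith

lemma s12_phiscale {ι : Type*} [Fintype ι] (p : ℝ) (A B : ι → ℝ) (v μ w : ℝ) :
    ∑ i, |(μ * w) * A i - (μ * v) * B i| ^ p = |μ| ^ p * ∑ i, |w * A i - v * B i| ^ p := by
  rw [Finset.mul_sum]
  apply Finset.sum_congr rfl
  intro i _
  rw [show (μ * w) * A i - (μ * v) * B i = μ * (w * A i - v * B i) by ring,
    abs_mul, Real.mul_rpow (abs_nonneg _) (abs_nonneg _)]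

lemma s12_norm_update {n : ℕ} (x : EuclideanSpace ℝ (Fin n)) (j : Fin n) (u : ℝ) :
    ‖x - (WithLp.toLp 2 (Function.update x j u))‖ = |x j - u| := by
  rw [EuclideanSpace.norm_eq]
  have hsum : ∑ i : Fin n, ‖(x - (WithLp.toLp 2 (Function.update x j u))) i‖ ^ 2 = (x j - u) ^ 2 := by
    rw [Finset.sum_eq_single j]
    · simp [Real.norm_eq_abs, sq_abs]
    · intro i _ hij
      have : (x - (WithLp.toLp 2 (Function.update x j u))) i = x i - Function.update x j u i := rfl
      rw [this, Function.update_apply, if_neg hij]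
      simp
    · intro h; exact absurd (Finset.mem_univ j) h
  rw [hsum, Real.sqrt_sq_eq_abs]

lemma s12_crit {n d : ℕ} (hd : 1 ≤ d) (p : ℝ) (hp : 1 < p)
    (y x : EuclideanSpace ℝ (Fin n)) (ε : ℝ) (hε : 0 < ε)
    (H : ∀ z : EuclideanSpace ℝ (Fin n), ‖x - z‖ ≤ ε →
      (∑ i : Fin d → Fin n, |(∏ k : Fin d, x (i k)) - ∏ k : Fin d, y (i k)| ^ p) ≤
        ∑ i : Fin d → Fin n, |(∏ k : Fin d, z (i k)) - ∏ k : Fin d, y (i k)| ^ p)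
    (j : Fin n) :
    ∑ i' : {k : Fin d // k ≠ (⟨0, hd⟩ : Fin d)} → Fin n,
      s12dpsi p (x j * (∏ k', x (i' k')) - y j * (∏ k', y (i' k')))
        * (∏ k', x (i' k')) = 0 := by
  classical
  set k₀ : Fin d := ⟨0, hd⟩ with hk₀
  have hite_eval : ∀ (i : Fin d → Fin n) (k : Fin d),
      (if i k = j then x j else x (i k)) = x (i k) := by
    intro i k
    by_cases h : i k = j
    · rw [if_pos h, h]
    · rw [if_neg h]
  have hφx : (∑ i : Fin d → Fin n,
      |(∏ k : Fin d, (if i k = j then x j else x (i k))) - ∏ k : Fin d, y (i k)| ^ p) = ∑ i : Fin d → Fin n,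
      |(∏ k : Fin d, x (i k)) - ∏ k : Fin d, y (i k)| ^ p := by
    apply Finset.sum_congr rfl
    intro i _
    have hpr : (∏ k : Fin d, (if i k = j then x j else x (i k))) = ∏ k : Fin d, x (i k) :=
      Finset.prod_congr rfl fun k _ => hite_eval i k
    rw [hpr]
  -- local minimum of φ at x j
  have hloc : IsLocalMin (fun u : ℝ => ∑ i : Fin d → Fin n,
      |(∏ k : Fin d, (if i k = j then u else x (i k))) - ∏ k : Fin d, y (i k)| ^ p) (x j) := by
    filter_upwards [Metric.closedBall_mem_nhds (x j) hε] with u hu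
    rw [Metric.mem_closedBall, Real.dist_eq] at hu
    have hznorm : ‖x - (WithLp.toLp 2 (Function.update x j u))‖ ≤ ε := by
      rw [s12_norm_update]
      rwa [abs_sub_comm]
    have hHz := H (WithLp.toLp 2 (Function.update x j u)) hznorm
    show (∑ i : Fin d → Fin n,
      |(∏ k : Fin d, (if i k = j then x j else x (i k))) - ∏ k : Fin d, y (i k)| ^ p) ≤ _
    rw [hφx]
    have hφu : (∑ i : Fin d → Fin n,
        |(∏ k : Fin d, (if i k = j then u else x (i k))) - ∏ k : Fin d, y (i k)| ^ p)
        = ∑ i : Fin d → Fin n,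
        |(∏ k : Fin d, (Function.update x j u) (i k)) - ∏ k : Fin d, y (i k)| ^ p := by
      apply Finset.sum_congr rfl
      intro i _
      have hpr : (∏ k : Fin d, (if i k = j then u else x (i k)))
          = ∏ k : Fin d, (Function.update x j u) (i k) :=
        Finset.prod_congr rfl fun k _ => (Function.update_apply x j u (i k)).symm
      rw [hpr]
    rw [hφu]
    exact hHz
  -- derivative of φ at x j
  have hterm : ∀ i : Fin d → Fin n, HasDerivAt
      (fun u : ℝ => |(∏ k : Fin d, (if i k = j then u else x (i k))) - ∏ k : Fin d, y (i k)| ^ p)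
      (s12dpsi p ((∏ k : Fin d, x (i k)) - ∏ k : Fin d, y (i k)) *
        (∑ m : Fin d, (∏ k ∈ Finset.univ.erase m, x (i k)) * (if i m = j then 1 else 0)))
      (x j) := by
    intro i
    have hfac : ∀ k : Fin d, HasDerivAt (fun u : ℝ => if i k = j then u else x (i k))
        (if i k = j then (1:ℝ) else 0) (x j) := by
      intro k
      by_cases h : i k = j
      · simp only [h, if_true]
        exact hasDerivAt_id' (x j)
      · simp only [h, if_false]
        exact hasDerivAt_const _ _
    have hprod := HasDerivAt.finset_prod (u := Finset.univ)
      (f := fun k (u : ℝ) => if i k = j then u else x (i k))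
      (f' := fun k => if i k = j then (1:ℝ) else 0) (x := x j)
      (fun k _ => hfac k)
    have hprod' : HasDerivAt (fun u : ℝ => ∏ k : Fin d, (if i k = j then u else x (i k)))
        (∑ m : Fin d, (∏ k ∈ Finset.univ.erase m, x (i k)) * (if i m = j then 1 else 0))
        (x j) := by
      refine HasDerivAt.congr_deriv (by rw [Finset.prod_fn] at hprod; exact hprod) ?_
      symm
      apply Finset.sum_congr rfl
      intro m _
      rw [smul_eq_mul]
      congr 1
      exact Finset.prod_congr rfl fun k _ => (hite_eval i k).symm
    have hin : HasDerivAt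
        (fun u : ℝ => (∏ k : Fin d, (if i k = j then u else x (i k))) - ∏ k : Fin d, y (i k))
        (∑ m : Fin d, (∏ k ∈ Finset.univ.erase m, x (i k)) * (if i m = j then 1 else 0))
        (x j) := hprod'.sub_const _
    have hval : (∏ k : Fin d, (if i k = j then x j else x (i k))) - ∏ k : Fin d, y (i k)
        = (∏ k : Fin d, x (i k)) - ∏ k : Fin d, y (i k) := by
      have hpr : (∏ k : Fin d, (if i k = j then x j else x (i k))) = ∏ k : Fin d, x (i k) :=
        Finset.prod_congr rfl fun k _ => hite_eval i k
      rw [hpr]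
    have houter : HasDerivAt (fun s : ℝ => |s| ^ p)
        (s12dpsi p ((∏ k : Fin d, x (i k)) - ∏ k : Fin d, y (i k)))
        ((∏ k : Fin d, (if i k = j then x j else x (i k))) - ∏ k : Fin d, y (i k)) := by
      rw [hval]
      exact s12_hasDerivAt p hp _
    exact houter.comp (x j) hin
  have hderiv := HasDerivAt.sum (u := Finset.univ)
    (A := fun (i : Fin d → Fin n) (u : ℝ) =>
      |(∏ k : Fin d, (if i k = j then u else x (i k))) - ∏ k : Fin d, y (i k)| ^ p)
    (A' := fun i => s12dpsi p ((∏ k : Fin d, x (i k)) - ∏ k : Fin d, y (i k)) *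
      (∑ m : Fin d, (∏ k ∈ Finset.univ.erase m, x (i k)) * (if i m = j then 1 else 0)))
    (fun i _ => hterm i)
  have hD0 := hloc.hasDerivAt_eq_zero (by rw [Finset.sum_fn] at hderiv; exact hderiv)
  -- rewrite D as iterated ite sum
  have hstep1 : ∀ i : Fin d → Fin n,
      s12dpsi p ((∏ k : Fin d, x (i k)) - ∏ k : Fin d, y (i k)) *
        (∑ m : Fin d, (∏ k ∈ Finset.univ.erase m, x (i k)) * (if i m = j then 1 else 0))
      = ∑ m : Fin d, (if i m = j then
          s12dpsi p ((∏ k : Fin d, x (i k)) - ∏ k : Fin d, y (i k))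
            * ∏ k ∈ Finset.univ.erase m, x (i k) else 0) := by
    intro i
    rw [Finset.mul_sum]
    apply Finset.sum_congr rfl
    intro m _
    by_cases h : i m = j <;> simp [h] <;> ring
  rw [Finset.sum_congr rfl (fun i _ => hstep1 i), Finset.sum_comm] at hD0
  -- each m-slice equals the k₀-slice
  have hslice : ∀ m : Fin d,
      (∑ i : Fin d → Fin n, (if i m = j then
        s12dpsi p ((∏ k : Fin d, x (i k)) - ∏ k : Fin d, y (i k))
          * ∏ k ∈ Finset.univ.erase m, x (i k) else 0))
      = ∑ i : Fin d → Fin n, (if i k₀ = j then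
        s12dpsi p ((∏ k : Fin d, x (i k)) - ∏ k : Fin d, y (i k))
          * ∏ k ∈ Finset.univ.erase k₀, x (i k) else 0) := by
    intro m
    have hbij : Function.Bijective (fun (i : Fin d → Fin n) => (fun k => i (Equiv.swap k₀ m k))) := by
      have hinv : Function.Involutive (fun (i : Fin d → Fin n) => (fun k => i (Equiv.swap k₀ m k))) := by
        intro i
        funext k
        simp [Equiv.swap_apply_self]
      exact hinv.bijective
    symm
    apply Fintype.sum_bijective _ hbij
    intro i
    have hcond : i (Equiv.swap k₀ m m) = i k₀ := by rw [Equiv.swap_apply_right]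
    have hTx : (∏ k : Fin d, x (i (Equiv.swap k₀ m k))) = ∏ k : Fin d, x (i k) :=
      Equiv.prod_comp (Equiv.swap k₀ m) (fun k => x (i k))
    have hTy : (∏ k : Fin d, y (i (Equiv.swap k₀ m k))) = ∏ k : Fin d, y (i k) :=
      Equiv.prod_comp (Equiv.swap k₀ m) (fun k => y (i k))
    have herase : (Finset.univ.erase m) = (Finset.univ.erase k₀).map (Equiv.swap k₀ m).toEmbedding := by
      ext a
      rw [Finset.mem_map_equiv, Finset.mem_erase, Finset.mem_erase]
      simp only [Finset.mem_univ, and_true, Equiv.symm_swap]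
      constructor
      · intro ha hcon
        apply ha
        have h2 := congrArg (Equiv.swap k₀ m) hcon
        rw [Equiv.swap_apply_self, Equiv.swap_apply_left] at h2
        exact h2
      · intro ha hcon
        apply ha
        rw [hcon, Equiv.swap_apply_right]
    have hprodeq : (∏ k ∈ Finset.univ.erase m, x (i (Equiv.swap k₀ m k)))
        = ∏ k ∈ Finset.univ.erase k₀, x (i k) := by
      rw [herase, Finset.prod_map]
      apply Finset.prod_congr rfl
      intro k _
      exact congrArg (fun a => x (i a)) (Equiv.swap_apply_self k₀ m k)
    simp only [hcond, hTx, hTy, hprodeq]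
  rw [Finset.sum_congr rfl (fun m _ => hslice m), Finset.sum_const, Finset.card_univ,
    Fintype.card_fin, nsmul_eq_mul] at hD0
  have hdne : (d : ℝ) ≠ 0 := Nat.cast_ne_zero.2 (by omega)
  have hE0 := (mul_eq_zero.1 hD0).resolve_left hdne
  -- convert the k₀-slice into the subtype sum
  rw [← Equiv.sum_comp (Equiv.funSplitAt k₀ (Fin n)).symm
    (fun i : Fin d → Fin n => if i k₀ = j then
      s12dpsi p ((∏ k : Fin d, x (i k)) - ∏ k : Fin d, y (i k))
        * ∏ k ∈ Finset.univ.erase k₀, x (i k) else 0)] at hE0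
  rw [Fintype.sum_prod_type] at hE0
  have hcondk : ∀ (a : Fin n) (i' : {k : Fin d // k ≠ k₀} → Fin n),
      ((Equiv.funSplitAt k₀ (Fin n)).symm (a, i')) k₀ = a := by
    intro a i'
    rw [Equiv.funSplitAt_symm_apply, dif_pos rfl]
  have hoffk : ∀ (a : Fin n) (i' : {k : Fin d // k ≠ k₀} → Fin n) (k' : {k : Fin d // k ≠ k₀}),
      ((Equiv.funSplitAt k₀ (Fin n)).symm (a, i')) (k' : Fin d) = i' k' := by
    intro a i' k'
    rw [Equiv.funSplitAt_symm_apply, dif_neg k'.2, Subtype.coe_eta]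
  have hprodx : ∀ (a : Fin n) (i' : {k : Fin d // k ≠ k₀} → Fin n),
      (∏ k ∈ Finset.univ.erase k₀, x (((Equiv.funSplitAt k₀ (Fin n)).symm (a, i')) k))
        = ∏ k' : {k : Fin d // k ≠ k₀}, x (i' k') := by
    intro a i'
    rw [Finset.prod_subtype (Finset.univ.erase k₀)
      (fun k => by simp [Finset.mem_erase] : ∀ k, k ∈ Finset.univ.erase k₀ ↔ k ≠ k₀)
      (fun k => x (((Equiv.funSplitAt k₀ (Fin n)).symm (a, i')) k))]
    exact Finset.prod_congr rfl fun k' _ => by rw [hoffk a i' k']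
  have hprody : ∀ (a : Fin n) (i' : {k : Fin d // k ≠ k₀} → Fin n),
      (∏ k ∈ Finset.univ.erase k₀, y (((Equiv.funSplitAt k₀ (Fin n)).symm (a, i')) k))
        = ∏ k' : {k : Fin d // k ≠ k₀}, y (i' k') := by
    intro a i'
    rw [Finset.prod_subtype (Finset.univ.erase k₀)
      (fun k => by simp [Finset.mem_erase] : ∀ k, k ∈ Finset.univ.erase k₀ ↔ k ≠ k₀)
      (fun k => y (((Equiv.funSplitAt k₀ (Fin n)).symm (a, i')) k))]
    exact Finset.prod_congr rfl fun k' _ => by rw [hoffk a i' k']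
  have hfullx : ∀ (a : Fin n) (i' : {k : Fin d // k ≠ k₀} → Fin n),
      (∏ k : Fin d, x (((Equiv.funSplitAt k₀ (Fin n)).symm (a, i')) k))
        = x a * ∏ k' : {k : Fin d // k ≠ k₀}, x (i' k') := by
    intro a i'
    rw [← Finset.mul_prod_erase Finset.univ _ (Finset.mem_univ k₀), hcondk a i', hprodx a i']
  have hfully : ∀ (a : Fin n) (i' : {k : Fin d // k ≠ k₀} → Fin n),
      (∏ k : Fin d, y (((Equiv.funSplitAt k₀ (Fin n)).symm (a, i')) k))
        = y a * ∏ k' : {k : Fin d // k ≠ k₀}, y (i' k') := by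
    intro a i'
    rw [← Finset.mul_prod_erase Finset.univ _ (Finset.mem_univ k₀), hcondk a i', hprody a i']
  have hinner : ∀ a : Fin n,
      (∑ i' : {k : Fin d // k ≠ k₀} → Fin n,
        if ((Equiv.funSplitAt k₀ (Fin n)).symm (a, i')) k₀ = j then
          s12dpsi p ((∏ k : Fin d, x (((Equiv.funSplitAt k₀ (Fin n)).symm (a, i')) k))
              - ∏ k : Fin d, y (((Equiv.funSplitAt k₀ (Fin n)).symm (a, i')) k))
            * ∏ k ∈ Finset.univ.erase k₀, x (((Equiv.funSplitAt k₀ (Fin n)).symm (a, i')) k)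
        else 0)
      = if a = j then
          (∑ i' : {k : Fin d // k ≠ k₀} → Fin n,
            s12dpsi p (x a * (∏ k', x (i' k')) - y a * (∏ k', y (i' k')))
              * (∏ k', x (i' k'))) else 0 := by
    intro a
    by_cases ha : a = j
    · rw [if_pos ha]
      apply Finset.sum_congr rfl
      intro i' _
      rw [hcondk a i', if_pos ha, hfullx a i', hfully a i', hprodx a i']
    · rw [if_neg ha]
      apply Finset.sum_eq_zero
      intro i' _
      rw [hcondk a i', if_neg ha]
  rw [Finset.sum_congr rfl (fun a _ => hinner a), Finset.sum_ite_eq' Finset.univ j,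
    if_pos (Finset.mem_univ j)] at hE0
  exact hE0

/-- for `p > 1`, the function
`f_p(x) = Σ_{i₁,…,i_d} |x_{i₁}⋯x_{i_d} − y_{i₁}⋯y_{i_d}|^p` has no spurious local minima:
every local minimum `x` equals `y` when `d` is odd, `±y` when `d` is even (and `x = 0` when
`y = 0`). -/
theorem stmt_12 {n d : ℕ} (hd : 1 ≤ d) (p : ℝ) (hp : 1 < p)
    (y x : EuclideanSpace ℝ (Fin n))
    (hx : ∃ ε > 0, ∀ z : EuclideanSpace ℝ (Fin n), ‖x - z‖ ≤ ε →
      (∑ i : Fin d → Fin n, |(∏ k : Fin d, x (i k)) - ∏ k : Fin d, y (i k)| ^ p) ≤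
        ∑ i : Fin d → Fin n, |(∏ k : Fin d, z (i k)) - ∏ k : Fin d, y (i k)| ^ p) :
    (y = 0 → x = 0) ∧
      (y ≠ 0 → (Odd d → x = y) ∧ (Even d → x = y ∨ x = -y)) := by
  obtain ⟨ε, hε, H⟩ := hx
  have hppos : (0:ℝ) < p := by linarith
  constructor
  · -- case y = 0
    intro hy0
    by_contra hx0
    have hxj : ∃ j, x j ≠ 0 := by
      by_contra h
      push_neg at h
      exact hx0 (by ext j; simp [h j])
    obtain ⟨jx, hjx⟩ := hxj
    have hQ : 0 < ∑ j : Fin n, |x j| ^ p :=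
      Finset.sum_pos' (fun j _ => Real.rpow_nonneg (abs_nonneg _) p)
        ⟨jx, Finset.mem_univ jx, Real.rpow_pos_of_pos (abs_pos.2 hjx) p⟩
    have hQd : 0 < (∑ j : Fin n, |x j| ^ p) ^ d := pow_pos hQ d
    have hxnorm : 0 < ‖x‖ := norm_pos_iff.2 hx0
    set t : ℝ := min (1/2) (ε / ‖x‖) with ht
    have ht0 : 0 < t := lt_min (by norm_num) (div_pos hε hxnorm)
    have ht2 : t ≤ 1/2 := min_le_left _ _
    have htε : t * ‖x‖ ≤ ε := by
      calc t * ‖x‖ ≤ (ε / ‖x‖) * ‖x‖ :=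
            mul_le_mul_of_nonneg_right (min_le_right _ _) (norm_nonneg x)
        _ = ε := div_mul_cancel₀ ε (ne_of_gt hxnorm)
    have hnorm : ‖x - ((1 - t) • x : EuclideanSpace ℝ (Fin n))‖ ≤ ε := by
      have h1 : x - ((1 - t) • x : EuclideanSpace ℝ (Fin n)) = t • x := by
        rw [sub_smul, one_smul]
        abel
      rw [h1, norm_smul, Real.norm_eq_abs, abs_of_pos ht0]
      exact htε
    have hHz := H ((1 - t) • x) hnorm
    have hlhs : (∑ i : Fin d → Fin n, |(∏ k : Fin d, x (i k)) - ∏ k : Fin d, y (i k)| ^ p)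
        = (∑ j : Fin n, |x j| ^ p) ^ d := by
      have hfc := s12_fcalc (n := n) hd p hp (fun j => x j) 1 0
      rw [show |(1:ℝ) ^ d - 0| ^ p = 1 by
        rw [one_pow, sub_zero, abs_one, Real.one_rpow], one_mul] at hfc
      simp only [one_mul, zero_mul, sub_zero] at hfc
      rw [← hfc]
      apply Finset.sum_congr rfl
      intro i _
      have h2 : (∏ k : Fin d, y (i k)) = 0 := by
        apply Finset.prod_eq_zero (Finset.mem_univ (⟨0, hd⟩ : Fin d))
        rw [hy0]; rfl
      rw [h2, sub_zero]
    have hrhs : (∑ i : Fin d → Fin n,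
          |(∏ k : Fin d, ((1 - t) • x : EuclideanSpace ℝ (Fin n)) (i k))
            - ∏ k : Fin d, y (i k)| ^ p)
        = ((1 - t) ^ d) ^ p * (∑ j : Fin n, |x j| ^ p) ^ d := by
      have hfc := s12_fcalc (n := n) hd p hp (fun j => x j) (1 - t) 0
      rw [show |(1 - t) ^ d - 0| ^ p = ((1 - t) ^ d) ^ p by
        rw [sub_zero, abs_of_nonneg (pow_nonneg (by linarith) d)]] at hfc
      rw [← hfc]
      apply Finset.sum_congr rfl
      intro i _
      have h1 : (∏ k : Fin d, ((1 - t) • x : EuclideanSpace ℝ (Fin n)) (i k))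
          = ∏ k : Fin d, (1 - t) * x (i k) := by
        apply Finset.prod_congr rfl
        intro k _
        rfl
      have h2 : (∏ k : Fin d, y (i k)) = 0 * ∏ k : Fin d, x (i k) := by
        rw [zero_mul]
        apply Finset.prod_eq_zero (Finset.mem_univ (⟨0, hd⟩ : Fin d))
        rw [hy0]; rfl
      rw [h1, h2]
    rw [hlhs, hrhs] at hHz
    have hlt : ((1 - t) ^ d) ^ p < 1 :=
      Real.rpow_lt_one (pow_nonneg (by linarith) d)
        (pow_lt_one₀ (by linarith) (by linarith) (by omega)) hppos
    nlinarith
  · -- case y ≠ 0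
    intro hy
    have hyj : ∃ j, y j ≠ 0 := by
      by_contra h
      push_neg at h
      exact hy (by ext j; simp [h j])
    obtain ⟨j₀, hj₀⟩ := hyj
    have hP : 0 < ∑ j : Fin n, |y j| ^ p :=
      Finset.sum_pos' (fun j _ => Real.rpow_nonneg (abs_nonneg _) p)
        ⟨j₀, Finset.mem_univ j₀, Real.rpow_pos_of_pos (abs_pos.2 hj₀) p⟩
    have hPd : 0 < (∑ j : Fin n, |y j| ^ p) ^ d := pow_pos hP d
    have hynorm : 0 < ‖y‖ := norm_pos_iff.2 hy
    -- x ≠ 0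
    have hx0 : x ≠ 0 := by
      intro h0
      set t : ℝ := min 1 (ε / ‖y‖) with ht
      have ht0 : 0 < t := lt_min one_pos (div_pos hε hynorm)
      have ht1 : t ≤ 1 := min_le_left _ _
      have htε : t * ‖y‖ ≤ ε := by
        calc t * ‖y‖ ≤ (ε / ‖y‖) * ‖y‖ :=
              mul_le_mul_of_nonneg_right (min_le_right _ _) (norm_nonneg y)
          _ = ε := div_mul_cancel₀ ε (ne_of_gt hynorm)
      have hnorm : ‖x - (t • y : EuclideanSpace ℝ (Fin n))‖ ≤ ε := by
        rw [h0, zero_sub, norm_neg, norm_smul, Real.norm_eq_abs, abs_of_pos ht0]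
        exact htε
      have hHz := H (t • y) hnorm
      have hlhs : (∑ i : Fin d → Fin n, |(∏ k : Fin d, x (i k)) - ∏ k : Fin d, y (i k)| ^ p)
          = (∑ j : Fin n, |y j| ^ p) ^ d := by
        have hfc := s12_fcalc (n := n) hd p hp (fun j => y j) 0 1
        rw [show |(0:ℝ) ^ d - 1| ^ p = 1 by
          rw [zero_pow (by omega : d ≠ 0), zero_sub, abs_neg, abs_one, Real.one_rpow],
          one_mul] at hfc
        rw [← hfc]
        apply Finset.sum_congr rfl
        intro i _
        have h1 : (∏ k : Fin d, x (i k)) = ∏ k : Fin d, 0 * y (i k) := by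
          apply Finset.prod_congr rfl
          intro k _
          rw [h0, zero_mul]; rfl
        rw [h1, one_mul]
      have hrhs : (∑ i : Fin d → Fin n,
            |(∏ k : Fin d, (t • y : EuclideanSpace ℝ (Fin n)) (i k))
              - ∏ k : Fin d, y (i k)| ^ p)
          = |t ^ d - 1| ^ p * (∑ j : Fin n, |y j| ^ p) ^ d := by
        have hfc := s12_fcalc (n := n) hd p hp (fun j => y j) t 1
        rw [← hfc]
        apply Finset.sum_congr rfl
        intro i _
        have h1 : (∏ k : Fin d, (t • y : EuclideanSpace ℝ (Fin n)) (i k))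
            = ∏ k : Fin d, t * y (i k) := by
          apply Finset.prod_congr rfl
          intro k _
          rfl
        rw [h1, one_mul]
      rw [hlhs, hrhs] at hHz
      have htd0 : 0 < t ^ d := pow_pos ht0 d
      have htd1 : t ^ d ≤ 1 := pow_le_one₀ (le_of_lt ht0) ht1
      have habs : |t ^ d - 1| < 1 := by
        rw [abs_of_nonpos (by linarith)]
        linarith
      have hlt : |t ^ d - 1| ^ p < 1 :=
        Real.rpow_lt_one (abs_nonneg _) habs hppos
      nlinarith
    have hxj : ∃ j, x j ≠ 0 := by
      by_contra h
      push_neg at h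
      exact hx0 (by ext j; simp [h j])
    obtain ⟨jx, hjx⟩ := hxj
    -- criticality
    have crit := fun j => s12_crit hd p hp y x ε hε H j
    set A : ({k : Fin d // k ≠ (⟨0, hd⟩ : Fin d)} → Fin n) → ℝ :=
      fun i' => ∏ k', x (i' k') with hA
    set B : ({k : Fin d // k ≠ (⟨0, hd⟩ : Fin d)} → Fin n) → ℝ :=
      fun i' => ∏ k', y (i' k') with hB
    have hmin : ∀ j : Fin n, ∀ u : ℝ,
        (∑ i', |x j * A i' - y j * B i'| ^ p) ≤ ∑ i', |u * A i' - y j * B i'| ^ p :=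
      fun j => s12_phimin p hp A B (y j) (x j) (crit j)
    have hA0 : A (fun _ => jx) ≠ 0 := by
      rw [hA]
      exact Finset.prod_ne_zero_iff.2 (fun k' _ => hjx)
    set c : ℝ := x j₀ / y j₀ with hc
    have hxcy : ∀ j, x j = c * y j := by
      intro j
      by_cases hyj0 : y j = 0
      · have h2 := s12_phimin p hp A B (y j) 0 (by
          rw [hyj0]
          apply Finset.sum_eq_zero
          intro i' _
          simp [s12dpsi])
        have := s12_unique p hp A B (fun _ => jx) hA0 (y j) (x j) 0 (hmin j) h2
        rw [this, hyj0, mul_zero]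
      · set lam : ℝ := y j / y j₀ with hlam
        have hlam0 : lam ≠ 0 := div_ne_zero hyj0 hj₀
        have hyy : y j = lam * y j₀ := by
          rw [hlam, div_mul_cancel₀ _ hj₀]
        have h2 : ∀ u : ℝ, (∑ i', |(lam * x j₀) * A i' - y j * B i'| ^ p)
            ≤ ∑ i', |u * A i' - y j * B i'| ^ p := by
          intro u
          have hscale1 := s12_phiscale p A B (y j₀) lam (x j₀)
          have hscale2 := s12_phiscale p A B (y j₀) lam (u / lam)
          rw [hyy]
          calc (∑ i', |(lam * x j₀) * A i' - (lam * y j₀) * B i'| ^ p)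
              = |lam| ^ p * ∑ i', |x j₀ * A i' - y j₀ * B i'| ^ p := hscale1
            _ ≤ |lam| ^ p * ∑ i', |(u / lam) * A i' - y j₀ * B i'| ^ p :=
                mul_le_mul_of_nonneg_left (hmin j₀ (u / lam))
                  (Real.rpow_nonneg (abs_nonneg lam) p)
            _ = ∑ i', |(lam * (u / lam)) * A i' - (lam * y j₀) * B i'| ^ p := hscale2.symm
            _ = ∑ i', |u * A i' - (lam * y j₀) * B i'| ^ p := by
                rw [mul_comm lam (u / lam), div_mul_cancel₀ u hlam0]
        have := s12_unique p hp A B (fun _ => jx) hA0 (y j) (x j) (lam * x j₀) (hmin j) h2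
        rw [this, hlam, hc]
        field_simp
    have hc0 : c ≠ 0 := by
      intro h
      apply hx0
      ext j
      simp [hxcy j, h]
    have hxy : x = (c • y : EuclideanSpace ℝ (Fin n)) := by
      ext j
      rw [hxcy j]; rfl
    have hcd : c ^ d = 1 := by
      apply s12_scaling hd p hp ((∑ j : Fin n, |y j| ^ p) ^ d) hPd c hc0 (ε / ‖y‖)
        (div_pos hε hynorm)
      intro s hs
      have hz : ‖x - (s • y : EuclideanSpace ℝ (Fin n))‖ ≤ ε := by
        rw [hxy, ← sub_smul, norm_smul, Real.norm_eq_abs]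
        calc |c - s| * ‖y‖ ≤ (ε / ‖y‖) * ‖y‖ :=
              mul_le_mul_of_nonneg_right hs (norm_nonneg y)
          _ = ε := div_mul_cancel₀ ε (ne_of_gt hynorm)
      have hH := H (s • y) hz
      have hlhs : (∑ i : Fin d → Fin n, |(∏ k : Fin d, x (i k)) - ∏ k : Fin d, y (i k)| ^ p)
          = |c ^ d - 1| ^ p * (∑ j : Fin n, |y j| ^ p) ^ d := by
        have hfc := s12_fcalc (n := n) hd p hp (fun j => y j) c 1
        rw [← hfc]
        apply Finset.sum_congr rfl
        intro i _
        have h1 : (∏ k : Fin d, x (i k)) = ∏ k : Fin d, c * y (i k) :=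
          Finset.prod_congr rfl fun k _ => hxcy (i k)
        rw [h1, one_mul]
      have hrhs : (∑ i : Fin d → Fin n,
            |(∏ k : Fin d, (s • y : EuclideanSpace ℝ (Fin n)) (i k))
              - ∏ k : Fin d, y (i k)| ^ p)
          = |s ^ d - 1| ^ p * (∑ j : Fin n, |y j| ^ p) ^ d := by
        have hfc := s12_fcalc (n := n) hd p hp (fun j => y j) s 1
        rw [← hfc]
        apply Finset.sum_congr rfl
        intro i _
        have h1 : (∏ k : Fin d, (s • y : EuclideanSpace ℝ (Fin n)) (i k))
            = ∏ k : Fin d, s * y (i k) :=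
          Finset.prod_congr rfl fun k _ => rfl
        rw [h1, one_mul]
      rw [hlhs, hrhs] at hH
      exact hH
    constructor
    · intro hodd
      have hc1 : c = 1 := by
        apply (Odd.strictMono_pow (R := ℝ) hodd).injective
        simp only [hcd, one_pow]
      ext j
      rw [hxcy j, hc1, one_mul]
    · intro _
      have habs : |c| = 1 := by
        have h1 : |c| ^ d = 1 := by rw [← abs_pow, hcd, abs_one]
        by_contra hne
        rcases lt_or_gt_of_ne hne with hlt | hgt
        · have := pow_lt_one₀ (abs_nonneg c) hlt (by omega : d ≠ 0)
          rw [h1] at this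
          exact lt_irrefl 1 this
        · have := one_lt_pow₀ hgt (by omega : d ≠ 0)
          rw [h1] at this
          exact lt_irrefl 1 this
      rcases (abs_eq (by norm_num : (0:ℝ) ≤ 1)).1 habs with h1 | h1
      · left
        ext j
        rw [hxcy j, h1, one_mul]
      · right
        ext j
        rw [hxcy j, h1]
        simp
end

section
/- Fix y ∈ ℝⁿ and an integer d ≥ 1. The function f₁(x) = Σ_{i₁,…,i_d=1}^n |x_{i₁}⋯x_{i_d} − y_{i₁}⋯y_{i_d}| on ℝⁿ has no spurious strict local minima: every strict local minimum of f₁ is a global minimum. -/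
open Finset

namespace Stmt13Aux

noncomputable def S {n : ℕ} (d : ℕ) (y z : Fin n → ℝ) : ℝ :=
  ∑ i : Fin d → Fin n, |(∏ k : Fin d, z (i k)) - ∏ k : Fin d, y (i k)|

lemma S_nonneg {n : ℕ} (d : ℕ) (y z : Fin n → ℝ) : 0 ≤ S d y z :=
  Finset.sum_nonneg fun _ _ => abs_nonneg _

lemma tensorize {n : ℕ} (d : ℕ) (v : Fin n → ℝ) :
    (∑ j, v j) ^ d = ∑ i : Fin d → Fin n, ∏ k : Fin d, v (i k) := Fintype.sum_pow v d

lemma abs_sub_of_mul_nonpos {u v : ℝ} (h : u * v ≤ 0) : |u - v| = |u| + |v| := by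
  rcases mul_nonpos_iff.mp h with ⟨hu, hv⟩ | ⟨hu, hv⟩
  · rw [abs_of_nonpos hv, abs_of_nonneg hu, abs_of_nonneg (by linarith)]; ring
  · rw [abs_of_nonpos hu, abs_of_nonneg hv, abs_of_nonpos (by linarith)]; ring

lemma master_term {P Q A T : ℝ} (hA : |A| = |P|) (hAPQ : 0 ≤ A * P * Q)
    (hT0 : 0 < T) (hT1 : T ≤ 1) : |P * T - Q| ≤ |P - Q| + (A - A * T) := by
  rcases le_or_gt 0 A with h0 | h0
  · have hA' : A = |P| := by rw [← hA, abs_of_nonneg h0]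
    have h1 : |P * T - Q| ≤ |P * T - P| + |P - Q| := abs_sub_le _ _ _
    have h2 : |P * T - P| = A - A * T := by
      rw [show P * T - P = P * (T - 1) by ring, abs_mul,
        abs_of_nonpos (by linarith : T - 1 ≤ 0), hA']
      ring
    linarith
  · have hA' : A = -|P| := by
      have h := abs_of_neg h0
      linarith [hA, h]
    have hP : 0 < |P| := by rw [← hA]; rw [abs_of_neg h0]; linarith
    have hPQ : P * Q ≤ 0 := by nlinarith
    have h1 : |P * T - Q| = |P * T| + |Q| := by
      apply abs_sub_of_mul_nonpos
      have : P * T * Q = T * (P * Q) := by ring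
      rw [this]
      exact mul_nonpos_iff.mpr (Or.inl ⟨hT0.le, hPQ⟩)
    have h2 : |P - Q| = |P| + |Q| := abs_sub_of_mul_nonpos hPQ
    have h3 : |P * T| = |P| * T := by rw [abs_mul, abs_of_pos hT0]
    have h4 : A * T = -(|P| * T) := by rw [hA']; ring
    rw [h1, h2, h3]
    linarith

/-- Master inequality: multiplicative shrink moves. -/
lemma master_sum {n : ℕ} (d : ℕ) (x y a τ : Fin n → ℝ)
    (h1 : ∀ j, |a j| = |x j|) (h2 : ∀ j, 0 ≤ a j * (x j * y j))
    (h3 : ∀ j, 0 < τ j) (h4 : ∀ j, τ j ≤ 1) :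
    S d y (fun j => x j * τ j) ≤ S d y x + ((∑ j, a j) ^ d - (∑ j, a j * τ j) ^ d) := by
  have key : ∀ i : Fin d → Fin n,
      |(∏ k : Fin d, (x (i k) * τ (i k))) - ∏ k : Fin d, y (i k)| ≤
        |(∏ k : Fin d, x (i k)) - ∏ k : Fin d, y (i k)| +
          ((∏ k : Fin d, a (i k)) - ∏ k : Fin d, (a (i k) * τ (i k))) := by
    intro i
    have e1 : (∏ k : Fin d, (x (i k) * τ (i k))) =
        (∏ k : Fin d, x (i k)) * ∏ k : Fin d, τ (i k) := Finset.prod_mul_distrib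
    have e2 : (∏ k : Fin d, (a (i k) * τ (i k))) =
        (∏ k : Fin d, a (i k)) * ∏ k : Fin d, τ (i k) := Finset.prod_mul_distrib
    rw [e1, e2]
    apply master_term
    · rw [Finset.abs_prod, Finset.abs_prod]
      exact Finset.prod_congr rfl fun k _ => h1 (i k)
    · have e3 : (∏ k : Fin d, a (i k)) * (∏ k : Fin d, x (i k)) * (∏ k : Fin d, y (i k)) =
          ∏ k : Fin d, (a (i k) * (x (i k) * y (i k))) := by
        rw [Finset.prod_mul_distrib, Finset.prod_mul_distrib]; ring
      rw [e3]
      exact Finset.prod_nonneg fun k _ => h2 (i k)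
    · exact Finset.prod_pos fun k _ => h3 (i k)
    · exact Finset.prod_le_one (fun k _ => (h3 (i k)).le) fun k _ => h4 (i k)
  calc S d y (fun j => x j * τ j) ≤
      ∑ i : Fin d → Fin n, (|(∏ k : Fin d, x (i k)) - ∏ k : Fin d, y (i k)| +
          ((∏ k : Fin d, a (i k)) - ∏ k : Fin d, (a (i k) * τ (i k)))) :=
        Finset.sum_le_sum fun i _ => key i
    _ = S d y x + ((∑ j, a j) ^ d - (∑ j, a j * τ j) ^ d) := by
        rw [Finset.sum_add_distrib, Finset.sum_sub_distrib, tensorize, tensorize]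
        rfl

lemma norm_le_sum_abs {n : ℕ} (w : EuclideanSpace ℝ (Fin n)) : ‖w‖ ≤ ∑ j, |w j| := by
  rw [EuclideanSpace.norm_eq]
  have h1 : (∑ j, ‖w j‖ ^ 2) ≤ (∑ j, |w j|) ^ 2 := by
    have hb : ∀ j ∈ (univ : Finset (Fin n)), ‖w j‖ ^ 2 ≤ |w j| * ∑ j', |w j'| := by
      intro j _
      rw [Real.norm_eq_abs, sq]
      exact mul_le_mul_of_nonneg_left
        (Finset.single_le_sum (fun k _ => abs_nonneg (w k)) (mem_univ j)) (abs_nonneg _)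
    calc (∑ j, ‖w j‖ ^ 2) ≤ ∑ j, |w j| * ∑ j', |w j'| := Finset.sum_le_sum hb
      _ = (∑ j, |w j|) ^ 2 := by rw [← Finset.sum_mul, sq]
  calc Real.sqrt (∑ j, ‖w j‖ ^ 2) ≤ Real.sqrt ((∑ j, |w j|) ^ 2) := Real.sqrt_le_sqrt h1
    _ = ∑ j, |w j| := Real.sqrt_sq (Finset.sum_nonneg fun j _ => abs_nonneg _)

lemma exp_between {s t : ℝ} (h0 : 0 ≤ t) (h1 : t ≤ 1) :
    |Real.exp (t * s) - Real.exp s| ≤ |1 - Real.exp s| := by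
  rcases le_or_gt 0 s with hs | hs
  · have hts : t * s ≤ s := by nlinarith
    have h2 : Real.exp (t * s) ≤ Real.exp s := Real.exp_le_exp.mpr hts
    have h3 : 1 ≤ Real.exp (t * s) := by
      rw [show (1:ℝ) = Real.exp 0 by simp]
      exact Real.exp_le_exp.mpr (by positivity)
    rw [abs_of_nonpos (by linarith), abs_of_nonpos (by linarith)]
    linarith
  · have hts : s ≤ t * s := by nlinarith
    have h2 : Real.exp s ≤ Real.exp (t * s) := Real.exp_le_exp.mpr hts
    have h3 : Real.exp (t * s) ≤ 1 := by
      rw [show (1:ℝ) = Real.exp 0 by simp]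
      exact Real.exp_le_exp.mpr (by nlinarith)
    rw [abs_of_nonneg (by linarith), abs_of_nonneg (by linarith)]
    linarith

lemma move_master {n d : ℕ} {x y : EuclideanSpace ℝ (Fin n)} {ε : ℝ} (hε : 0 < ε)
    (hs : ∀ w : EuclideanSpace ℝ (Fin n), w ≠ x → (∑ j, |x j - w j|) ≤ ε → S d y x < S d y w)
    (a : Fin n → ℝ) (j₀ : Fin n)
    (h1 : ∀ j, |a j| = |x j|) (h2 : ∀ j, 0 ≤ a j * (x j * y j)) (hj₀ : x j₀ ≠ 0)
    (hE : ∀ t : ℝ, 0 < t → t ≤ 1/2 → (∑ j, a j) ^ d ≤ ((∑ j, a j) - t * a j₀) ^ d) :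
    False := by
  set t := min (1/2 : ℝ) (ε / (1 + |x j₀|)) with ht
  have habs : (0:ℝ) < 1 + |x j₀| := by positivity
  have ht0 : 0 < t := lt_min (by norm_num) (div_pos hε habs)
  have ht2 : t ≤ 1/2 := min_le_left _ _
  have htε : t * |x j₀| ≤ ε := by
    have h5 : t ≤ ε / (1 + |x j₀|) := min_le_right _ _
    have h6 : 0 ≤ ε / (1 + |x j₀|) := (div_pos hε habs).le
    calc t * |x j₀| ≤ (ε / (1 + |x j₀|)) * |x j₀| :=
          mul_le_mul_of_nonneg_right h5 (abs_nonneg _)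
      _ ≤ (ε / (1 + |x j₀|)) * (1 + |x j₀|) :=
          mul_le_mul_of_nonneg_left (by linarith) h6
      _ = ε := by field_simp
  set τ : Fin n → ℝ := fun j => if j = j₀ then 1 - t else 1 with hτ
  have h3 : ∀ j, 0 < τ j := by
    intro j; by_cases h : j = j₀ <;> simp [hτ, h] <;> linarith
  have h4 : ∀ j, τ j ≤ 1 := by
    intro j; by_cases h : j = j₀ <;> simp [hτ, h] <;> linarith
  set w : EuclideanSpace ℝ (Fin n) := WithLp.toLp 2 (fun j => x j * τ j) with hw
  have hwj : ∀ j, w j = x j * τ j := fun j => rfl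
  have hwne : w ≠ x := by
    intro h
    have h6 : w j₀ = x j₀ := by rw [h]
    rw [hwj] at h6
    simp only [hτ, if_pos rfl] at h6
    have h7 : x j₀ * t = 0 := by nlinarith [h6]
    rcases mul_eq_zero.mp h7 with h' | h'
    exacts [hj₀ h', absurd h' (ne_of_gt ht0)]
  have hdist : (∑ j, |x j - w j|) ≤ ε := by
    have hterm : ∀ j, |x j - w j| = if j = j₀ then t * |x j₀| else 0 := by
      intro j; rw [hwj]; by_cases h : j = j₀
      · subst h
        simp only [hτ, if_pos rfl]
        rw [show x j - x j * (1 - t) = x j * t by ring, abs_mul, abs_of_pos ht0]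
        simp only [if_true]
        ring
      · simp [hτ, h]
    rw [Finset.sum_congr rfl (fun j _ => hterm j),
      Finset.sum_ite_eq' univ j₀ (fun _ => t * |x j₀|)]
    simpa using htε
  have hsum : (∑ j, a j * τ j) = (∑ j, a j) - t * a j₀ := by
    have hterm : ∀ j, a j * τ j = a j - (if j = j₀ then t * a j₀ else 0) := by
      intro j; by_cases h : j = j₀
      · subst h; simp only [hτ, if_pos rfl, if_true]; ring
      · simp [hτ, h]
    rw [Finset.sum_congr rfl (fun j _ => hterm j), Finset.sum_sub_distrib]
    congr 1
    rw [Finset.sum_ite_eq' univ j₀ (fun _ => t * a j₀)]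
    simp
  have hle : S d y w ≤ S d y x := by
    have hM := master_sum d x y a τ h1 h2 h3 h4
    have hE' := hE t ht0 ht2
    rw [hsum] at hM
    calc S d y w = S d y (fun j => x j * τ j) := rfl
      _ ≤ S d y x + ((∑ j, a j) ^ d - ((∑ j, a j) - t * a j₀) ^ d) := hM
      _ ≤ S d y x := by linarith
  exact absurd (hs w hwne hdist) (not_lt.mpr hle)

/-- canonical sign vector -/
noncomputable def sgnvec {n : ℕ} (x y : Fin n → ℝ) : Fin n → ℝ :=
  fun j => if 0 < x j * y j then |x j| else -|x j|

lemma sgnvec_abs {n : ℕ} (x y : Fin n → ℝ) : ∀ j, |sgnvec x y j| = |x j| := by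
  intro j; unfold sgnvec; by_cases h : 0 < x j * y j <;> simp [h, abs_abs]

lemma sgnvec_sign {n : ℕ} (x y : Fin n → ℝ) : ∀ j, 0 ≤ sgnvec x y j * (x j * y j) := by
  intro j; unfold sgnvec; by_cases h : 0 < x j * y j
  · simp only [h, if_true]; positivity
  · simp only [h, if_false]; push_neg at h
    have : (0:ℝ) ≤ -(x j * y j) := by linarith
    calc (0:ℝ) ≤ |x j| * (-(x j * y j)) := mul_nonneg (abs_nonneg _) this
      _ = -|x j| * (x j * y j) := by ring

lemma fact_odd {n d : ℕ} {x y : EuclideanSpace ℝ (Fin n)} {ε : ℝ} (hε : 0 < ε)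
    (hs : ∀ w : EuclideanSpace ℝ (Fin n), w ≠ x → (∑ j, |x j - w j|) ≤ ε → S d y x < S d y w)
    (hodd : Odd d) : ∀ j, x j ≠ 0 → 0 < x j * y j := by
  intro j₀ hj₀
  by_contra hle
  push_neg at hle
  have ha0 : sgnvec x y j₀ = -|x j₀| := by
    unfold sgnvec; rw [if_neg (not_lt.mpr hle)]
  refine move_master hε hs (sgnvec x y) j₀ (sgnvec_abs x y) (sgnvec_sign x y) hj₀ ?_
  intro t ht0 ht2
  apply (hodd.strictMono_pow (R := ℝ)).monotone
  rw [ha0]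
  have : (0:ℝ) ≤ t * |x j₀| := mul_nonneg ht0.le (abs_nonneg _)
  linarith

lemma fact_even {n d : ℕ} {x y : EuclideanSpace ℝ (Fin n)} {ε : ℝ} (hε : 0 < ε)
    (hs : ∀ w : EuclideanSpace ℝ (Fin n), w ≠ x → (∑ j, |x j - w j|) ≤ ε → S d y x < S d y w)
    (heven : Even d) : ∀ jp jm, 0 < x jp * y jp → x jm * y jm < 0 → False := by
  intro jp jm hjp hjm
  have hxjp : x jp ≠ 0 := by
    intro h; rw [h] at hjp; simp at hjp
  have hxjm : x jm ≠ 0 := by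
    intro h; rw [h] at hjm; simp at hjm
  have hap : sgnvec x y jp = |x jp| := by unfold sgnvec; rw [if_pos hjp]
  have ham : sgnvec x y jm = -|x jm| := by
    unfold sgnvec; rw [if_neg (not_lt.mpr hjm.le)]
  have hpp : 0 < |x jp| := abs_pos.mpr hxjp
  have hpm : 0 < |x jm| := abs_pos.mpr hxjm
  rcases le_or_gt 0 (∑ j, sgnvec x y j) with hE | hE
  · refine move_master hε hs (sgnvec x y) jm (sgnvec_abs x y) (sgnvec_sign x y) hxjm ?_
    intro t ht0 ht2
    apply pow_le_pow_left₀ hE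
    rw [ham]
    nlinarith
  · refine move_master hε hs (sgnvec x y) jp (sgnvec_abs x y) (sgnvec_sign x y) hxjp ?_
    intro t ht0 ht2
    have h7 : (∑ j, sgnvec x y j) - t * sgnvec x y jp < 0 := by
      rw [hap]; nlinarith
    rw [← Even.pow_abs heven (∑ j, sgnvec x y j),
      ← Even.pow_abs heven ((∑ j, sgnvec x y j) - t * sgnvec x y jp)]
    apply pow_le_pow_left₀ (abs_nonneg _)
    rw [abs_of_neg hE, abs_of_neg h7, hap]
    nlinarith

lemma move_aligned {n d : ℕ} {x y : EuclideanSpace ℝ (Fin n)} {ε : ℝ} (hε : 0 < ε)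
    (hs : ∀ w : EuclideanSpace ℝ (Fin n), w ≠ x → (∑ j, |x j - w j|) ≤ ε → S d y x < S d y w)
    (hPQ : ∀ i : Fin d → Fin n, 0 ≤ (∏ k : Fin d, x (i k)) * ∏ k : Fin d, y (i k))
    (j₁ : Fin n) (hj₁ : x j₁ ≠ 0) (hbad : y j₁ = 0 ∨ y j₁ ^ 2 ≠ x j₁ ^ 2) : False := by
  classical
  set K : Fin n → ℝ := fun j => if x j = 0 ∨ y j = 0 then 0 else Real.log (|y j| / |x j|)
    with hK
  set c : ℝ := 1 + d * ∑ j, |K j| with hc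
  have hKsum : 0 ≤ ∑ j, |K j| := Finset.sum_nonneg fun j _ => abs_nonneg _
  have hd0 : (0:ℝ) ≤ d := Nat.cast_nonneg d
  have hc1 : 1 ≤ c := by rw [hc]; nlinarith
  set L : Fin n → ℝ := fun j =>
    if x j = 0 then 0 else if y j = 0 then -c else Real.log (|y j| / |x j|) with hL
  have hLj₁ : L j₁ ≠ 0 := by
    rw [hL]; simp only [if_neg hj₁]
    by_cases hy : y j₁ = 0
    · rw [if_pos hy]; exact ne_of_lt (by linarith)
    · rw [if_neg hy]
      have hsq : y j₁ ^ 2 ≠ x j₁ ^ 2 := hbad.resolve_left hy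
      have hratio : |y j₁| / |x j₁| ≠ 1 := by
        intro h
        have hxp : |x j₁| ≠ 0 := ne_of_gt (abs_pos.mpr hj₁)
        have h2 : |y j₁| = |x j₁| := by
          field_simp at h; exact h
        exact hsq (by rw [← sq_abs (y j₁), ← sq_abs (x j₁), h2])
      have hratio_pos : 0 < |y j₁| / |x j₁| :=
        div_pos (abs_pos.mpr hy) (abs_pos.mpr hj₁)
      exact Real.log_ne_zero_of_pos_of_ne_one hratio_pos hratio
  set C : ℝ := 1 + ∑ j, |L j| with hC
  set B : ℝ := ∑ j, |x j| * |L j| with hB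
  have hLsum : 0 ≤ ∑ j, |L j| := Finset.sum_nonneg fun j _ => abs_nonneg _
  have hC0 : 0 < C := by rw [hC]; linarith
  have hB0 : 0 ≤ B := Finset.sum_nonneg fun j _ => mul_nonneg (abs_nonneg _) (abs_nonneg _)
  have h2B : (0:ℝ) < 1 + 2 * B := by linarith
  set t : ℝ := min (1 / C) (ε / (1 + 2 * B)) with htdef
  have ht0 : 0 < t := lt_min (by positivity) (div_pos hε h2B)
  have ht1 : t ≤ 1 := by
    have h5 : t ≤ 1 / C := min_le_left _ _
    have h6 : 1 / C ≤ 1 := by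
      rw [div_le_one hC0]; linarith
    linarith
  set w : EuclideanSpace ℝ (Fin n) := WithLp.toLp 2 (fun j => x j * Real.exp (t * L j)) with hw
  have hwj : ∀ j, w j = x j * Real.exp (t * L j) := fun j => rfl
  have key : ∀ i : Fin d → Fin n,
      |(∏ k : Fin d, w (i k)) - ∏ k : Fin d, y (i k)| ≤
        |(∏ k : Fin d, x (i k)) - ∏ k : Fin d, y (i k)| := by
    intro i
    have e1 : (∏ k : Fin d, w (i k)) =
        (∏ k : Fin d, x (i k)) * Real.exp (t * ∑ k : Fin d, L (i k)) := by
      calc (∏ k : Fin d, w (i k))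
          = (∏ k : Fin d, x (i k)) * ∏ k : Fin d, Real.exp (t * L (i k)) :=
            Finset.prod_mul_distrib
        _ = (∏ k : Fin d, x (i k)) * Real.exp (∑ k : Fin d, t * L (i k)) := by
            rw [Real.exp_sum]
        _ = (∏ k : Fin d, x (i k)) * Real.exp (t * ∑ k : Fin d, L (i k)) := by
            rw [Finset.mul_sum]
    by_cases hP : (∏ k : Fin d, x (i k)) = 0
    · rw [e1, hP, zero_mul]
    · have hxik : ∀ k, x (i k) ≠ 0 := fun k =>
        Finset.prod_ne_zero_iff.mp hP k (mem_univ k)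
      by_cases hQ : (∏ k : Fin d, y (i k)) = 0
      · obtain ⟨k₀, _, hk₀⟩ := Finset.prod_eq_zero_iff.mp hQ
        have hS'le : (∑ k : Fin d, L (i k)) ≤ -1 := by
          have hL0 : L (i k₀) = -c := by
            rw [hL]; simp only [if_neg (hxik k₀), if_pos hk₀]
          have hsum : (∑ k : Fin d, L (i k)) =
              L (i k₀) + ∑ k ∈ univ.erase k₀, L (i k) :=
            (Finset.add_sum_erase _ _ (mem_univ k₀)).symm
          have hbound : ∀ k ∈ univ.erase k₀, L (i k) ≤ ∑ j, |K j| := by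
            intro k _
            rw [hL]
            simp only [if_neg (hxik k)]
            by_cases hy : y (i k) = 0
            · rw [if_pos hy]; linarith
            · rw [if_neg hy]
              have hKk : K (i k) = Real.log (|y (i k)| / |x (i k)|) := by
                rw [hK]
                simp only [if_neg (not_or.mpr ⟨hxik k, hy⟩)]
              calc Real.log (|y (i k)| / |x (i k)|) = K (i k) := hKk.symm
                _ ≤ |K (i k)| := le_abs_self _
                _ ≤ ∑ j, |K j| :=
                    Finset.single_le_sum (fun j _ => abs_nonneg (K j)) (mem_univ _)
          have h8 : (∑ k ∈ univ.erase k₀, L (i k)) ≤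
              (univ.erase k₀).card • (∑ j, |K j|) :=
            Finset.sum_le_card_nsmul _ _ _ hbound
          have h9 : ((univ.erase k₀).card : ℝ) ≤ d := by
            have h10 : (univ.erase k₀).card ≤ (univ : Finset (Fin d)).card :=
              Finset.card_le_card (Finset.erase_subset _ _)
            have h11 : (univ : Finset (Fin d)).card = d := by simp
            exact_mod_cast h11 ▸ h10
          have h12 : (∑ k ∈ univ.erase k₀, L (i k)) ≤ d * (∑ j, |K j|) := by
            rw [nsmul_eq_mul] at h8
            calc (∑ k ∈ univ.erase k₀, L (i k)) ≤
                ((univ.erase k₀).card : ℝ) * (∑ j, |K j|) := h8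
              _ ≤ d * (∑ j, |K j|) := mul_le_mul_of_nonneg_right h9 hKsum
          rw [hsum, hL0, hc]
          linarith
        rw [e1, hQ, sub_zero, sub_zero, abs_mul]
        have hexple : Real.exp (t * ∑ k : Fin d, L (i k)) ≤ 1 := by
          rw [show (1:ℝ) = Real.exp 0 by simp]
          apply Real.exp_le_exp.mpr
          nlinarith
        have habs_exp : |Real.exp (t * ∑ k : Fin d, L (i k))| =
            Real.exp (t * ∑ k : Fin d, L (i k)) := abs_of_pos (Real.exp_pos _)
        nlinarith [abs_nonneg (∏ k : Fin d, x (i k))]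
      · have hyik : ∀ k, y (i k) ≠ 0 := fun k =>
          Finset.prod_ne_zero_iff.mp hQ k (mem_univ k)
        have hexpS : Real.exp (∑ k : Fin d, L (i k)) =
            |∏ k : Fin d, y (i k)| / |∏ k : Fin d, x (i k)| := by
          have hLk : ∀ k ∈ (univ : Finset (Fin d)), L (i k) =
              Real.log (|y (i k)| / |x (i k)|) := by
            intro k _
            rw [hL]; simp only [if_neg (hxik k), if_neg (hyik k)]
          rw [Finset.sum_congr rfl hLk, Real.exp_sum]
          have hexplog : ∀ k ∈ (univ : Finset (Fin d)),
              Real.exp (Real.log (|y (i k)| / |x (i k)|)) = |y (i k)| / |x (i k)| := by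
            intro k _
            exact Real.exp_log (div_pos (abs_pos.mpr (hyik k)) (abs_pos.mpr (hxik k)))
          rw [Finset.prod_congr rfl hexplog, Finset.prod_div_distrib,
            ← Finset.abs_prod, ← Finset.abs_prod]
        have hPQpos : 0 < (∏ k : Fin d, x (i k)) * ∏ k : Fin d, y (i k) :=
          lt_of_le_of_ne (hPQ i) (Ne.symm (mul_ne_zero hP hQ))
        have hQP : (∏ k : Fin d, y (i k)) =
            (∏ k : Fin d, x (i k)) * Real.exp (∑ k : Fin d, L (i k)) := by
          rw [hexpS]
          rcases lt_trichotomy (∏ k : Fin d, x (i k)) 0 with h | h | h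
          · have hQneg : (∏ k : Fin d, y (i k)) < 0 := by nlinarith
            rw [abs_of_neg hQneg, abs_of_neg h]; field_simp
          · exact absurd h hP
          · have hQpos : 0 < (∏ k : Fin d, y (i k)) := by nlinarith
            rw [abs_of_pos hQpos, abs_of_pos h]; field_simp
        rw [e1, hQP,
          show (∏ k : Fin d, x (i k)) * Real.exp (t * ∑ k : Fin d, L (i k)) -
              (∏ k : Fin d, x (i k)) * Real.exp (∑ k : Fin d, L (i k)) =
            (∏ k : Fin d, x (i k)) *
              (Real.exp (t * ∑ k : Fin d, L (i k)) - Real.exp (∑ k : Fin d, L (i k)))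
            by ring,
          show (∏ k : Fin d, x (i k)) -
              (∏ k : Fin d, x (i k)) * Real.exp (∑ k : Fin d, L (i k)) =
            (∏ k : Fin d, x (i k)) * (1 - Real.exp (∑ k : Fin d, L (i k))) by ring,
          abs_mul, abs_mul]
        exact mul_le_mul_of_nonneg_left (exp_between ht0.le ht1) (abs_nonneg _)
  have hle : S d y w ≤ S d y x := Finset.sum_le_sum fun i _ => key i
  have hwne : w ≠ x := by
    intro h
    have h6 : w j₁ = x j₁ := by rw [h]
    rw [hwj] at h6
    have h7 : Real.exp (t * L j₁) = 1 := by
      have h8 : x j₁ * Real.exp (t * L j₁) = x j₁ * 1 := by rw [mul_one]; exact h6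
      exact mul_left_cancel₀ hj₁ h8
    have h9 : t * L j₁ = 0 := by
      have h8' : Real.exp (t * L j₁) = Real.exp 0 := by rw [h7, Real.exp_zero]
      exact Real.exp_injective h8'
    rcases mul_eq_zero.mp h9 with h' | h'
    exacts [absurd h' (ne_of_gt ht0), hLj₁ h']
  have hdist : (∑ j, |x j - w j|) ≤ ε := by
    have hterm : ∀ j, |x j - w j| ≤ 2 * t * (|x j| * |L j|) := by
      intro j
      have e2 : x j - w j = x j * -(Real.exp (t * L j) - 1) := by rw [hwj]; ring
      rw [e2, abs_mul, abs_neg]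
      have hLC : |L j| ≤ C - 1 := by
        rw [hC]
        have := Finset.single_le_sum (fun j' (_ : j' ∈ univ) => abs_nonneg (L j')) (mem_univ j)
        linarith
      have harg : |t * L j| ≤ 1 := by
        rw [abs_mul, abs_of_pos ht0]
        have ht1C : t ≤ 1 / C := min_le_left _ _
        have h13 : t * |L j| ≤ (1/C) * C := by
          apply mul_le_mul ht1C (by linarith) (abs_nonneg _) (by positivity)
        rw [one_div_mul_cancel (ne_of_gt hC0)] at h13
        exact h13
      have h14 := Real.abs_exp_sub_one_le harg
      calc |x j| * |Real.exp (t * L j) - 1| ≤ |x j| * (2 * |t * L j|) :=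
            mul_le_mul_of_nonneg_left h14 (abs_nonneg _)
        _ = 2 * t * (|x j| * |L j|) := by
            rw [abs_mul, abs_of_pos ht0]; ring
    calc (∑ j, |x j - w j|) ≤ ∑ j, 2 * t * (|x j| * |L j|) :=
          Finset.sum_le_sum fun j _ => hterm j
      _ = 2 * t * B := by rw [← Finset.mul_sum]
      _ ≤ ε := by
          have ht' : t ≤ ε / (1 + 2 * B) := min_le_right _ _
          have hu : (ε / (1 + 2 * B)) * (1 + 2 * B) = ε :=
            div_mul_cancel₀ ε (ne_of_gt h2B)
          have hupos : 0 ≤ ε / (1 + 2 * B) := (div_pos hε h2B).le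
          nlinarith
  exact absurd (hs w hwne hdist) (not_lt.mpr hle)

lemma move_offsupport {n d : ℕ} {x y : EuclideanSpace ℝ (Fin n)} {ε : ℝ} (hε : 0 < ε)
    (hs : ∀ w : EuclideanSpace ℝ (Fin n), w ≠ x → (∑ j, |x j - w j|) ≤ ε → S d y x < S d y w)
    (η : ℝ) (hη2 : η ^ 2 = 1) (hηd : η ^ d = 1)
    (hyx : ∀ j, x j ≠ 0 → y j = η * x j)
    (j₀ : Fin n) (hxj₀ : x j₀ = 0) (hyj₀ : y j₀ ≠ 0) : False := by
  classical
  have hη0 : η ≠ 0 := by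
    intro h; rw [h] at hη2; norm_num at hη2
  have hY : (0:ℝ) < 1 + ∑ j, |y j| := by
    have : 0 ≤ ∑ j, |y j| := Finset.sum_nonneg fun j _ => abs_nonneg _
    linarith
  set σ : ℝ := min (1/2 : ℝ) (ε / (1 + ∑ j, |y j|)) with hσdef
  have hσ0 : 0 < σ := lt_min (by norm_num) (div_pos hε hY)
  have hσ1 : σ ≤ 1 := le_trans (min_le_left _ _) (by norm_num)
  set w : EuclideanSpace ℝ (Fin n) :=
    WithLp.toLp 2 (fun j => if x j = 0 then η * σ * y j else x j) with hw
  have hwj : ∀ j, w j = if x j = 0 then η * σ * y j else x j := fun j => rfl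
  set cf : Fin n → ℝ := fun j => η * (if x j = 0 then σ else 1) with hcf
  have hzc : ∀ j, w j = cf j * y j := by
    intro j
    rw [hwj, hcf]
    by_cases hj : x j = 0
    · simp [hj]
    · simp only [if_neg hj, mul_one]
      have h2 : y j = η * x j := hyx j hj
      have h3 : η * y j = η ^ 2 * x j := by rw [h2]; ring
      rw [hη2, one_mul] at h3
      exact h3.symm
  have key : ∀ i : Fin d → Fin n,
      |(∏ k : Fin d, w (i k)) - ∏ k : Fin d, y (i k)| ≤
        |(∏ k : Fin d, x (i k)) - ∏ k : Fin d, y (i k)| := by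
    intro i
    have e1 : (∏ k : Fin d, w (i k)) =
        ((∏ k : Fin d, cf (i k)) * ∏ k : Fin d, y (i k)) := by
      rw [← Finset.prod_mul_distrib]
      exact Finset.prod_congr rfl fun k _ => hzc (i k)
    have e2 : (∏ k : Fin d, cf (i k)) =
        ∏ k : Fin d, (if x (i k) = 0 then σ else 1) := by
      rw [hcf]
      calc (∏ k : Fin d, η * (if x (i k) = 0 then σ else 1)) =
          (∏ _k : Fin d, η) * ∏ k : Fin d, (if x (i k) = 0 then σ else 1) :=
            Finset.prod_mul_distrib
        _ = η ^ d * ∏ k : Fin d, (if x (i k) = 0 then σ else 1) := by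
            rw [Finset.prod_const, Finset.card_univ, Fintype.card_fin]
        _ = ∏ k : Fin d, (if x (i k) = 0 then σ else 1) := by rw [hηd, one_mul]
    set W := ∏ k : Fin d, (if x (i k) = 0 then σ else 1) with hW
    have hW0 : 0 < W := Finset.prod_pos fun k _ => by
      by_cases h : x (i k) = 0
      · simpa [h] using hσ0
      · simp [h]
    have hW1 : W ≤ 1 := Finset.prod_le_one
      (fun k _ => by
        by_cases h : x (i k) = 0
        · simpa [h] using hσ0.le
        · simp [h])
      (fun k _ => by
        by_cases h : x (i k) = 0
        · simpa [h] using hσ1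
        · simp [h])
    by_cases hP : (∏ k : Fin d, x (i k)) = 0
    · obtain ⟨k₀, _, hk₀⟩ := Finset.prod_eq_zero_iff.mp hP
      rw [e1, e2, hP, zero_sub, abs_neg]
      rw [show W * (∏ k : Fin d, y (i k)) - (∏ k : Fin d, y (i k)) =
        (W - 1) * ∏ k : Fin d, y (i k) by ring, abs_mul]
      have h4 : |W - 1| ≤ 1 := by rw [abs_le]; constructor <;> linarith
      calc |W - 1| * |∏ k : Fin d, y (i k)| ≤ 1 * |∏ k : Fin d, y (i k)| :=
            mul_le_mul_of_nonneg_right h4 (abs_nonneg _)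
        _ = |∏ k : Fin d, y (i k)| := one_mul _
    · have hxik : ∀ k, x (i k) ≠ 0 := fun k =>
        Finset.prod_ne_zero_iff.mp hP k (mem_univ k)
      have hWone : W = 1 := by
        rw [hW]
        calc (∏ k : Fin d, (if x (i k) = 0 then σ else 1)) =
            ∏ _k : Fin d, (1:ℝ) :=
              Finset.prod_congr rfl fun k _ => by rw [if_neg (hxik k)]
          _ = 1 := Finset.prod_const_one
      rw [e1, e2, hWone, one_mul, sub_self, abs_zero]
      exact abs_nonneg _
  have hle : S d y w ≤ S d y x := Finset.sum_le_sum fun i _ => key i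
  have hwne : w ≠ x := by
    intro h
    have h6 : w j₀ = x j₀ := by rw [h]
    rw [hwj, if_pos hxj₀, hxj₀] at h6
    have := mul_ne_zero (mul_ne_zero hη0 (ne_of_gt hσ0)) hyj₀
    exact this h6
  have hdist : (∑ j, |x j - w j|) ≤ ε := by
    have hterm : ∀ j, |x j - w j| ≤ σ * |y j| := by
      intro j
      rw [hwj]
      by_cases hj : x j = 0
      · rw [if_pos hj, hj, zero_sub, abs_neg, abs_mul, abs_mul]
        have hησ : |η| = 1 := by
          have := sq_abs η
          nlinarith [abs_nonneg η]
        rw [hησ, abs_of_pos hσ0, one_mul]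
      · rw [if_neg hj, sub_self, abs_zero]
        positivity
    calc (∑ j, |x j - w j|) ≤ ∑ j, σ * |y j| := Finset.sum_le_sum fun j _ => hterm j
      _ = σ * ∑ j, |y j| := by rw [← Finset.mul_sum]
      _ ≤ ε := by
          have h5 : σ ≤ ε / (1 + ∑ j, |y j|) := min_le_right _ _
          have hu : (ε / (1 + ∑ j, |y j|)) * (1 + ∑ j, |y j|) = ε :=
            div_mul_cancel₀ ε (ne_of_gt hY)
          have h6 : 0 ≤ ∑ j, |y j| := Finset.sum_nonneg fun j _ => abs_nonneg _
          nlinarith [(div_pos hε hY).le]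
  exact absurd (hs w hwne hdist) (not_lt.mpr hle)

lemma move_zero {n d : ℕ} {x y : EuclideanSpace ℝ (Fin n)} {ε : ℝ} (hε : 0 < ε) (hd : 1 ≤ d)
    (hs : ∀ w : EuclideanSpace ℝ (Fin n), w ≠ x → (∑ j, |x j - w j|) ≤ ε → S d y x < S d y w)
    (hx0 : ∀ j, x j = 0) (j₀ : Fin n) (hyj₀ : y j₀ ≠ 0) : False := by
  have hY : (0:ℝ) < 1 + ∑ j, |y j| := by
    have : 0 ≤ ∑ j, |y j| := Finset.sum_nonneg fun j _ => abs_nonneg _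
    linarith
  set σ : ℝ := min (1/2 : ℝ) (ε / (1 + ∑ j, |y j|)) with hσdef
  have hσ0 : 0 < σ := lt_min (by norm_num) (div_pos hε hY)
  have hσ1 : σ ≤ 1 := le_trans (min_le_left _ _) (by norm_num)
  set w : EuclideanSpace ℝ (Fin n) := WithLp.toLp 2 (fun j => σ * y j) with hw
  have hwj : ∀ j, w j = σ * y j := fun j => rfl
  have hk0 : (⟨0, hd⟩ : Fin d) ∈ (univ : Finset (Fin d)) := mem_univ _
  have key : ∀ i : Fin d → Fin n,
      |(∏ k : Fin d, w (i k)) - ∏ k : Fin d, y (i k)| ≤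
        |(∏ k : Fin d, x (i k)) - ∏ k : Fin d, y (i k)| := by
    intro i
    have hP : (∏ k : Fin d, x (i k)) = 0 :=
      Finset.prod_eq_zero hk0 (hx0 (i ⟨0, hd⟩))
    have e1 : (∏ k : Fin d, w (i k)) = σ ^ d * ∏ k : Fin d, y (i k) := by
      calc (∏ k : Fin d, w (i k)) = (∏ _k : Fin d, σ) * ∏ k : Fin d, y (i k) :=
            Finset.prod_mul_distrib
        _ = σ ^ d * ∏ k : Fin d, y (i k) := by
            rw [Finset.prod_const, Finset.card_univ, Fintype.card_fin]
    rw [e1, hP, zero_sub, abs_neg]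
    rw [show σ ^ d * (∏ k : Fin d, y (i k)) - (∏ k : Fin d, y (i k)) =
      (σ ^ d - 1) * ∏ k : Fin d, y (i k) by ring, abs_mul]
    have h4 : |σ ^ d - 1| ≤ 1 := by
      rw [abs_le]
      have h5 : 0 ≤ σ ^ d := pow_nonneg hσ0.le d
      have h6 : σ ^ d ≤ 1 := pow_le_one₀ hσ0.le hσ1
      constructor <;> linarith
    calc |σ ^ d - 1| * |∏ k : Fin d, y (i k)| ≤ 1 * |∏ k : Fin d, y (i k)| :=
          mul_le_mul_of_nonneg_right h4 (abs_nonneg _)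
      _ = |∏ k : Fin d, y (i k)| := one_mul _
  have hle : S d y w ≤ S d y x := Finset.sum_le_sum fun i _ => key i
  have hwne : w ≠ x := by
    intro h
    have h6 : w j₀ = x j₀ := by rw [h]
    rw [hwj, hx0 j₀] at h6
    exact (mul_ne_zero (ne_of_gt hσ0) hyj₀) h6
  have hdist : (∑ j, |x j - w j|) ≤ ε := by
    have hterm : ∀ j, |x j - w j| = σ * |y j| := by
      intro j
      rw [hwj, hx0 j, zero_sub, abs_neg, abs_mul, abs_of_pos hσ0]
    calc (∑ j, |x j - w j|) = ∑ j, σ * |y j| :=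
          Finset.sum_congr rfl fun j _ => hterm j
      _ = σ * ∑ j, |y j| := by rw [← Finset.mul_sum]
      _ ≤ ε := by
          have h5 : σ ≤ ε / (1 + ∑ j, |y j|) := min_le_right _ _
          have hu : (ε / (1 + ∑ j, |y j|)) * (1 + ∑ j, |y j|) = ε :=
            div_mul_cancel₀ ε (ne_of_gt hY)
          have h6 : 0 ≤ ∑ j, |y j| := Finset.sum_nonneg fun j _ => abs_nonneg _
          nlinarith [(div_pos hε hY).le]
  exact absurd (hs w hwne hdist) (not_lt.mpr hle)

end Stmt13Aux

/-- the function `f₁(x) = Σ_{i₁,…,i_d} |x_{i₁}⋯x_{i_d} − y_{i₁}⋯y_{i_d}|`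
has no spurious strict local minima: every strict local minimum is a global minimum. -/
theorem stmt_13 {n d : ℕ} (hd : 1 ≤ d) (y x : EuclideanSpace ℝ (Fin n))
    (hx : ∃ ε > 0, ∀ z : EuclideanSpace ℝ (Fin n), z ≠ x → ‖x - z‖ ≤ ε →
      (∑ i : Fin d → Fin n, |(∏ k : Fin d, x (i k)) - ∏ k : Fin d, y (i k)|) <
        ∑ i : Fin d → Fin n, |(∏ k : Fin d, z (i k)) - ∏ k : Fin d, y (i k)|) :
    ∀ z : EuclideanSpace ℝ (Fin n),
      (∑ i : Fin d → Fin n, |(∏ k : Fin d, x (i k)) - ∏ k : Fin d, y (i k)|) ≤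
        ∑ i : Fin d → Fin n, |(∏ k : Fin d, z (i k)) - ∏ k : Fin d, y (i k)| := by
  classical
  obtain ⟨ε, hε, hxy⟩ := hx
  intro z
  suffices hkey : ∀ i : Fin d → Fin n, (∏ k : Fin d, x (i k)) = ∏ k : Fin d, y (i k) by
    have h0 : (∑ i : Fin d → Fin n, |(∏ k : Fin d, x (i k)) - ∏ k : Fin d, y (i k)|) = 0 :=
      Finset.sum_eq_zero fun i _ => by rw [hkey i, sub_self, abs_zero]
    rw [h0]
    exact Finset.sum_nonneg fun i _ => abs_nonneg _
  have hs : ∀ w : EuclideanSpace ℝ (Fin n), w ≠ x → (∑ j, |x j - w j|) ≤ ε →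
      Stmt13Aux.S d y x < Stmt13Aux.S d y w := by
    intro w hw hwd
    have hn : ‖x - w‖ ≤ ∑ j, |x j - w j| := Stmt13Aux.norm_le_sum_abs (x - w)
    exact hxy w hw (le_trans hn hwd)
  by_cases hx0 : ∀ j, x j = 0
  · have hy0 : ∀ j, y j = 0 := by
      intro j; by_contra hyj
      exact Stmt13Aux.move_zero hε hd hs hx0 j hyj
    intro i
    exact Finset.prod_congr rfl fun k _ => by rw [hx0, hy0]
  · push_neg at hx0
    obtain ⟨j₁, hj₁⟩ := hx0
    have hηex : ∃ η : ℝ, η ^ d = 1 ∧ ∀ j, y j = η * x j := by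
      rcases Nat.even_or_odd d with hev | hod
      · -- even case
        by_cases hposex : ∃ jp, 0 < x jp * y jp
        · obtain ⟨jp, hjp⟩ := hposex
          have hnn : ∀ j, 0 ≤ x j * y j := by
            intro j; by_contra h; push_neg at h
            exact Stmt13Aux.fact_even hε hs hev jp j hjp h
          have hPQ : ∀ i : Fin d → Fin n,
              0 ≤ (∏ k : Fin d, x (i k)) * ∏ k : Fin d, y (i k) := by
            intro i
            rw [← Finset.prod_mul_distrib]
            exact Finset.prod_nonneg fun k _ => hnn (i k)
          have hal : ∀ j, x j ≠ 0 → y j ≠ 0 ∧ y j ^ 2 = x j ^ 2 := by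
            intro j hj
            by_contra hcon
            apply Stmt13Aux.move_aligned hε hs hPQ j hj
            rcases not_and_or.mp hcon with h | h
            · exact Or.inl (not_not.mp h)
            · exact Or.inr h
          have hyx_supp : ∀ j, x j ≠ 0 → y j = x j := by
            intro j hj
            obtain ⟨hy, hsq⟩ := hal j hj
            have h3 : 0 < x j * y j :=
              lt_of_le_of_ne (hnn j) (Ne.symm (mul_ne_zero hj hy))
            have h2 : (y j - x j) * (y j + x j) = 0 := by nlinarith
            rcases mul_eq_zero.mp h2 with h | h
            · linarith
            · exfalso; nlinarith
          have hoff : ∀ j, x j = 0 → y j = 0 := by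
            intro j hj
            by_contra hyj
            exact Stmt13Aux.move_offsupport hε hs 1 (by norm_num) (one_pow d)
              (fun j' hj' => by rw [hyx_supp j' hj', one_mul]) j hj hyj
          refine ⟨1, one_pow d, fun j => ?_⟩
          by_cases h : x j = 0
          · rw [h, hoff j h, mul_zero]
          · rw [hyx_supp j h, one_mul]
        · push_neg at hposex
          have hnp : ∀ j, x j * y j ≤ 0 := fun j => hposex j
          have hPQ : ∀ i : Fin d → Fin n,
              0 ≤ (∏ k : Fin d, x (i k)) * ∏ k : Fin d, y (i k) := by
            intro i
            rw [← Finset.prod_mul_distrib]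
            have e : ∀ k ∈ (Finset.univ : Finset (Fin d)),
                x (i k) * y (i k) = (-1) * (-(x (i k) * y (i k))) := fun k _ => by ring
            rw [Finset.prod_congr rfl e, Finset.prod_mul_distrib, Finset.prod_const,
              Finset.card_univ, Fintype.card_fin, Even.neg_one_pow hev, one_mul]
            exact Finset.prod_nonneg fun k _ => neg_nonneg.mpr (hnp (i k))
          have hal : ∀ j, x j ≠ 0 → y j ≠ 0 ∧ y j ^ 2 = x j ^ 2 := by
            intro j hj
            by_contra hcon
            apply Stmt13Aux.move_aligned hε hs hPQ j hj
            rcases not_and_or.mp hcon with h | h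
            · exact Or.inl (not_not.mp h)
            · exact Or.inr h
          have hyx_supp : ∀ j, x j ≠ 0 → y j = -x j := by
            intro j hj
            obtain ⟨hy, hsq⟩ := hal j hj
            have h3 : x j * y j < 0 :=
              lt_of_le_of_ne (hnp j) (mul_ne_zero hj hy)
            have h2 : (y j - x j) * (y j + x j) = 0 := by nlinarith
            rcases mul_eq_zero.mp h2 with h | h
            · exfalso; nlinarith
            · linarith
          have hoff : ∀ j, x j = 0 → y j = 0 := by
            intro j hj
            by_contra hyj
            exact Stmt13Aux.move_offsupport hε hs (-1) (by norm_num)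
              (Even.neg_one_pow hev)
              (fun j' hj' => by rw [hyx_supp j' hj']; ring) j hj hyj
          refine ⟨-1, Even.neg_one_pow hev, fun j => ?_⟩
          by_cases h : x j = 0
          · rw [h, hoff j h, mul_zero]
          · rw [hyx_supp j h]; ring
      · -- odd case
        have hpos : ∀ j, x j ≠ 0 → 0 < x j * y j := Stmt13Aux.fact_odd hε hs hod
        have hPQ : ∀ i : Fin d → Fin n,
            0 ≤ (∏ k : Fin d, x (i k)) * ∏ k : Fin d, y (i k) := by
          intro i
          rw [← Finset.prod_mul_distrib]
          apply Finset.prod_nonneg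
          intro k _
          by_cases h : x (i k) = 0
          · rw [h, zero_mul]
          · exact (hpos _ h).le
        have hal : ∀ j, x j ≠ 0 → y j ≠ 0 ∧ y j ^ 2 = x j ^ 2 := by
          intro j hj
          by_contra hcon
          apply Stmt13Aux.move_aligned hε hs hPQ j hj
          rcases not_and_or.mp hcon with h | h
          · exact Or.inl (not_not.mp h)
          · exact Or.inr h
        have hyx_supp : ∀ j, x j ≠ 0 → y j = x j := by
          intro j hj
          obtain ⟨hy, hsq⟩ := hal j hj
          have h3 := hpos j hj
          have h2 : (y j - x j) * (y j + x j) = 0 := by nlinarith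
          rcases mul_eq_zero.mp h2 with h | h
          · linarith
          · exfalso; nlinarith
        have hoff : ∀ j, x j = 0 → y j = 0 := by
          intro j hj
          by_contra hyj
          exact Stmt13Aux.move_offsupport hε hs 1 (by norm_num) (one_pow d)
            (fun j' hj' => by rw [hyx_supp j' hj', one_mul]) j hj hyj
        refine ⟨1, one_pow d, fun j => ?_⟩
        by_cases h : x j = 0
        · rw [h, hoff j h, mul_zero]
        · rw [hyx_supp j h, one_mul]
    obtain ⟨η, hηd, hyxall⟩ := hηex
    intro i
    calc (∏ k : Fin d, x (i k)) = η ^ d * ∏ k : Fin d, x (i k) := by rw [hηd, one_mul]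
      _ = (∏ _k : Fin d, η) * ∏ k : Fin d, x (i k) := by
          rw [Finset.prod_const, Finset.card_univ, Fintype.card_fin]
      _ = ∏ k : Fin d, (η * x (i k)) := Finset.prod_mul_distrib.symm
      _ = ∏ k : Fin d, y (i k) := Finset.prod_congr rfl fun k _ => (hyxall (i k)).symm
end

section
/- Fix y ∈ ℝⁿ and an integer d ≥ 1. The function f_∞(x) = max_{1 ≤ i₁,…,i_d ≤ n} |x_{i₁}⋯x_{i_d} − y_{i₁}⋯y_{i_d}| on ℝⁿ has no spurious strict local minima: every strict local minimum of f_∞ is a global minimum. -/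
open Finset Function

namespace Stmt14Proof




/-- product of v over slots of tuple i -/
noncomputable def P {n d : ℕ} (v : Fin n → ℝ) (i : Fin d → Fin n) : ℝ := ∏ k, v (i k)

lemma prod_update {n d : ℕ} (v : Fin n → ℝ) (i : Fin d → Fin n) (k : Fin d) (b : Fin n) :
    P v (Function.update i k b) * v (i k) = P v i * v b := by
  classical
  have h1 : ∀ l, v (Function.update i k b l) = Function.update (fun l => v (i l)) k (v b) l := by
    intro l
    by_cases h : l = k
    · subst h; simp
    · simp [Function.update, h]
  unfold P
  rw [Finset.prod_congr rfl (fun l _ => h1 l)]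
  rw [Finset.prod_update_of_mem (Finset.mem_univ k)]
  rw [← Finset.mul_prod_erase Finset.univ (fun l => v (i l)) (Finset.mem_univ k)]
  rw [← Finset.sdiff_singleton_eq_erase]
  ring

lemma prod_scale {n d : ℕ} (v : Fin n → ℝ) (i : Fin d → Fin n) (j₀ : Fin n) (u : ℝ) :
    P (Function.update v j₀ (v j₀ * u)) i
      = P v i * u ^ (Finset.univ.filter (fun k => i k = j₀)).card := by
  classical
  unfold P
  rw [← Finset.prod_filter_mul_prod_filter_not Finset.univ (fun k => i k = j₀)
      (fun k => Function.update v j₀ (v j₀ * u) (i k))]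
  rw [← Finset.prod_filter_mul_prod_filter_not Finset.univ (fun k => i k = j₀)
      (fun k => v (i k))]
  have h1 : ∀ k ∈ Finset.univ.filter (fun k => i k = j₀),
      Function.update v j₀ (v j₀ * u) (i k) = v (i k) * u := by
    intro k hk
    rcases Finset.mem_filter.mp hk with ⟨_, hk⟩
    rw [hk]; simp
  have h2 : ∀ k ∈ Finset.univ.filter (fun k => ¬ i k = j₀),
      Function.update v j₀ (v j₀ * u) (i k) = v (i k) := by
    intro k hk
    rcases Finset.mem_filter.mp hk with ⟨_, hk⟩
    simp [Function.update, hk]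
  rw [Finset.prod_congr rfl h1, Finset.prod_congr rfl h2, Finset.prod_mul_distrib,
    Finset.prod_const]
  ring

lemma prod_mul_split {n d : ℕ} (x y : Fin n → ℝ) (i : Fin d → Fin n) :
    P x i * P y i = ∏ k, (x (i k) * y (i k)) := by
  unfold P; rw [Finset.prod_mul_distrib]

lemma abs_P {n d : ℕ} (v : Fin n → ℝ) (i : Fin d → Fin n) : |P v i| = ∏ k, |v (i k)| := by
  unfold P; rw [Finset.abs_prod]

/-- product of a two-valued function over tuple slots -/
lemma prod_two_val {n d : ℕ} (g : Fin n → ℝ) (i : Fin d → Fin n) (p : Fin d → Prop)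
    [DecidablePred p] (A B : ℝ) (hA : ∀ k, p k → g (i k) = A) (hB : ∀ k, ¬ p k → g (i k) = B) :
    (∏ k, g (i k)) = A ^ (Finset.univ.filter p).card * B ^ (d - (Finset.univ.filter p).card) := by
  classical
  rw [← Finset.prod_filter_mul_prod_filter_not Finset.univ p (fun k => g (i k))]
  rw [Finset.prod_congr rfl (fun k hk => hA k (Finset.mem_filter.mp hk).2),
      Finset.prod_congr rfl (fun k hk => hB k (Finset.mem_filter.mp hk).2),
      Finset.prod_const, Finset.prod_const]
  have h := Finset.card_filter_add_card_filter_not (s := (Finset.univ : Finset (Fin d))) p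
  simp only [Finset.card_univ, Fintype.card_fin] at h
  have h2 : (Finset.univ.filter (fun k => ¬ p k)).card = d - (Finset.univ.filter p).card := by omega
  rw [h2]

lemma pow_one_add_le (k : ℕ) {δ : ℝ} (h0 : 0 ≤ δ) (h1 : δ ≤ 1) :
    (1 + δ) ^ k ≤ 1 + 3 ^ k * δ := by
  induction k with
  | zero => simp; linarith
  | succ k ih =>
    have h3 : (1:ℝ) ≤ 3 ^ k := one_le_pow₀ (by norm_num)
    calc (1+δ)^(k+1) = (1+δ)^k * (1+δ) := by ring
      _ ≤ (1 + 3^k*δ)*(1+δ) := by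
          apply mul_le_mul_of_nonneg_right ih (by linarith)
      _ = 1 + (1 + 3^k + 3^k*δ)*δ := by ring
      _ ≤ 1 + 3^(k+1)*δ := by
          have hb : (1:ℝ) + 3^k + 3^k*δ ≤ 3*3^k := by nlinarith
          have := mul_le_mul_of_nonneg_right hb h0
          rw [pow_succ]
          nlinarith


lemma abs_split_neg {p q : ℝ} (h : p * q < 0) : |p - q| = |p| + |q| := by
  rcases mul_neg_iff.mp h with ⟨hp, hq⟩ | ⟨hp, hq⟩
  · rw [abs_of_pos hp, abs_of_neg hq, abs_of_pos (by linarith)]; ring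
  · rw [abs_of_neg hp, abs_of_pos hq, abs_of_neg (by linarith)]; ring

lemma abs_scale_pos {p q s : ℝ} (h : 0 < p * q) (hs : 0 < s) : |p*s - q| = abs (abs p * s - abs q) := by
  rcases mul_pos_iff.mp h with ⟨hp, hq⟩ | ⟨hp, hq⟩
  · rw [abs_of_pos hp, abs_of_pos hq]
  · rw [abs_of_neg hp, abs_of_neg hq, ← abs_neg (p*s - q)]
    congr 1; ring

lemma abs_scale_neg {p q s : ℝ} (h : p * q < 0) (hs : 0 < s) : |p*s - q| = abs p * s + abs q := by
  have hps : (p*s) * q < 0 := by rcases mul_neg_iff.mp h with ⟨hp, hq⟩ | ⟨hp, hq⟩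
                                 · exact mul_neg_of_pos_of_neg (mul_pos hp hs) hq
                                 · exact mul_neg_of_neg_of_pos (mul_neg_of_neg_of_pos hp hs) hq
  rw [abs_split_neg hps, abs_mul, abs_of_pos hs]

lemma class_neg {p q M : ℝ} (hM : 0 < M) (hT : |p - q| = M) (hp : p ≠ 0)
    (he : (p - q) * p < 0) : |q| = |p| + M ∧ 0 < p * q := by
  rcases (abs_eq (le_of_lt hM)).mp hT with h | h
  · -- p - q = M > 0, so p > 0 from he? (p-q)*p<0 with p-q = M > 0 ⇒ p < 0
    have hpneg : p < 0 := by nlinarith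
    have hq : q = p - M := by linarith
    constructor
    · rw [abs_of_neg hpneg, abs_of_neg (by linarith)]; linarith
    · nlinarith
  · have hppos : 0 < p := by nlinarith
    have hq : q = p + M := by linarith
    constructor
    · rw [abs_of_pos hppos, abs_of_pos (by linarith)]; linarith
    · nlinarith

lemma class_pos {p q M : ℝ} (hM : 0 < M) (hT : |p - q| = M) (hp : p ≠ 0)
    (he : 0 < (p - q) * p) :
    (M < |p| ∧ |q| = |p| - M ∧ 0 < p*q) ∨ (|p| < M ∧ |q| = M - |p| ∧ p*q < 0) ∨ q = 0 := by
  rcases (abs_eq (le_of_lt hM)).mp hT with h | h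
  · -- p - q = M, p > 0
    have hppos : 0 < p := by nlinarith
    have hq : q = p - M := by linarith
    rcases lt_trichotomy q 0 with h0 | h0 | h0
    · right; left
      refine ⟨?_, ?_, ?_⟩
      · rw [abs_of_pos hppos]; linarith
      · rw [abs_of_neg h0, abs_of_pos hppos]; linarith
      · exact mul_neg_of_pos_of_neg hppos h0
    · right; right; exact h0
    · left
      refine ⟨?_, ?_, ?_⟩
      · rw [abs_of_pos hppos]; linarith
      · rw [abs_of_pos h0, abs_of_pos hppos]; linarith
      · exact mul_pos hppos h0
  · -- p - q = -M, p < 0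
    have hpneg : p < 0 := by nlinarith
    have hq : q = p + M := by linarith
    rcases lt_trichotomy q 0 with h0 | h0 | h0
    · left
      refine ⟨?_, ?_, ?_⟩
      · rw [abs_of_neg hpneg]; linarith
      · rw [abs_of_neg h0, abs_of_neg hpneg]; linarith
      · exact mul_pos_of_neg_of_neg hpneg h0
    · right; right; exact h0
    · right; left
      refine ⟨?_, ?_, ?_⟩
      · rw [abs_of_neg hpneg]; linarith
      · rw [abs_of_pos h0, abs_of_neg hpneg]; linarith
      · exact mul_neg_of_neg_of_pos hpneg h0




-- placeholders (proved in part1/part2); assume as axioms here for isolated compile, merged later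

set_option maxHeartbeats 1000000 in
lemma descent {n d : ℕ} (hd : 1 ≤ d) (x y : Fin n → ℝ) (M ε : ℝ) (hM : 0 < M) (hε : 0 < ε)
    (hcon : ∀ i : Fin d → Fin n, |P x i - P y i| ≤ M)
    (j₀ : Fin n) (hj : x j₀ ≠ 0) (σ : ℝ) (hσ : σ = 1 ∨ σ = -1)
    (huni : ∀ i : Fin d → Fin n, |P x i - P y i| = M → P x i ≠ 0 → (∃ k, i k = j₀) →
      σ * ((P x i - P y i) * P x i) < 0) :
    ∃ z : Fin n → ℝ, z j₀ ≠ x j₀ ∧ (∀ j, j ≠ j₀ → z j = x j) ∧ |z j₀ - x j₀| ≤ ε ∧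
      ∀ i : Fin d → Fin n, |P z i - P y i| ≤ M := by
  classical
  haveI : Nonempty (Fin d → Fin n) := ⟨fun _ => j₀⟩
  have h3dpos : (0:ℝ) < 3 ^ d := by positivity
  -- per-tuple requirement
  set g : (Fin d → Fin n) → ℝ := fun i =>
    if P x i = 0 then 1 else
      if |P x i - P y i| = M then 2*M/(3^d * |P x i|) else (M - |P x i - P y i|)/(3^d * |P x i|)
    with hgdef
  have hgpos : ∀ i, 0 < g i := by
    intro i
    by_cases h0 : P x i = 0
    · simp [hgdef, h0]
    · have hpp : 0 < |P x i| := abs_pos.mpr h0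
      by_cases ha : |P x i - P y i| = M
      · simp only [hgdef, if_neg h0, if_pos ha]
        positivity
      · have : |P x i - P y i| < M := lt_of_le_of_ne (hcon i) ha
        simp only [hgdef, if_neg h0, if_neg ha]
        apply div_pos (by linarith) (by positivity)
  set δ : ℝ := min (Finset.univ.inf' Finset.univ_nonempty g)
      (min (1/2) (ε / (|x j₀| + 1))) with hδdef
  have habs0 : (0:ℝ) ≤ |x j₀| := abs_nonneg _
  have hδpos : 0 < δ := by
    apply lt_min
    · rw [Finset.lt_inf'_iff]
      intro b _; exact hgpos b
    · apply lt_min (by norm_num)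
      positivity
  have hδle : ∀ i, δ ≤ g i := fun i =>
    le_trans (min_le_left _ _) (Finset.inf'_le g (Finset.mem_univ i))
  have hδhalf : δ ≤ 1/2 := le_trans (min_le_right _ _) (min_le_left _ _)
  have hδeps : δ ≤ ε / (|x j₀| + 1) := le_trans (min_le_right _ _) (min_le_right _ _)
  set u : ℝ := 1 + σ * δ with hudef
  have hσabs : |σ| = 1 := by rcases hσ with h | h <;> simp [h]
  have hupos : 0 < u := by
    rcases hσ with h | h <;> rw [hudef, h] <;> linarith
  set z : Fin n → ℝ := Function.update x j₀ (x j₀ * u) with hzdef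
  have hzj : z j₀ = x j₀ * u := by rw [hzdef]; simp
  have hzdiff : z j₀ - x j₀ = x j₀ * (σ * δ) := by rw [hzj, hudef]; ring
  refine ⟨z, ?_, ?_, ?_, ?_⟩
  · intro h
    have : x j₀ * (σ * δ) = 0 := by rw [← hzdiff, h]; ring
    rcases mul_eq_zero.mp this with h' | h'
    · exact hj h'
    · rcases mul_eq_zero.mp h' with h'' | h''
      · rcases hσ with hh | hh <;> rw [hh] at h'' <;> norm_num at h''
      · exact absurd h'' (ne_of_gt hδpos)
  · intro j hjj; rw [hzdef]; simp [Function.update, hjj]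
  · rw [hzdiff, abs_mul, abs_mul, hσabs, abs_of_pos hδpos]
    have h1 : |x j₀| * (1 * δ) ≤ |x j₀| * (ε / (|x j₀| + 1)) := by
      apply mul_le_mul_of_nonneg_left (by linarith) habs0
    have h2 : |x j₀| * (ε / (|x j₀| + 1)) = ε * (|x j₀| / (|x j₀| + 1)) := by ring
    have h3 : |x j₀| / (|x j₀| + 1) ≤ 1 := by
      rw [div_le_one (by linarith)]; linarith
    calc |x j₀| * (1 * δ) ≤ ε * (|x j₀| / (|x j₀| + 1)) := by rw [← h2]; exact h1
      _ ≤ ε * 1 := by apply mul_le_mul_of_nonneg_left h3 (le_of_lt hε)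
      _ = ε := by ring
  · intro i
    set m : ℕ := (Finset.univ.filter (fun k => i k = j₀)).card with hmdef
    have hm : m ≤ d := by
      rw [hmdef]
      calc (Finset.univ.filter (fun k => i k = j₀)).card ≤ (Finset.univ : Finset (Fin d)).card :=
            Finset.card_filter_le _ _
        _ = d := by simp
    have hPz : P z i = P x i * u ^ m := by rw [hzdef, hmdef]; exact prod_scale x i j₀ u
    have humpos : 0 < u ^ m := pow_pos hupos m
    have hdR : (d:ℝ) ≤ 3 ^ d := by
      have := Nat.lt_pow_self (n := d) (show 1 < 3 by norm_num)
      exact_mod_cast le_of_lt this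
    have hmR : (m:ℝ) ≤ 3 ^ d := le_trans (by exact_mod_cast hm) hdR
    -- bounds on u^m
    have hub : u ^ m ≤ 1 + 3^d * δ := by
      rcases hσ with h | h
      · rw [hudef, h]
        calc (1 + 1*δ)^m ≤ (1+1*δ)^d := by
              apply pow_le_pow_right₀ (by linarith) hm
          _ = (1+δ)^d := by ring_nf
          _ ≤ 1 + 3^d*δ := pow_one_add_le d (le_of_lt hδpos) (by linarith)
      · rw [hudef, h]
        have : (1 + (-1)*δ) ≤ 1 := by linarith
        calc (1 + (-1)*δ)^m ≤ 1 := pow_le_one₀ (by linarith) this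
          _ ≤ 1 + 3^d*δ := by nlinarith
    have hlb : 1 - 3^d * δ ≤ u ^ m := by
      rcases hσ with h | h
      · rw [hudef, h]
        have h1 : (1:ℝ) ≤ (1 + 1*δ)^m := one_le_pow₀ (by linarith)
        nlinarith
      · rw [hudef, h]
        have h1 : (1 + (-1)*δ)^d ≤ (1 + (-1)*δ)^m :=
          pow_le_pow_of_le_one (by linarith) (by linarith) hm
        have h2 : 1 + (d:ℝ)*(-δ) ≤ (1 + -δ)^d := one_add_mul_le_pow (by linarith) d
        have h3 : 1 - 3^d*δ ≤ 1 + (d:ℝ)*(-δ) := by nlinarith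
        calc 1 - 3^d*δ ≤ 1 + (d:ℝ)*(-δ) := h3
          _ ≤ (1 + -δ)^d := h2
          _ = (1 + (-1)*δ)^d := by ring_nf
          _ ≤ (1 + (-1)*δ)^m := h1
    by_cases hp0 : P x i = 0
    · rw [hPz, hp0]
      have := hcon i
      rw [hp0] at this
      simpa using this
    have hppos : 0 < |P x i| := abs_pos.mpr hp0
    by_cases hk : ∃ k, i k = j₀
    · by_cases hact : |P x i - P y i| = M
      · -- active tuple containing j₀
        have hcls := huni i hact hp0 hk
        have hδg : δ ≤ 2*M/(3^d * |P x i|) := by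
          have h := hδle i
          simp only [hgdef, if_neg hp0, if_pos hact] at h
          exact h
        have hbound : δ * (3^d * |P x i|) ≤ 2*M :=
          (le_div_iff₀ (by positivity)).mp hδg
        rcases hσ with h | h
        · -- grow: class N
          have hcls' : (P x i - P y i) * P x i < 0 := by rw [h] at hcls; linarith
          obtain ⟨hq, hpq⟩ := class_neg hM hact hp0 hcls'
          have h1 : (1:ℝ) ≤ u ^ m := by
            rw [hudef, h]; exact one_le_pow₀ (by linarith)
          rw [hPz, abs_scale_pos hpq humpos, hq]
          rw [abs_le]
          have hlo : |P x i| * 1 ≤ |P x i| * u^m :=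
            mul_le_mul_of_nonneg_left h1 (abs_nonneg _)
          have h2 : |P x i| * u^m ≤ |P x i| * (1 + 3^d*δ) :=
            mul_le_mul_of_nonneg_left hub (abs_nonneg _)
          have e1 : |P x i| * (1 + 3^d*δ) = |P x i| + δ * (3^d * |P x i|) := by ring
          constructor
          · linarith
          · linarith
        · -- shrink
          have hcls' : 0 < (P x i - P y i) * P x i := by rw [h] at hcls; linarith
          have h1 : u ^ m ≤ 1 := by
            rw [hudef, h]; exact pow_le_one₀ (by linarith) (by linarith)
          have h2 : |P x i| * u^m ≤ |P x i| := by
            have := mul_le_mul_of_nonneg_left h1 (abs_nonneg (P x i))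
            linarith [this]
          rcases class_pos hM hact hp0 hcls' with ⟨hMp, hq, hpq⟩ | ⟨hMp, hq, hpq⟩ | hq0
          · -- G
            have h3 : |P x i| * (1 - 3^d*δ) ≤ |P x i| * u^m :=
              mul_le_mul_of_nonneg_left hlb (abs_nonneg _)
            rw [hPz, abs_scale_pos hpq humpos, hq, abs_le]
            have e1 : |P x i| * (1 - 3^d*δ) = |P x i| - δ * (3^d * |P x i|) := by ring
            constructor
            · linarith
            · linarith
          · -- V
            rw [hPz, abs_scale_neg hpq humpos, hq]
            linarith
          · -- q = 0
            rw [hPz, hq0]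
            have : |P x i * u^m - 0| = |P x i| * u^m := by
              rw [sub_zero, abs_mul, abs_of_pos humpos]
            rw [this]
            have hPM : |P x i| = M := by
              have := hact; rw [hq0, sub_zero] at this; exact this
            have := mul_le_mul_of_nonneg_left h1 (abs_nonneg (P x i))
            linarith [this]
      · -- inactive tuple containing j₀
        have hTlt : |P x i - P y i| < M := lt_of_le_of_ne (hcon i) hact
        have hδg : δ ≤ (M - |P x i - P y i|)/(3^d * |P x i|) := by
          have h := hδle i
          simp only [hgdef, if_neg hp0, if_neg hact] at h
          exact h
        have hbound : δ * (3^d * |P x i|) ≤ M - |P x i - P y i| :=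
          (le_div_iff₀ (by positivity)).mp hδg
        have humabs : |u^m - 1| ≤ 3^d * δ := by
          rw [abs_le]; constructor
          · linarith
          · linarith
        have key : |P z i - P y i| ≤ |P x i - P y i| + |P x i| * |u^m - 1| := by
          rw [hPz]
          have : P x i * u^m - P y i = (P x i - P y i) + P x i * (u^m - 1) := by ring
          rw [this]
          calc |(P x i - P y i) + P x i * (u^m - 1)|
              ≤ |P x i - P y i| + |P x i * (u^m - 1)| := abs_add_le _ _
            _ = |P x i - P y i| + |P x i| * |u^m - 1| := by rw [abs_mul]
        have h5 : |P x i| * |u^m - 1| ≤ |P x i| * (3^d * δ) :=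
          mul_le_mul_of_nonneg_left humabs (abs_nonneg _)
        have e1 : |P x i| * (3^d*δ) = δ * (3^d * |P x i|) := by ring
        linarith
    · -- tuple does not contain j₀
      have hm0 : m = 0 := by
        rw [hmdef, Finset.card_eq_zero, Finset.filter_eq_empty_iff]
        intro k _
        push_neg at hk
        exact hk k
      rw [hPz, hm0]
      simpa using hcon i



/-- kill NW-domination against an N-active inequality -/
lemma killNW {P M Xa Ya Xb Yb : ℝ} (hP : 0 < P) (hM : 0 < M) (hXa : 0 < Xa) (hYa : 0 < Ya)
    (hX : Xb ≤ Xa) (hY : Ya ≤ Yb) (hstrict : Xb < Xa ∨ Ya < Yb)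
    (hineq : (P + M)*Yb*Xa ≤ P*Xb*Ya + M*(Xa*Ya)) : False := by
  have hPM : (0:ℝ) < P + M := by linarith
  have h1 : (P + M)*Ya*Xa ≤ (P+M)*Yb*Xa :=
    mul_le_mul_of_nonneg_right (mul_le_mul_of_nonneg_left hY (le_of_lt hPM)) (le_of_lt hXa)
  have h2 : P*Xb*Ya ≤ P*Xa*Ya :=
    mul_le_mul_of_nonneg_right (mul_le_mul_of_nonneg_left hX (le_of_lt hP)) (le_of_lt hYa)
  rcases hstrict with h | h
  · have h3 : P*Xb*Ya < P*Xa*Ya :=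
      mul_lt_mul_of_pos_right (mul_lt_mul_of_pos_left h hP) hYa
    nlinarith
  · have h3 : (P + M)*Ya*Xa < (P+M)*Yb*Xa :=
      mul_lt_mul_of_pos_right (mul_lt_mul_of_pos_left h hPM) hXa
    nlinarith

/-- a coordinate strictly below the top cannot be G-blocked (it is N-blocked) -/
lemma killGN {Pw Pu M Xs Ys XT YT : ℝ} (hM : 0 < M) (hPw : M < Pw) (hPu : 0 < Pu)
    (hXs : 0 < Xs) (hYs : 0 < Ys) (hXT : 0 < XT) (hYT : 0 < YT) (hlt : Xs < XT)
    (hG : Pw*XT*Ys ≤ (Pw - M)*YT*Xs + M*(Xs*Ys))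
    (hN : (Pu + M)*YT*Xs ≤ Pu*XT*Ys + M*(Xs*Ys)) : False := by
  have hA : Xs*Ys < XT*Ys := by nlinarith
  have hBA : XT*Ys < YT*Xs := by nlinarith
  nlinarith

/-- villain slots cannot be dominated within the same sign class -/
lemma killV {Pw M Xs Ys XT YT : ℝ} (hM : 0 < M) (h0 : 0 < Pw) (hPw : Pw < M)
    (hXs : 0 < Xs) (hYs : 0 < Ys) (hX : Xs < XT) (hY : Ys < YT)
    (hineq : Pw*XT*Ys + (M - Pw)*YT*Xs ≤ M*(Xs*Ys)) : False := by
  have hMPw : (0:ℝ) < M - Pw := by linarith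
  have h1 : Pw*Xs*Ys < Pw*XT*Ys :=
    mul_lt_mul_of_pos_right (mul_lt_mul_of_pos_left hX h0) hYs
  have h2 : (M-Pw)*Ys*Xs < (M-Pw)*YT*Xs :=
    mul_lt_mul_of_pos_right (mul_lt_mul_of_pos_left hY hMPw) hXs
  nlinarith






lemma eq_of_abs_eq_of_mul_pos {a b : ℝ} (h : |a| = |b|) (hp : 0 < a * b) : a = b := by
  rcases mul_pos_iff.mp hp with ⟨h1, h2⟩ | ⟨h1, h2⟩
  · rwa [abs_of_pos h1, abs_of_pos h2] at h
  · have := h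
    rw [abs_of_neg h1, abs_of_neg h2] at this
    linarith

lemma same_sign_trans {a b c : ℝ} (h1 : a * c < 0) (h2 : b * c < 0) : 0 < a * b := by
  rcases mul_neg_iff.mp h1 with ⟨ha, hc⟩ | ⟨ha, hc⟩ <;>
    rcases mul_neg_iff.mp h2 with ⟨hb, hc'⟩ | ⟨hb, hc'⟩
  · exact mul_pos ha hb
  · linarith
  · linarith
  · exact mul_pos_of_neg_of_neg ha hb

set_option maxHeartbeats 2000000 in
lemma core {n d : ℕ} (hd : 1 ≤ d) (x y : Fin n → ℝ) (M : ℝ) (hM : 0 < M)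
    (hcon : ∀ i : Fin d → Fin n, |P x i - P y i| ≤ M)
    (hDB : ∀ j, x j ≠ 0 →
      (∃ u : Fin d → Fin n, (∃ k, u k = j) ∧ |P x u - P y u| = M ∧ P x u ≠ 0 ∧
          (P x u - P y u) * P x u < 0) ∧
      (∃ w : Fin d → Fin n, (∃ k, w k = j) ∧ |P x w - P y w| = M ∧ P x w ≠ 0 ∧
          0 < (P x w - P y w) * P x w))
    (hS : ∃ j, x j ≠ 0) : False := by
  classical
  -- slots of a tuple with nonzero x-product are supported coordinates
  have slotS : ∀ (i : Fin d → Fin n), P x i ≠ 0 → ∀ k, x (i k) ≠ 0 := by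
    intro i hp k h0
    exact hp (Finset.prod_eq_zero (Finset.mem_univ k) h0)
  have slotSy : ∀ (i : Fin d → Fin n), P y i ≠ 0 → ∀ k, y (i k) ≠ 0 := by
    intro i hp k h0
    exact hp (Finset.prod_eq_zero (Finset.mem_univ k) h0)
  -- N-blockers
  have getN : ∀ a, x a ≠ 0 → ∃ u : Fin d → Fin n, ∃ k, u k = a ∧ P x u ≠ 0 ∧
      |P y u| = |P x u| + M ∧ 0 < P x u * P y u := by
    intro a ha
    obtain ⟨⟨u, ⟨k, hk⟩, hTu, hpu, heu⟩, _⟩ := hDB a ha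
    obtain ⟨h1, h2⟩ := class_neg hM hTu hpu heu
    exact ⟨u, k, hk, hpu, h1, h2⟩
  -- y is nonzero on the support of x
  have hY : ∀ a, x a ≠ 0 → y a ≠ 0 := by
    intro a ha
    obtain ⟨u, k, hk, hpu, hq, hpq⟩ := getN a ha
    have hqy : P y u ≠ 0 := by
      intro h0; rw [h0] at hpq; simp at hpq
    have := slotSy u hqy k
    rwa [hk] at this
  -- +blockers, with the q = 0 case excluded
  have getP : ∀ a, x a ≠ 0 → ∃ w : Fin d → Fin n, ∃ k, w k = a ∧ P x w ≠ 0 ∧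
      ((M < |P x w| ∧ |P y w| = |P x w| - M ∧ 0 < P x w * P y w) ∨
       (|P x w| < M ∧ |P y w| = M - |P x w| ∧ P x w * P y w < 0)) := by
    intro a ha
    obtain ⟨_, ⟨w, ⟨k, hk⟩, hTw, hpw, hew⟩⟩ := hDB a ha
    have hqw : P y w ≠ 0 := by
      have : ∀ l, y (w l) ≠ 0 := fun l => hY _ (slotS w hpw l)
      unfold P
      rw [Finset.prod_ne_zero_iff]
      exact fun l _ => this l
    rcases class_pos hM hTw hpw hew with h | h | h
    · exact ⟨w, k, hk, hpw, Or.inl h⟩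
    · exact ⟨w, k, hk, hpw, Or.inr h⟩
    · exact absurd h hqw
  -- swap inequalities
  have swap_le : ∀ (i : Fin d → Fin n) (k : Fin d) (b : Fin n),
      |P y i| * |y b| * |x (i k)| ≤ |P x i| * |x b| * |y (i k)| + M * (|x (i k)| * |y (i k)|) := by
    intro i k b
    set i' := Function.update i k b with hi'
    have h := hcon i'
    have h2 : |P y i'| - |P x i'| ≤ M := by
      have := abs_sub_abs_le_abs_sub (P y i') (P x i')
      rw [abs_sub_comm] at this
      linarith
    have idX : |P x i'| * |x (i k)| = |P x i| * |x b| := by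
      rw [← abs_mul, ← abs_mul, prod_update]
    have idY : |P y i'| * |y (i k)| = |P y i| * |y b| := by
      rw [← abs_mul, ← abs_mul, prod_update]
    have hXa : (0:ℝ) ≤ |x (i k)| := abs_nonneg _
    have hYa : (0:ℝ) ≤ |y (i k)| := abs_nonneg _
    calc |P y i| * |y b| * |x (i k)| = (|P y i'| * |y (i k)|) * |x (i k)| := by rw [idY]
      _ = |P y i'| * (|x (i k)| * |y (i k)|) := by ring
      _ ≤ (|P x i'| + M) * (|x (i k)| * |y (i k)|) := by
          apply mul_le_mul_of_nonneg_right (by linarith) (mul_nonneg hXa hYa)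
      _ = (|P x i'| * |x (i k)|) * |y (i k)| + M * (|x (i k)| * |y (i k)|) := by ring
      _ = |P x i| * |x b| * |y (i k)| + M * (|x (i k)| * |y (i k)|) := by rw [idX]
  have swap_ge : ∀ (i : Fin d → Fin n) (k : Fin d) (b : Fin n),
      |P x i| * |x b| * |y (i k)| ≤ |P y i| * |y b| * |x (i k)| + M * (|x (i k)| * |y (i k)|) := by
    intro i k b
    set i' := Function.update i k b with hi'
    have h := hcon i'
    have h2 : |P x i'| - |P y i'| ≤ M := by
      have := abs_sub_abs_le_abs_sub (P x i') (P y i')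
      linarith
    have idX : |P x i'| * |x (i k)| = |P x i| * |x b| := by
      rw [← abs_mul, ← abs_mul, prod_update]
    have idY : |P y i'| * |y (i k)| = |P y i| * |y b| := by
      rw [← abs_mul, ← abs_mul, prod_update]
    have hXa : (0:ℝ) ≤ |x (i k)| := abs_nonneg _
    have hYa : (0:ℝ) ≤ |y (i k)| := abs_nonneg _
    calc |P x i| * |x b| * |y (i k)| = (|P x i'| * |x (i k)|) * |y (i k)| := by rw [idX]
      _ = |P x i'| * (|x (i k)| * |y (i k)|) := by ring
      _ ≤ (|P y i'| + M) * (|x (i k)| * |y (i k)|) := by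
          apply mul_le_mul_of_nonneg_right (by linarith) (mul_nonneg hXa hYa)
      _ = (|P y i'| * |y (i k)|) * |x (i k)| + M * (|x (i k)| * |y (i k)|) := by ring
      _ = |P y i| * |y b| * |x (i k)| + M * (|x (i k)| * |y (i k)|) := by rw [idY]
  have swap_mis : ∀ (i : Fin d → Fin n) (k : Fin d) (b : Fin n),
      P x i * P y i < 0 → 0 < (x (i k) * y (i k)) * (x b * y b) →
      |P x i| * |x b| * |y (i k)| + |P y i| * |y b| * |x (i k)| ≤ M * (|x (i k)| * |y (i k)|) := by
    intro i k b hpq hsgn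
    set i' := Function.update i k b with hi'
    have idX : P x i' * x (i k) = P x i * x b := prod_update x i k b
    have idY : P y i' * y (i k) = P y i * y b := prod_update y i k b
    have idS : (P x i' * P y i') * (x (i k) * y (i k)) = (P x i * P y i) * (x b * y b) := by
      linear_combination (P y i' * y (i k)) * idX + (P x i * x b) * idY
    have hsq : 0 < (x (i k) * y (i k)) * (x (i k) * y (i k)) := by
      have hne : x (i k) * y (i k) ≠ 0 := by
        intro h0; rw [h0] at hsgn; simp at hsgn
      exact mul_self_pos.mpr hne
    have hmul : (P x i' * P y i') * ((x (i k) * y (i k)) * (x (i k) * y (i k)))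
        = ((P x i * P y i) * (x b * y b)) * (x (i k) * y (i k)) := by
      linear_combination (x (i k) * y (i k)) * idS
    have hneg : (P x i * P y i) * ((x b * y b) * (x (i k) * y (i k))) < 0 := by
      apply mul_neg_of_neg_of_pos hpq
      have : 0 < (x (i k) * y (i k)) * (x b * y b) := hsgn
      linarith [this, mul_comm (x (i k) * y (i k)) (x b * y b)]
    have hneg2 : (P x i' * P y i') * ((x (i k) * y (i k)) * (x (i k) * y (i k))) < 0 := by
      rw [hmul]; linarith [hneg, mul_assoc (P x i * P y i) (x b * y b) (x (i k) * y (i k))]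
    have hi'neg : P x i' * P y i' < 0 := by
      by_contra hge
      push_neg at hge
      nlinarith
    have habs : |P x i' - P y i'| = |P x i'| + |P y i'| := abs_split_neg hi'neg
    have h := hcon i'
    rw [habs] at h
    have idXa : |P x i'| * |x (i k)| = |P x i| * |x b| := by
      rw [← abs_mul, ← abs_mul, idX]
    have idYa : |P y i'| * |y (i k)| = |P y i| * |y b| := by
      rw [← abs_mul, ← abs_mul, idY]
    have hXa : (0:ℝ) ≤ |x (i k)| := abs_nonneg _
    have hYa : (0:ℝ) ≤ |y (i k)| := abs_nonneg _
    calc |P x i| * |x b| * |y (i k)| + |P y i| * |y b| * |x (i k)|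
        = (|P x i'| * |x (i k)|) * |y (i k)| + (|P y i'| * |y (i k)|) * |x (i k)| := by
          rw [idXa, idYa]
      _ = (|P x i'| + |P y i'|) * (|x (i k)| * |y (i k)|) := by ring
      _ ≤ M * (|x (i k)| * |y (i k)|) := by
          apply mul_le_mul_of_nonneg_right h (mul_nonneg hXa hYa)
  -- trichotomy: supported coordinates form a chain in (|x|,|y|)
  have trich : ∀ a b, x a ≠ 0 → x b ≠ 0 →
      (|x a| = |x b| ∧ |y a| = |y b|) ∨ (|x a| < |x b| ∧ |y a| < |y b|) ∨
      (|x b| < |x a| ∧ |y b| < |y a|) := by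
    intro a b ha hb
    have hXa : 0 < |x a| := abs_pos.mpr ha
    have hXb : 0 < |x b| := abs_pos.mpr hb
    have hYa : 0 < |y a| := abs_pos.mpr (hY a ha)
    have hYb : 0 < |y b| := abs_pos.mpr (hY b hb)
    obtain ⟨u, k, hk, hpu, hqu, _⟩ := getN a ha
    obtain ⟨u', k', hk', hpu', hqu', _⟩ := getN b hb
    have hPu : 0 < |P x u| := abs_pos.mpr hpu
    have hPu' : 0 < |P x u'| := abs_pos.mpr hpu'
    have iA := swap_le u k b
    rw [hk, hqu] at iA
    have iB := swap_le u' k' a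
    rw [hk', hqu'] at iB
    rcases lt_trichotomy (|x a|) (|x b|) with hx1 | hx1 | hx1 <;>
      rcases lt_trichotomy (|y a|) (|y b|) with hy1 | hy1 | hy1
    · exact Or.inr (Or.inl ⟨hx1, hy1⟩)
    · exact (killNW hPu' hM hXb hYb (le_of_lt hx1) (le_of_eq hy1.symm) (Or.inl hx1) iB).elim
    · exact (killNW hPu' hM hXb hYb (le_of_lt hx1) (le_of_lt hy1) (Or.inl hx1) iB).elim
    · exact (killNW hPu hM hXa hYa (le_of_eq hx1.symm) (le_of_lt hy1) (Or.inr hy1) iA).elim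
    · exact Or.inl ⟨hx1, hy1⟩
    · exact (killNW hPu' hM hXb hYb (le_of_eq hx1) (le_of_lt hy1) (Or.inr hy1) iB).elim
    · exact (killNW hPu hM hXa hYa (le_of_lt hx1) (le_of_lt hy1) (Or.inl hx1) iA).elim
    · exact (killNW hPu hM hXa hYa (le_of_lt hx1) (le_of_eq hy1) (Or.inl hx1) iA).elim
    · exact Or.inr (Or.inr ⟨hx1, hy1⟩)
  -- maximal coordinate
  obtain ⟨j0, hj0⟩ := hS
  have hSne : (Finset.univ.filter (fun j => x j ≠ 0)).Nonempty := ⟨j0, by simp [hj0]⟩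
  obtain ⟨jh, hjhmem, hjhmax⟩ := Finset.exists_max_image _ (fun j => |x j|) hSne
  have hjh : x jh ≠ 0 := by simpa using (Finset.mem_filter.mp hjhmem).2
  set XT := |x jh| with hXT
  set YT := |y jh| with hYT
  have hXT0 : 0 < XT := abs_pos.mpr hjh
  have hYT0 : 0 < YT := abs_pos.mpr (hY jh hjh)
  have hmax : ∀ j, x j ≠ 0 → |x j| ≤ XT := by
    intro j hj; exact hjhmax j (by simp [hj])
  have topY : ∀ j, x j ≠ 0 → |x j| = XT → |y j| = YT := by
    intro j hj hx
    rcases trich j jh hj hjh with ⟨h1, h2⟩ | ⟨h1, h2⟩ | ⟨h1, h2⟩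
    · exact h2
    · rw [← hXT] at h1; linarith
    · rw [← hXT] at h1; linarith [hmax j hj]
  have nontop : ∀ j, x j ≠ 0 → |x j| ≠ XT → |x j| < XT ∧ |y j| < YT := by
    intro j hj hne
    rcases trich j jh hj hjh with ⟨h1, h2⟩ | ⟨h1, h2⟩ | ⟨h1, h2⟩
    · rw [← hXT] at h1; exact absurd h1 hne
    · rw [← hXT] at h1; rw [← hYT] at h2; exact ⟨h1, h2⟩
    · rw [← hXT] at h1; linarith [hmax j hj]
  by_cases halltop : ∀ j, x j ≠ 0 → |x j| = XT
  · -- all coordinates at the top value: direct contradiction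
    obtain ⟨u, k, hk, hpu, hqu, _⟩ := getN jh hjh
    have hpuX : |P x u| = XT ^ d := by
      rw [abs_P, Finset.prod_congr rfl (fun l _ => halltop _ (slotS u hpu l)),
        Finset.prod_const]
      simp
    have hpuY : |P y u| = YT ^ d := by
      rw [abs_P, Finset.prod_congr rfl
        (fun l _ => topY _ (slotS u hpu l) (halltop _ (slotS u hpu l))), Finset.prod_const]
      simp
    obtain ⟨w, kw, hkw, hpw, hclsw⟩ := getP jh hjh
    have hpwX : |P x w| = XT ^ d := by
      rw [abs_P, Finset.prod_congr rfl (fun l _ => halltop _ (slotS w hpw l)),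
        Finset.prod_const]
      simp
    have hpwY : |P y w| = YT ^ d := by
      rw [abs_P, Finset.prod_congr rfl
        (fun l _ => topY _ (slotS w hpw l) (halltop _ (slotS w hpw l))), Finset.prod_const]
      simp
    have hXTd : 0 < XT ^ d := pow_pos hXT0 d
    rw [hpuX, hpuY] at hqu
    rcases hclsw with ⟨_, hq, _⟩ | ⟨_, hq, _⟩ <;> rw [hpwX, hpwY] at hq <;> linarith
  push_neg at halltop
  obtain ⟨sb, hsb0, hsbne⟩ := halltop
  obtain ⟨hsbX, hsbY⟩ := nontop sb hsb0 hsbne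
  have hXB0 : 0 < |x sb| := abs_pos.mpr hsb0
  have hYB0 : 0 < |y sb| := abs_pos.mpr (hY sb hsb0)
  -- strictly-below coordinates are villain-blocked
  have getV : ∀ s, x s ≠ 0 → |x s| < XT → ∃ w : Fin d → Fin n, ∃ k, w k = s ∧ P x w ≠ 0 ∧
      |P x w| < M ∧ |P y w| = M - |P x w| ∧ P x w * P y w < 0 := by
    intro s hs hlt
    obtain ⟨w, k, hk, hpw, hcls⟩ := getP s hs
    rcases hcls with ⟨hMp, hq, _⟩ | ⟨h1, h2, h3⟩
    · exfalso
      obtain ⟨u, k', hk', hpu, hqu, _⟩ := getN s hs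
      have iG := swap_ge w k jh
      rw [hk, hq] at iG
      have iN := swap_le u k' jh
      rw [hk', hqu] at iN
      exact killGN hM hMp (abs_pos.mpr hpu) (abs_pos.mpr hs) (abs_pos.mpr (hY s hs))
        hXT0 hYT0 hlt iG iN
    · exact ⟨w, k, hk, hpw, h1, h2, h3⟩
  -- top/below sign opposition
  have signTN : ∀ j s, x j ≠ 0 → |x j| = XT → x s ≠ 0 → |x s| < XT →
      (x j * y j) * (x s * y s) < 0 := by
    intro j s hj hjX hs hlt
    obtain ⟨w, k, hk, hpw, hPwM, hqw, hpqw⟩ := getV s hs hlt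
    by_contra hge
    push_neg at hge
    have hne : (x j * y j) * (x s * y s) ≠ 0 :=
      mul_ne_zero (mul_ne_zero hj (hY j hj)) (mul_ne_zero hs (hY s hs))
    have hpos : 0 < (x s * y s) * (x j * y j) := by
      rcases lt_or_eq_of_le hge with h | h
      · rw [mul_comm]; exact h
      · exact absurd h.symm hne
    have hmis := swap_mis w k j hpqw (by rw [hk]; exact hpos)
    rw [hk, hqw, hjX, topY j hj hjX] at hmis
    exact killV hM (abs_pos.mpr hpw) hPwM (abs_pos.mpr hs) (abs_pos.mpr (hY s hs)) hlt
      (nontop s hs (ne_of_lt hlt)).2 hmis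
  -- below coordinates share the same sign
  have signBB : ∀ s s', x s ≠ 0 → |x s| < XT → x s' ≠ 0 → |x s'| < XT →
      0 < (x s * y s) * (x s' * y s') := by
    intro s s' hs hls hs' hls'
    have h1 := signTN jh s hjh hXT.symm hs hls
    have h2 := signTN jh s' hjh hXT.symm hs' hls'
    rw [mul_comm] at h1 h2
    exact same_sign_trans h1 h2
  -- below coordinates share the same values
  have valEq : ∀ s, x s ≠ 0 → |x s| < XT → |x s| = |x sb| ∧ |y s| = |y sb| := by
    intro s hs hls
    rcases trich s sb hs hsb0 with h | ⟨h1, h2⟩ | ⟨h1, h2⟩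
    · exact h
    · exfalso
      obtain ⟨w, k, hk, hpw, hPwM, hqw, hpqw⟩ := getV s hs hls
      have hpos := signBB s sb hs hls hsb0 hsbX
      have hmis := swap_mis w k sb hpqw (by rw [hk]; exact hpos)
      rw [hk, hqw] at hmis
      exact killV hM (abs_pos.mpr hpw) hPwM (abs_pos.mpr hs) (abs_pos.mpr (hY s hs))
        h1 h2 hmis
    · exfalso
      obtain ⟨w, k, hk, hpw, hPwM, hqw, hpqw⟩ := getV sb hsb0 hsbX
      have hpos := signBB sb s hsb0 hsbX hs hls
      have hmis := swap_mis w k s hpqw (by rw [hk]; exact hpos)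
      rw [hk, hqw] at hmis
      exact killV hM (abs_pos.mpr hpw) hPwM hXB0 hYB0 h1 h2 hmis
  -- exact product values
  have signTT : ∀ j, x j ≠ 0 → |x j| = XT → x j * y j = x jh * y jh := by
    intro j hj hjX
    apply eq_of_abs_eq_of_mul_pos
    · rw [abs_mul, abs_mul, hjX, topY j hj hjX, hXT, hYT]
    · have h1 := signTN j sb hj hjX hsb0 hsbX
      have h2 := signTN jh sb hjh hXT.symm hsb0 hsbX
      exact same_sign_trans h1 h2
  have signBBval : ∀ s, x s ≠ 0 → |x s| < XT → x s * y s = x sb * y sb := by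
    intro s hs hls
    apply eq_of_abs_eq_of_mul_pos
    · obtain ⟨e1, e2⟩ := valEq s hs hls
      rw [abs_mul, abs_mul, e1, e2]
    · exact signBB s sb hs hls hsb0 hsbX
  have classify : ∀ j, x j ≠ 0 →
      (|x j| = XT ∧ |y j| = YT ∧ x j * y j = x jh * y jh) ∨
      (|x j| = |x sb| ∧ |y j| = |y sb| ∧ x j * y j = x sb * y sb) := by
    intro j hj
    by_cases hc : |x j| = XT
    · exact Or.inl ⟨hc, topY j hj hc, signTT j hj hc⟩
    · have h := nontop j hj hc
      exact Or.inr ⟨(valEq j hj h.1).1, (valEq j hj h.1).2, signBBval j hj h.1⟩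
  -- tuple values as functions of the top-slot count
  have hXBne : |x sb| ≠ XT := ne_of_lt hsbX
  have tupVal : ∀ (i : Fin d → Fin n), P x i ≠ 0 →
      |P x i| = XT ^ ((Finset.univ.filter (fun k => |x (i k)| = XT)).card)
        * |x sb| ^ (d - (Finset.univ.filter (fun k => |x (i k)| = XT)).card) ∧
      |P y i| = YT ^ ((Finset.univ.filter (fun k => |x (i k)| = XT)).card)
        * |y sb| ^ (d - (Finset.univ.filter (fun k => |x (i k)| = XT)).card) ∧
      P x i * P y i = (x jh * y jh) ^ ((Finset.univ.filter (fun k => |x (i k)| = XT)).card)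
        * (x sb * y sb) ^ (d - (Finset.univ.filter (fun k => |x (i k)| = XT)).card) := by
    intro i hp
    refine ⟨?_, ?_, ?_⟩
    · rw [abs_P]
      exact prod_two_val (fun j => |x j|) i (fun k => |x (i k)| = XT) XT (|x sb|)
        (fun k hk => hk)
        (fun k hk => by
          rcases classify (i k) (slotS i hp k) with ⟨h1, _, _⟩ | ⟨h1, _, _⟩
          · exact absurd h1 hk
          · exact h1)
    · rw [abs_P]
      exact prod_two_val (fun j => |y j|) i (fun k => |x (i k)| = XT) YT (|y sb|)
        (fun k hk => by
          rcases classify (i k) (slotS i hp k) with ⟨_, h2, _⟩ | ⟨h1, _, _⟩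
          · exact h2
          · exact absurd (h1.symm.trans hk) hXBne)
        (fun k hk => by
          rcases classify (i k) (slotS i hp k) with ⟨h1, _, _⟩ | ⟨_, h2, _⟩
          · exact absurd h1 hk
          · exact h2)
    · rw [prod_mul_split]
      exact prod_two_val (fun j => x j * y j) i (fun k => |x (i k)| = XT)
        (x jh * y jh) (x sb * y sb)
        (fun k hk => by
          rcases classify (i k) (slotS i hp k) with ⟨_, _, h3⟩ | ⟨h1, _, _⟩
          · exact h3
          · exact absurd (h1.symm.trans hk) hXBne)
        (fun k hk => by
          rcases classify (i k) (slotS i hp k) with ⟨h1, _, _⟩ | ⟨_, _, h3⟩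
          · exact absurd h1 hk
          · exact h3)
  -- the N-blocker and villain-blocker of sb
  obtain ⟨u, ku, hku, hpu, hqu, _⟩ := getN sb hsb0
  obtain ⟨w, kw, hkw, hpw, hPwM, hqw, hpqw⟩ := getV sb hsb0 hsbX
  have hcu := tupVal u hpu
  have htw := tupVal w hpw
  set cu := (Finset.univ.filter (fun k => |x (u k)| = XT)).card with hcudef
  set tw := (Finset.univ.filter (fun k => |x (w k)| = XT)).card with htwdef
  have hculd : cu < d := by
    have hmem : ku ∉ (Finset.univ.filter (fun k => |x (u k)| = XT)) := by
      simp only [Finset.mem_filter, Finset.mem_univ, true_and]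
      rw [hku]; exact hXBne
    have hss : (Finset.univ.filter (fun k => |x (u k)| = XT)) ⊂ Finset.univ :=
      (Finset.ssubset_iff_of_subset (Finset.filter_subset _ _)).mpr
        ⟨ku, Finset.mem_univ ku, hmem⟩
    have := Finset.card_lt_card hss
    simpa using this
  have htwld : tw < d := by
    have hmem : kw ∉ (Finset.univ.filter (fun k => |x (w k)| = XT)) := by
      simp only [Finset.mem_filter, Finset.mem_univ, true_and]
      rw [hkw]; exact hXBne
    have hss : (Finset.univ.filter (fun k => |x (w k)| = XT)) ⊂ Finset.univ :=
      (Finset.ssubset_iff_of_subset (Finset.filter_subset _ _)).mpr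
        ⟨kw, Finset.mem_univ kw, hmem⟩
    have := Finset.card_lt_card hss
    simpa using this
  have E1 : YT ^ cu * |y sb| ^ (d - cu) = XT ^ cu * |x sb| ^ (d - cu) + M := by
    rw [← hcu.1, ← hcu.2.1]; exact hqu
  have E2 : YT ^ tw * |y sb| ^ (d - tw) = M - XT ^ tw * |x sb| ^ (d - tw) := by
    rw [← htw.1, ← htw.2.1]; exact hqw
  have Amono : ∀ j j' : ℕ, j ≤ j' → j' ≤ d →
      YT^j * |y sb|^(d-j) ≤ YT^j' * |y sb|^(d-j') := by
    intro j j' hjj hj'd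
    obtain ⟨e, rfl⟩ : ∃ e, j' = j + e := ⟨j' - j, by omega⟩
    have hde : d - j = (d - (j+e)) + e := by omega
    rw [hde, pow_add, pow_add]
    have hpe : |y sb|^e ≤ YT^e := pow_le_pow_left₀ (le_of_lt hYB0) (le_of_lt hsbY) e
    have h0 : (0:ℝ) ≤ YT^j * |y sb|^(d-(j+e)) := by positivity
    calc YT^j * (|y sb|^(d-(j+e)) * |y sb|^e) = (YT^j * |y sb|^(d-(j+e))) * |y sb|^e := by
          ring
      _ ≤ (YT^j * |y sb|^(d-(j+e))) * YT^e := mul_le_mul_of_nonneg_left hpe h0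
      _ = YT^j * YT^e * |y sb|^(d-(j+e)) := by ring
  have hBcu : 0 < XT ^ cu * |x sb| ^ (d - cu) := by positivity
  have hBtw : 0 < XT ^ tw * |x sb| ^ (d - tw) := by positivity
  have htwcu : tw < cu := by
    by_contra hge
    push_neg at hge
    have := Amono cu tw hge (le_of_lt htwld)
    linarith
  -- two below slots in the villain tuple
  have hfiltcard : (Finset.univ.filter (fun k => ¬ |x (w k)| = XT)).card = d - tw := by
    have h := Finset.card_filter_add_card_filter_not
      (s := (Finset.univ : Finset (Fin d))) (fun k => |x (w k)| = XT)
    simp only [Finset.card_univ, Fintype.card_fin] at h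
    omega
  have h2card : 1 < (Finset.univ.filter (fun k => ¬ |x (w k)| = XT)).card := by omega
  obtain ⟨k1, hk1m, k2, hk2m, hk12⟩ := Finset.one_lt_card.mp h2card
  have hk1b : ¬ |x (w k1)| = XT := (Finset.mem_filter.mp hk1m).2
  have hk2b : ¬ |x (w k2)| = XT := (Finset.mem_filter.mp hk2m).2
  have hw1x : x (w k1) ≠ 0 := slotS w hpw k1
  have hw2x : x (w k2) ≠ 0 := slotS w hpw k2
  obtain ⟨hv1x, hv1y, hv1s⟩ : |x (w k1)| = |x sb| ∧ |y (w k1)| = |y sb| ∧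
      x (w k1) * y (w k1) = x sb * y sb := by
    rcases classify (w k1) hw1x with ⟨h1, _, _⟩ | h
    · exact absurd h1 hk1b
    · exact h
  obtain ⟨hv2x, hv2y, hv2s⟩ : |x (w k2)| = |x sb| ∧ |y (w k2)| = |y sb| ∧
      x (w k2) * y (w k2) = x sb * y sb := by
    rcases classify (w k2) hw2x with ⟨h1, _, _⟩ | h
    · exact absurd h1 hk2b
    · exact h
  set w1 := Function.update w k1 jh with hw1def
  set w2 := Function.update w1 k2 jh with hw2def
  have hw1k2 : w1 k2 = w k2 := Function.update_of_ne hk12.symm _ _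
  have idX1 : P x w1 * x (w k1) = P x w * x jh := prod_update x w k1 jh
  have idY1 : P y w1 * y (w k1) = P y w * y jh := prod_update y w k1 jh
  have idX2 : P x w2 * x (w k2) = P x w1 * x jh := by
    have := prod_update x w1 k2 jh
    rwa [hw1k2] at this
  have idY2 : P y w2 * y (w k2) = P y w1 * y jh := by
    have := prod_update y w1 k2 jh
    rwa [hw1k2] at this
  -- absolute values
  have aX1 : |P x w1| * |x sb| = |P x w| * XT := by
    rw [← hv1x, ← abs_mul, idX1, abs_mul]
  have aY1 : |P y w1| * |y sb| = |P y w| * YT := by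
    rw [← hv1y, ← abs_mul, idY1, abs_mul]
  have aX2 : |P x w2| * |x sb| = |P x w1| * XT := by
    rw [← hv2x, ← abs_mul, idX2, abs_mul]
  have aY2 : |P y w2| * |y sb| = |P y w1| * YT := by
    rw [← hv2y, ← abs_mul, idY2, abs_mul]
  have aX : |P x w2| * (|x sb| * |x sb|) = |P x w| * (XT * XT) := by
    calc |P x w2| * (|x sb| * |x sb|) = (|P x w2| * |x sb|) * |x sb| := by ring
      _ = (|P x w1| * XT) * |x sb| := by rw [aX2]
      _ = (|P x w1| * |x sb|) * XT := by ring
      _ = (|P x w| * XT) * XT := by rw [aX1]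
      _ = |P x w| * (XT * XT) := by ring
  have aY : |P y w2| * (|y sb| * |y sb|) = |P y w| * (YT * YT) := by
    calc |P y w2| * (|y sb| * |y sb|) = (|P y w2| * |y sb|) * |y sb| := by ring
      _ = (|P y w1| * YT) * |y sb| := by rw [aY2]
      _ = (|P y w1| * |y sb|) * YT := by ring
      _ = (|P y w| * YT) * YT := by rw [aY1]
      _ = |P y w| * (YT * YT) := by ring
  -- signs
  have s1 : (P x w1 * P y w1) * (x sb * y sb) = (P x w * P y w) * (x jh * y jh) := by
    rw [← hv1s]
    linear_combination (P y w1 * y (w k1)) * idX1 + (P x w * x jh) * idY1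
  have s2 : (P x w2 * P y w2) * (x sb * y sb) = (P x w1 * P y w1) * (x jh * y jh) := by
    rw [← hv2s]
    linear_combination (P y w2 * y (w k2)) * idX2 + (P x w1 * x jh) * idY2
  have sAll : (P x w2 * P y w2) * ((x sb * y sb) * (x sb * y sb))
      = (P x w * P y w) * ((x jh * y jh) * (x jh * y jh)) := by
    calc (P x w2 * P y w2) * ((x sb * y sb) * (x sb * y sb))
        = ((P x w2 * P y w2) * (x sb * y sb)) * (x sb * y sb) := by ring
      _ = ((P x w1 * P y w1) * (x jh * y jh)) * (x sb * y sb) := by rw [s2]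
      _ = ((P x w1 * P y w1) * (x sb * y sb)) * (x jh * y jh) := by ring
      _ = ((P x w * P y w) * (x jh * y jh)) * (x jh * y jh) := by rw [s1]
      _ = (P x w * P y w) * ((x jh * y jh) * (x jh * y jh)) := by ring
  have hTBne : x sb * y sb ≠ 0 := mul_ne_zero hsb0 (hY sb hsb0)
  have hTTne : x jh * y jh ≠ 0 := mul_ne_zero hjh (hY jh hjh)
  have hTB2 : 0 < (x sb * y sb) * (x sb * y sb) := mul_self_pos.mpr hTBne
  have hTT2 : 0 < (x jh * y jh) * (x jh * y jh) := mul_self_pos.mpr hTTne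
  have hsgn2 : P x w2 * P y w2 < 0 := by
    have hrhs : (P x w * P y w) * ((x jh * y jh) * (x jh * y jh)) < 0 :=
      mul_neg_of_neg_of_pos hpqw hTT2
    rw [← sAll] at hrhs
    rcases mul_neg_iff.mp hrhs with ⟨h1, h2⟩ | ⟨h1, h2⟩
    · linarith
    · exact h1
  have habs2 : |P x w2 - P y w2| = |P x w2| + |P y w2| := abs_split_neg hsgn2
  have hcon2 := hcon w2
  rw [habs2] at hcon2
  -- strict growth of both absolute values
  have hXB2 : 0 < |x sb| * |x sb| := mul_pos hXB0 hXB0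
  have hYB2 : 0 < |y sb| * |y sb| := mul_pos hYB0 hYB0
  have hXlt2 : |x sb| * |x sb| < XT * XT :=
    mul_lt_mul'' hsbX hsbX (le_of_lt hXB0) (le_of_lt hXB0)
  have hYlt2 : |y sb| * |y sb| < YT * YT :=
    mul_lt_mul'' hsbY hsbY (le_of_lt hYB0) (le_of_lt hYB0)
  have hPw0 : 0 < |P x w| := abs_pos.mpr hpw
  have hQw0 : 0 < |P y w| := by rw [hqw]; linarith
  have hgrowX : |P x w| < |P x w2| := by
    have h1 : |P x w| * (|x sb| * |x sb|) < |P x w| * (XT * XT) :=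
      mul_lt_mul_of_pos_left hXlt2 hPw0
    rw [← aX] at h1
    exact lt_of_mul_lt_mul_right (by linarith) (le_of_lt hXB2)
  have hgrowY : |P y w| < |P y w2| := by
    have h1 : |P y w| * (|y sb| * |y sb|) < |P y w| * (YT * YT) :=
      mul_lt_mul_of_pos_left hYlt2 hQw0
    rw [← aY] at h1
    exact lt_of_mul_lt_mul_right (by linarith) (le_of_lt hYB2)
  linarith







end Stmt14Proof

open Stmt14Proof

set_option maxHeartbeats 1000000 in
/-- the function `f_∞(x) = max_{i₁,…,i_d} |x_{i₁}⋯x_{i_d} − y_{i₁}⋯y_{i_d}|`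
has no spurious strict local minima: every strict local minimum is a global minimum. -/
theorem stmt_14 {n d : ℕ} (hd : 1 ≤ d) (y x : EuclideanSpace ℝ (Fin n))
    (hx : ∃ ε > 0, ∀ z : EuclideanSpace ℝ (Fin n), z ≠ x → ‖x - z‖ ≤ ε →
      (⨆ i : Fin d → Fin n, |(∏ k : Fin d, x (i k)) - ∏ k : Fin d, y (i k)|) <
        ⨆ i : Fin d → Fin n, |(∏ k : Fin d, z (i k)) - ∏ k : Fin d, y (i k)|) :
    ∀ z : EuclideanSpace ℝ (Fin n),
      (⨆ i : Fin d → Fin n, |(∏ k : Fin d, x (i k)) - ∏ k : Fin d, y (i k)|) ≤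
        ⨆ i : Fin d → Fin n, |(∏ k : Fin d, z (i k)) - ∏ k : Fin d, y (i k)| := by
  classical
  intro z
  rcases Nat.eq_zero_or_pos n with hn | hn
  · subst hn
    haveI h0 : IsEmpty (Fin 0) := by infer_instance
    haveI : IsEmpty (Fin d → Fin 0) := ⟨fun f => h0.false (f ⟨0, hd⟩)⟩
    rw [Real.iSup_of_isEmpty, Real.iSup_of_isEmpty]
  haveI : Nonempty (Fin n) := ⟨⟨0, hn⟩⟩
  haveI hnet : Nonempty (Fin d → Fin n) := ⟨fun _ => ⟨0, hn⟩⟩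
  have hbdd : ∀ v : Fin n → ℝ, BddAbove (Set.range (fun i : Fin d → Fin n => |P v i - P y i|)) :=
    fun v => Set.Finite.bddAbove (Set.finite_range _)
  have hle : ∀ (v : Fin n → ℝ) (i : Fin d → Fin n),
      |P v i - P y i| ≤ ⨆ i' : Fin d → Fin n, |P v i' - P y i'| :=
    fun v i => le_ciSup (hbdd v) i
  have hge0 : ∀ v : Fin n → ℝ, (0:ℝ) ≤ ⨆ i' : Fin d → Fin n, |P v i' - P y i'| :=
    fun v => le_trans (abs_nonneg _) (hle v (Classical.arbitrary _))
  show (⨆ i : Fin d → Fin n, |P x i - P y i|) ≤ ⨆ i : Fin d → Fin n, |P z i - P y i|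
  have hsuff : (⨆ i : Fin d → Fin n, |P x i - P y i|) ≤ 0 →
      (⨆ i : Fin d → Fin n, |P x i - P y i|) ≤ ⨆ i : Fin d → Fin n, |P z i - P y i| :=
    fun h => le_trans h (hge0 z)
  apply hsuff
  by_contra hpos
  push_neg at hpos
  set M : ℝ := ⨆ i : Fin d → Fin n, |P x i - P y i| with hMdef
  obtain ⟨ε, hε, hstrict⟩ := hx
  have hstrict' : ∀ w : EuclideanSpace ℝ (Fin n), w ≠ x → ‖x - w‖ ≤ ε →
      M < ⨆ i : Fin d → Fin n, |P w i - P y i| := by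
    intro w hw hnw
    exact hstrict w hw hnw
  have hcon : ∀ i : Fin d → Fin n, |P x i - P y i| ≤ M := fun i => hle x i
  by_cases hx0 : ∀ j : Fin n, x j = 0
  · -- the point x is the origin
    have hPx0 : ∀ i : Fin d → Fin n, P x i = 0 := by
      intro i
      exact Finset.prod_eq_zero (Finset.mem_univ ⟨0, hd⟩) (hx0 _)
    have hex : ∃ i : Fin d → Fin n, 0 < |P x i - P y i| := by
      by_contra h
      push_neg at h
      have := ciSup_le (fun i => h i)
      rw [← hMdef] at this
      linarith
    obtain ⟨i₀, hi₀⟩ := hex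
    have hPy0 : P y i₀ ≠ 0 := by
      intro h0
      rw [hPx0 i₀, h0] at hi₀
      simp at hi₀
    have hyj : y (i₀ ⟨0, hd⟩) ≠ 0 := by
      intro h0
      exact hPy0 (Finset.prod_eq_zero (Finset.mem_univ ⟨0, hd⟩) h0)
    set c : ℝ := min (1/2 : ℝ) (ε / (‖y‖ + 1)) with hcdef
    have hy0 : (0:ℝ) ≤ ‖y‖ := norm_nonneg _
    have hc0 : 0 < c := lt_min (by norm_num) (by positivity)
    have hc1 : c ≤ 1 := le_trans (min_le_left _ _) (by norm_num)
    have hcd0 : 0 < c ^ d := pow_pos hc0 d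
    have hcd1 : c ^ d ≤ 1 := pow_le_one₀ (le_of_lt hc0) hc1
    set zc : EuclideanSpace ℝ (Fin n) := c • y with hzcdef
    have hzcj : ∀ j, zc j = c * y j := by
      intro j; rw [hzcdef]; rfl
    have hxv0 : x = 0 := by
      ext j; simpa using hx0 j
    have hzcx : zc ≠ x := by
      intro h
      have := congrArg (fun v => v (i₀ ⟨0, hd⟩)) h
      rw [hzcj] at this
      rw [hxv0] at this
      exact mul_ne_zero (ne_of_gt hc0) hyj (by simpa using this)
    have hnzc : ‖x - zc‖ ≤ ε := by
      rw [hxv0, zero_sub, norm_neg, hzcdef, norm_smul]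
      have h1 : ‖c‖ = c := by rw [Real.norm_eq_abs, abs_of_pos hc0]
      rw [h1]
      have h2 : c ≤ ε / (‖y‖ + 1) := min_le_right _ _
      calc c * ‖y‖ ≤ (ε / (‖y‖ + 1)) * ‖y‖ := by
            apply mul_le_mul_of_nonneg_right h2 hy0
        _ ≤ ε := by
            rw [div_mul_eq_mul_div, div_le_iff₀ (by linarith)]
            nlinarith
    have hbound : ∀ i : Fin d → Fin n, |P zc i - P y i| ≤ M := by
      intro i
      have hPzc : P zc i = c ^ d * P y i := by
        unfold P
        rw [Finset.prod_congr rfl (fun k _ => hzcj (i k)), Finset.prod_mul_distrib,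
          Finset.prod_const]
        simp
      rw [hPzc]
      have h1 : c ^ d * P y i - P y i = (c^d - 1) * P y i := by ring
      rw [h1, abs_mul]
      have h2 : |c^d - 1| ≤ 1 := by rw [abs_le]; constructor <;> linarith
      have h3 : |P y i| = |P x i - P y i| := by rw [hPx0 i, zero_sub, abs_neg]
      calc |c^d-1| * |P y i| ≤ 1 * |P y i| :=
            mul_le_mul_of_nonneg_right h2 (abs_nonneg _)
        _ = |P y i| := by ring
        _ = |P x i - P y i| := h3
        _ ≤ M := hcon i
    have h4 := hstrict' zc hzcx hnzc
    have h5 := ciSup_le hbound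
    linarith
  · push_neg at hx0
    obtain ⟨j1, hj1⟩ := hx0
    by_cases hDB : ∀ j : Fin n, x j ≠ 0 →
      (∃ u : Fin d → Fin n, (∃ k, u k = j) ∧ |P x u - P y u| = M ∧ P x u ≠ 0 ∧
          (P x u - P y u) * P x u < 0) ∧
      (∃ w : Fin d → Fin n, (∃ k, w k = j) ∧ |P x w - P y w| = M ∧ P x w ≠ 0 ∧
          0 < (P x w - P y w) * P x w)
    · exact (core hd x y M hpos hcon hDB ⟨j1, hj1⟩).elim
    · obtain ⟨j₀, hj₀n⟩ := not_forall.mp hDB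
      obtain ⟨hj₀, hnot⟩ := _root_.not_imp.mp hj₀n
      have hεne : ∀ i : Fin d → Fin n, |P x i - P y i| = M → P x i ≠ 0 →
          (P x i - P y i) * P x i ≠ 0 := by
        intro i hact hp
        apply mul_ne_zero _ hp
        intro h0
        rw [h0] at hact
        simp at hact
        linarith
      have key : ∃ σ : ℝ, (σ = 1 ∨ σ = -1) ∧
          ∀ i : Fin d → Fin n, |P x i - P y i| = M → P x i ≠ 0 → (∃ k, i k = j₀) →
            σ * ((P x i - P y i) * P x i) < 0 := by
        by_cases hNb : ∃ u : Fin d → Fin n, (∃ k, u k = j₀) ∧ |P x u - P y u| = M ∧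
            P x u ≠ 0 ∧ (P x u - P y u) * P x u < 0
        · -- no +blocker: all active tuples through j₀ are N-type
          have hPb : ¬ ∃ w : Fin d → Fin n, (∃ k, w k = j₀) ∧ |P x w - P y w| = M ∧
              P x w ≠ 0 ∧ 0 < (P x w - P y w) * P x w := fun h => hnot ⟨hNb, h⟩
          push_neg at hPb
          refine ⟨1, Or.inl rfl, ?_⟩
          intro i hact hp hk
          have h1 := hPb i hk hact hp
          have h2 := hεne i hact hp
          have h3 : (P x i - P y i) * P x i < 0 := lt_of_le_of_ne h1 h2
          linarith
        · push_neg at hNb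
          refine ⟨-1, Or.inr rfl, ?_⟩
          intro i hact hp hk
          have h1 := hNb i hk hact hp
          have h2 := hεne i hact hp
          have h3 : 0 < (P x i - P y i) * P x i := by
            rcases lt_trichotomy ((P x i - P y i) * P x i) 0 with h | h | h
            · exact absurd h (not_lt.mpr h1)
            · exact absurd h h2
            · exact h
          linarith
      obtain ⟨σ, hσ, huni⟩ := key
      obtain ⟨zf, hzne, hsame, hclose, hbound⟩ :=
        descent hd x y M ε hpos hε hcon j₀ hj₀ σ hσ huni
      set zE : EuclideanSpace ℝ (Fin n) := WithLp.toLp 2 zf with hzEdef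
      have hdiff : x - zE = EuclideanSpace.single j₀ (x j₀ - zf j₀) := by
        ext j
        by_cases hj : j = j₀
        · subst hj
          simp [EuclideanSpace.single_apply, hzEdef]
        · simp [EuclideanSpace.single_apply, hj, hsame j hj, hzEdef]
      have hnorm : ‖x - zE‖ ≤ ε := by
        rw [hdiff, EuclideanSpace.norm_single, Real.norm_eq_abs, abs_sub_comm]
        exact hclose
      have hzx : zE ≠ x := by
        intro h
        exact hzne (congrArg (fun v => v j₀) h)
      have h4 := hstrict' zE hzx hnorm
      have h5 : (⨆ i : Fin d → Fin n, |P zE i - P y i|) ≤ M := ciSup_le hbound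
      linarith
end

section
/- Fix y ∈ ℝⁿ with y₁⋯y_n ≠ 0 and an integer d ≥ 1. On the set S = { x ∈ ℝⁿ : (x_{i₁}⋯x_{i_d})/(y_{i₁}⋯y_{i_d}) ≤ 1 for all i₁,…,i_d ∈ {1,…,n} }, the function f₁(x) = Σ_{i₁,…,i_d} |x_{i₁}⋯x_{i_d} − y_{i₁}⋯y_{i_d}| equals (Σᵢ |yᵢ|)^d − (Σᵢ |yᵢ| · xᵢ/yᵢ)^d, and f₁ is a global function on S: every local minimum of f₁ restricted to S is a global minimum over S. -/
open Finset

lemma hsum_pow {n d : ℕ} (g : Fin n → ℝ) :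
    ∑ i : Fin d → Fin n, ∏ k : Fin d, g (i k) = (∑ j : Fin n, g j) ^ d := by
  rw [← Fin.prod_const d (∑ j : Fin n, g j), Finset.prod_univ_sum]
  simp

lemma formula_aux {n d : ℕ} (y x : Fin n → ℝ) (hy : ∀ i, y i ≠ 0)
    (hx : ∀ i : Fin d → Fin n, (∏ k : Fin d, x (i k)) / (∏ k : Fin d, y (i k)) ≤ 1) :
    ∑ i : Fin d → Fin n, |(∏ k : Fin d, x (i k)) - ∏ k : Fin d, y (i k)| =
      (∑ i : Fin n, |y i|) ^ d - (∑ i : Fin n, |y i| * (x i / y i)) ^ d := by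
  have key : ∀ i : Fin d → Fin n,
      |(∏ k : Fin d, x (i k)) - ∏ k : Fin d, y (i k)| =
        (∏ k : Fin d, |y (i k)|) - ∏ k : Fin d, (|y (i k)| * (x (i k) / y (i k))) := by
    intro i
    have hq : (∏ k : Fin d, y (i k)) ≠ 0 := Finset.prod_ne_zero_iff.2 fun k _ => hy (i k)
    have hr := hx i
    set p := ∏ k : Fin d, x (i k)
    set q := ∏ k : Fin d, y (i k)
    have h1 : p - q = q * (p / q - 1) := by field_simp
    have h2 : |p - q| = |q| * (1 - p / q) := by
      rw [h1, abs_mul, abs_of_nonpos (by linarith : p / q - 1 ≤ 0)]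
      ring
    rw [h2]
    have h3 : |q| = ∏ k : Fin d, |y (i k)| := by rw [Finset.abs_prod]
    have h4 : ∏ k : Fin d, (|y (i k)| * (x (i k) / y (i k)))
        = (∏ k : Fin d, |y (i k)|) * (p / q) := by
      rw [Finset.prod_mul_distrib, Finset.prod_div_distrib]
    rw [h4, ← h3]
    ring
  rw [Finset.sum_congr rfl fun i _ => key i, Finset.sum_sub_distrib, hsum_pow (fun j => |y j|), hsum_pow (fun j => |y j| * (x j / y j))]

lemma neg_pow_le {a b Q : ℝ} {m : ℕ} (hab : a ≤ b) (hb : b ≤ -1)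
    (h : a ^ m * Q ≤ 1) : b ^ m * Q ≤ 1 := by
  rcases Nat.even_or_odd m with he | ho
  · have h1 : (0:ℝ) ≤ b ^ m := he.pow_nonneg b
    have h2 : b ^ m ≤ a ^ m := by
      rw [← he.pow_abs b, ← he.pow_abs a]
      exact pow_le_pow_left₀ (abs_nonneg b) (by rw [abs_of_nonpos (by linarith), abs_of_nonpos (by linarith)]; linarith) m
    rcases le_or_gt 0 Q with hQ | hQ
    · nlinarith
    · nlinarith
  · have h1 : a ^ m ≤ b ^ m := (ho.strictMono_pow (R := ℝ)).le_iff_le.2 hab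
    have h2 : b ^ m < 0 := ho.pow_neg (by linarith)
    rcases le_or_gt 0 Q with hQ | hQ
    · nlinarith
    · nlinarith

lemma feas_box {n d : ℕ} (v : Fin n → ℝ) (hv : ∀ i0, |v i0| ≤ 1)
    (i : Fin d → Fin n) : ∏ k : Fin d, v (i k) ≤ 1 :=
  (le_abs_self _).trans (by
    rw [Finset.abs_prod]
    exact Finset.prod_le_one (fun _ _ => abs_nonneg _) (fun k _ => hv (i k)))

lemma feas_perturb {n d : ℕ} (u : Fin n → ℝ) (j : Fin n) (b : ℝ)
    (hb : u j ≤ b) (hb1 : b ≤ -1)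
    (hu : ∀ i : Fin d → Fin n, ∏ k : Fin d, u (i k) ≤ 1)
    (i : Fin d → Fin n) : ∏ k : Fin d, Function.update u j b (i k) ≤ 1 := by
  classical
  have split : ∀ g : Fin n → ℝ, (∏ k : Fin d, g (i k)) =
      g j ^ (Finset.univ.filter (fun k => i k = j)).card *
        ∏ k ∈ Finset.univ.filter (fun k => ¬ i k = j), g (i k) := by
    intro g
    rw [← Finset.prod_filter_mul_prod_filter_not Finset.univ (fun k => i k = j)]
    congr 1
    rw [Finset.prod_congr rfl (fun k hk => by rw [(Finset.mem_filter.1 hk).2]),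
      Finset.prod_const]
  have hQ : (∏ k ∈ Finset.univ.filter (fun k => ¬ i k = j),
      Function.update u j b (i k))
      = ∏ k ∈ Finset.univ.filter (fun k => ¬ i k = j), u (i k) :=
    Finset.prod_congr rfl fun k hk => by
      rw [Function.update_of_ne (Finset.mem_filter.1 hk).2]
  rw [split, hQ, Function.update_self]
  have h0 := hu i
  rw [split u] at h0
  exact neg_pow_le hb hb1 h0

/-- if `y₁⋯y_n ≠ 0`, then on
`S = { x : (x_{i₁}⋯x_{i_d})/(y_{i₁}⋯y_{i_d}) ≤ 1 for all tuples }`, the function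
`f₁(x) = Σ |x_{i₁}⋯x_{i_d} − y_{i₁}⋯y_{i_d}|` equals
`(Σᵢ |yᵢ|)^d − (Σᵢ |yᵢ|·xᵢ/yᵢ)^d`, and `f₁` is a global function on `S`: every local
minimum of `f₁` on `S` is a global minimum over `S`. -/
theorem stmt_15 {n d : ℕ} (hd : 1 ≤ d) (y : EuclideanSpace ℝ (Fin n))
    (hy : (∏ i : Fin n, y i) ≠ 0)
    (f₁ : EuclideanSpace ℝ (Fin n) → ℝ)
    (hf₁ : ∀ x, f₁ x = ∑ i : Fin d → Fin n,
      |(∏ k : Fin d, x (i k)) - ∏ k : Fin d, y (i k)|)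
    (S : Set (EuclideanSpace ℝ (Fin n)))
    (hS : S = { x | ∀ i : Fin d → Fin n,
      (∏ k : Fin d, x (i k)) / (∏ k : Fin d, y (i k)) ≤ 1 }) :
    (∀ x ∈ S, f₁ x =
        (∑ i : Fin n, |y i|) ^ d - (∑ i : Fin n, |y i| * (x i / y i)) ^ d) ∧
      ∀ x ∈ S, (∃ ε > 0, ∀ z ∈ S, ‖x - z‖ ≤ ε → f₁ x ≤ f₁ z) →
        ∀ z ∈ S, f₁ x ≤ f₁ z := by
  have hyi : ∀ i, y i ≠ 0 := fun i =>
    Finset.prod_ne_zero_iff.1 hy i (Finset.mem_univ i)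
  have hd0 : d ≠ 0 := by omega
  -- membership in u-coordinates
  have hmemS : ∀ w : EuclideanSpace ℝ (Fin n), w ∈ S ↔
      (∀ i : Fin d → Fin n, ∏ k : Fin d, (w (i k) / y (i k)) ≤ 1) := by
    intro w
    rw [hS]
    constructor
    · intro h i; rw [Finset.prod_div_distrib]; exact h i
    · intro h i; rw [← Finset.prod_div_distrib]; exact h i
  have part1 : ∀ x ∈ S, f₁ x =
      (∑ i : Fin n, |y i|) ^ d - (∑ i : Fin n, |y i| * (x i / y i)) ^ d := by
    intro x hx
    rw [hS] at hx
    rw [hf₁]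
    exact formula_aux y x hyi hx
  refine ⟨part1, ?_⟩
  set A : ℝ := ∑ i : Fin n, |y i| with hAdef
  set Bf : EuclideanSpace ℝ (Fin n) → ℝ :=
    fun x => ∑ i : Fin n, |y i| * (x i / y i) with hBdef
  have hA0 : 0 ≤ A := Finset.sum_nonneg fun _ _ => abs_nonneg _
  intro x hxS hloc z hzS
  have hz0 : 0 ≤ f₁ z := by
    rw [hf₁]; exact Finset.sum_nonneg fun _ _ => abs_nonneg _
  suffices hfx : f₁ x ≤ 0 by linarith
  by_contra hpos
  push_neg at hpos
  obtain ⟨ε, hε, hmin⟩ := hloc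
  have hfx_eq : f₁ x = A ^ d - (Bf x) ^ d := part1 x hxS
  have hBA : (Bf x) ^ d < A ^ d := by
    simp only [hBdef, hAdef]; simp only [hBdef, hAdef] at hfx_eq; linarith
  -- key contradiction engine
  have key : ∀ w ∈ S, ‖x - w‖ ≤ ε → (Bf x) ^ d < (Bf w) ^ d → False := by
    intro w hwS hn hlt
    have h1 := hmin w hwS hn
    have h2 := part1 w hwS
    simp only [← hBdef, ← hAdef] at h2
    linarith
  -- u-constraints for x
  have hu : ∀ i : Fin d → Fin n, ∏ k : Fin d, (x (i k) / y (i k)) ≤ 1 :=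
    (hmemS x).1 hxS
  have hu1 : ∀ i0 : Fin n, x i0 / y i0 ≤ 1 := by
    intro i0
    have h := hu (fun _ => i0)
    rw [Finset.prod_const] at h
    simp only [Finset.card_univ, Fintype.card_fin] at h
    by_contra hgt
    push_neg at hgt
    have := one_lt_pow₀ hgt hd0
    linarith
  -- single-coordinate perturbation facts
  have coords : ∀ (j : Fin n) (δ : ℝ) (i0 : Fin n),
      (x + δ • EuclideanSpace.single j (y j)) i0 / y i0
        = Function.update (fun t => x t / y t) j (x j / y j + δ) i0 := by
    intro j δ i0
    have h1 : (x + δ • EuclideanSpace.single j (y j)) i0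
        = x i0 + δ * (if i0 = j then y j else 0) := by
      simp [EuclideanSpace.single_apply]
    rw [h1, Function.update_apply]
    by_cases h : i0 = j
    · subst h; simp only [if_pos rfl, ↓reduceIte]
      field_simp [hyi i0]
    · simp [h]
  have normfact : ∀ (j : Fin n) (δ : ℝ),
      ‖x - (x + δ • EuclideanSpace.single j (y j))‖ = |δ| * |y j| := by
    intro j δ
    have h1 : x - (x + δ • EuclideanSpace.single j (y j))
        = -(δ • EuclideanSpace.single j (y j)) := by abel
    rw [h1, norm_neg, norm_smul, Real.norm_eq_abs, EuclideanSpace.norm_single,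
      Real.norm_eq_abs]
  have Bfact : ∀ (j : Fin n) (δ : ℝ),
      Bf (x + δ • EuclideanSpace.single j (y j)) = Bf x + |y j| * δ := by
    intro j δ
    simp only [hBdef]
    have h1 : ∀ i0 : Fin n, |y i0| * ((x + δ • EuclideanSpace.single j (y j)) i0 / y i0)
        = |y i0| * (x i0 / y i0) + (if i0 = j then |y j| * δ else 0) := by
      intro i0
      rw [coords j δ i0, Function.update_apply]
      by_cases h : i0 = j
      · subst h; simp; ring
      · simp [h]
    rw [Finset.sum_congr rfl fun i0 _ => h1 i0, Finset.sum_add_distrib]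
    simp
  have memfact : ∀ (j : Fin n) (δ : ℝ),
      (∀ i : Fin d → Fin n, ∏ k : Fin d,
        Function.update (fun t => x t / y t) j (x j / y j + δ) (i k) ≤ 1) →
      (x + δ • EuclideanSpace.single j (y j)) ∈ S := by
    intro j δ h
    rw [hmemS]
    intro i
    calc ∏ k : Fin d, ((x + δ • EuclideanSpace.single j (y j)) (i k) / y (i k))
        = ∏ k : Fin d, Function.update (fun t => x t / y t) j (x j / y j + δ) (i k) :=
          Finset.prod_congr rfl fun k _ => coords j δ (i k)
      _ ≤ 1 := h i
  -- case split
  by_cases hneg : ∃ j, x j / y j < -1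
  · -- some coordinate below -1; d must be odd
    obtain ⟨j, hj⟩ := hneg
    have hyj : (0:ℝ) < |y j| := abs_pos.2 (hyi j)
    have hudj : (x j / y j) ^ d ≤ 1 := by
      have h := hu (fun _ => j)
      rwa [Finset.prod_const, Finset.card_univ, Fintype.card_fin] at h
    have hdodd : Odd d := by
      rcases Nat.even_or_odd d with he | ho
      · exfalso
        have habs : 1 < |x j / y j| := by
          rw [abs_of_nonpos (by linarith)]; linarith
        have : 1 < (x j / y j) ^ d := by
          rw [← he.pow_abs]; exact one_lt_pow₀ habs hd0
        linarith
      · exact ho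
    set δ : ℝ := min (ε / |y j|) (-1 - x j / y j) with hδdef
    have hδpos : 0 < δ := lt_min (div_pos hε hyj) (by linarith)
    set w := x + δ • EuclideanSpace.single j (y j) with hwdef
    have hwS : w ∈ S := by
      apply memfact
      apply feas_perturb (fun t => x t / y t) j (x j / y j + δ)
        (by linarith) (by have := min_le_right (ε / |y j|) (-1 - x j / y j); simp only [hδdef] at *; linarith) hu
    have hnorm : ‖x - w‖ ≤ ε := by
      rw [hwdef, normfact, abs_of_pos hδpos]
      have h1 : δ ≤ ε / |y j| := min_le_left _ _
      calc δ * |y j| ≤ (ε / |y j|) * |y j| := by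
            exact mul_le_mul_of_nonneg_right h1 (le_of_lt hyj)
        _ = ε := by field_simp
    have hBw : Bf x < Bf w := by
      rw [hwdef, Bfact]
      have := mul_pos hyj hδpos
      linarith
    exact key w hwS hnorm ((hdodd.strictMono_pow (R := ℝ)) hBw)
  · push_neg at hneg
    -- all coordinates in [-1, 1]
    have hbox : ∀ i0 : Fin n, |x i0 / y i0| ≤ 1 := fun i0 =>
      abs_le.2 ⟨hneg i0, hu1 i0⟩
    have hBltA : Bf x < A := by
      by_contra hge
      push_neg at hge
      exact absurd (pow_le_pow_left₀ hA0 hge d) (not_le.2 hBA)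
    by_cases hcase : 0 ≤ Bf x ∨ Odd d
    · -- segment toward y
      set t : ℝ := min 1 (ε / (‖x - y‖ + 1)) with htdef
      have hnx : (0:ℝ) < ‖x - y‖ + 1 := by positivity
      have ht0 : 0 < t := lt_min one_pos (div_pos hε hnx)
      have ht1 : t ≤ 1 := min_le_left _ _
      set w := x + t • (y - x) with hwdef
      have hwc : ∀ i0 : Fin n, w i0 / y i0 = (1 - t) * (x i0 / y i0) + t := by
        intro i0
        have h1 : w i0 = x i0 + t * (y i0 - x i0) := by simp [hwdef]
        rw [h1]
        field_simp [hyi i0]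
        ring
      have hwS : w ∈ S := by
        rw [hmemS]
        intro i
        calc ∏ k : Fin d, (w (i k) / y (i k))
            = ∏ k : Fin d, ((1 - t) * (x (i k) / y (i k)) + t) :=
              Finset.prod_congr rfl fun k _ => hwc (i k)
          _ ≤ 1 := feas_box (fun s => (1 - t) * (x s / y s) + t) (fun i0 => by
              have h := abs_le.1 (hbox i0)
              rw [abs_le]
              constructor <;> nlinarith [h.1, h.2]) i
      have hnorm : ‖x - w‖ ≤ ε := by
        have h1 : x - w = -(t • (y - x)) := by rw [hwdef]; abel
        rw [h1, norm_neg, norm_smul, Real.norm_eq_abs, abs_of_pos ht0,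
          norm_sub_rev]
        have h2 : t ≤ ε / (‖x - y‖ + 1) := min_le_right _ _
        have h3 : t * (‖x - y‖ + 1) ≤ ε := (le_div_iff₀ hnx).1 h2
        nlinarith [norm_nonneg (x - y), ht0]
      have hBw : Bf w = (1 - t) * Bf x + t * A := by
        simp only [hBdef, hAdef]
        rw [Finset.mul_sum, Finset.mul_sum, ← Finset.sum_add_distrib]
        refine Finset.sum_congr rfl fun i0 _ => ?_
        rw [hwc i0]
        ring
      have hBlt : Bf x < Bf w := by
        rw [hBw]
        have := mul_pos ht0 (sub_pos.2 hBltA)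
        nlinarith
      refine key w hwS hnorm ?_
      rcases hcase with hB0 | ho
      · exact pow_lt_pow_left₀ hBlt hB0 hd0
      · exact (ho.strictMono_pow (R := ℝ)) hBlt
    · -- Bf x < 0 and d even
      have hBx : Bf x < 0 := lt_of_not_ge fun h => hcase (Or.inl h)
      have hdeven : Even d := Nat.not_odd_iff_even.1 fun h => hcase (Or.inr h)
      -- there is j with -1 < u j
      have hexj : ∃ j : Fin n, -1 < x j / y j := by
        by_contra hall
        push_neg at hall
        have hall1 : ∀ i0 : Fin n, x i0 / y i0 = -1 := fun i0 =>
          le_antisymm (hall i0) (hneg i0)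
        have : Bf x = -A := by
          simp only [hBdef, hAdef]
          rw [← Finset.sum_neg_distrib]
          exact Finset.sum_congr rfl fun i0 _ => by rw [hall1 i0]; ring
        rw [this, hdeven.neg_pow] at hBA
        exact lt_irrefl _ hBA
      obtain ⟨j, hj⟩ := hexj
      have hyj : (0:ℝ) < |y j| := abs_pos.2 (hyi j)
      set δ : ℝ := min (ε / |y j|) (x j / y j + 1) with hδdef
      have hδpos : 0 < δ := lt_min (div_pos hε hyj) (by linarith)
      have hδle : δ ≤ x j / y j + 1 := min_le_right _ _
      set w := x + (-δ) • EuclideanSpace.single j (y j) with hwdef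
      have hv : ∀ i0, |Function.update (fun t => x t / y t) j (x j / y j + -δ) i0| ≤ 1 := by
        intro i0
        rw [Function.update_apply]
        by_cases h : i0 = j
        · rw [if_pos h, abs_le]
          constructor
          · linarith
          · linarith [hu1 j]
        · rw [if_neg h]; exact hbox i0
      have hwS : w ∈ S := by
        apply memfact
        intro i
        exact feas_box _ hv i
      have hnorm : ‖x - w‖ ≤ ε := by
        rw [hwdef, normfact, abs_neg, abs_of_pos hδpos]
        have h1 : δ ≤ ε / |y j| := min_le_left _ _
        calc δ * |y j| ≤ (ε / |y j|) * |y j| :=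
              mul_le_mul_of_nonneg_right h1 (le_of_lt hyj)
          _ = ε := by field_simp
      have hBw : Bf w = Bf x - |y j| * δ := by
        rw [hwdef, Bfact]; ring
      refine key w hwS hnorm ?_
      rw [← hdeven.pow_abs (Bf x), ← hdeven.pow_abs (Bf w)]
      refine pow_lt_pow_left₀ ?_ (abs_nonneg _) hd0
      have hyd := mul_pos hyj hδpos
      have hBw0 : Bf w < 0 := by rw [hBw]; linarith
      rw [abs_of_neg hBx, abs_of_neg hBw0, hBw]
      linarith
end
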